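/- arXiv:1905.02508 — 5 statements merged into one kernel-verified Lean document; each statement's English description precedes it below -/
import Mathlib

section
/- The following are equivalent: (i) Ȟ₀(t) = H₀(t) for all t ∈ 𝒥; (ii) for every Borel set A ⊆ 𝒥, μ̃₀(A) = ∫_A (1 − Σ_{j=1}^d ∫_{(0,s]} K(u−)^{-1} μ̃_j(du)) ν_C(ds). (Condition (ii) is the integrated form of the statement that P(T̃ = t, D̃ = 0 | C = t) + Σ_{j=1}^d ∫_{(0,t]} K(s−)^{-1} μ̃_j(ds) = 1 for ν_C-almost all t ∈ 𝒥.) -/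
open MeasureTheory Set ENNReal NNReal

namespace CensorAux

lemma four_cancel {u v x y : ℝ≥0∞} (hu : u ≠ ∞) (hv : v ≠ ∞) (hx : x ≠ ∞) (hy : y ≠ ∞)
    (h : x + u = y + v) : (u - v) + (v - u) ≤ (x - y) + (y - x) := by
  lift u to ℝ≥0 using hu; lift v to ℝ≥0 using hv; lift x to ℝ≥0 using hx; lift y to ℝ≥0 using hy
  rw [← ENNReal.coe_add, ← ENNReal.coe_add] at h
  rw [← ENNReal.coe_sub, ← ENNReal.coe_sub, ← ENNReal.coe_sub, ← ENNReal.coe_sub,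
    ← ENNReal.coe_add, ← ENNReal.coe_add, ENNReal.coe_le_coe]
  replace h : x + u = y + v := by exact_mod_cast h
  rcases le_total u v with huv | huv
  · have hyx : y ≤ x := by
      have : y + u ≤ x + u := by rw [h]; exact add_le_add_right huv y
      exact le_of_add_le_add_right this
    have hvu : v - u = x - y := by
      have h1 : (x - y) + u + y = y + v := by
        rw [add_right_comm, tsub_add_cancel_of_le hyx, h]
      have h2 : (x - y) + u = v := by
        have := h1; rw [add_comm ((x-y)+u) y] at this
        exact add_left_cancel this
      rw [← h2, add_comm, add_tsub_cancel_left]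
    rw [tsub_eq_zero_of_le huv, zero_add, hvu]
    exact le_add_right le_rfl
  · have hxy : x ≤ y := by
      have : x + v ≤ y + v := by rw [← h]; exact add_le_add_right huv x
      exact le_of_add_le_add_right this
    have huv' : u - v = y - x := by
      have h1 : (y - x) + v + x = x + u := by
        rw [add_right_comm, tsub_add_cancel_of_le hxy, ← h]
      have h2 : (y - x) + v = u := by
        have := h1; rw [add_comm ((y-x)+v) x] at this
        exact add_left_cancel this
      rw [← h2, add_comm, add_tsub_cancel_left]
    rw [tsub_eq_zero_of_le huv, add_zero, huv']
    exact le_add_left le_rfl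

lemma volterra_unique (ν : Measure ℝ) [IsFiniteMeasure ν] (k F G : ℝ → ℝ≥0∞)
    (hFm : Measurable F) (hGm : Measurable G)
    (t : ℝ) (ε c : ℝ≥0∞) (hε0 : 0 < ε) (hεtop : ε ≠ ∞) (hctop : c ≠ ∞)
    (hkε : ∀ s ∈ Ioc (0:ℝ) t, ε ≤ k s) (hktop : ∀ s ∈ Ioc (0:ℝ) t, k s ≠ ∞)
    (hFb : ∀ s ∈ Ioc (0:ℝ) t, F s ≤ c) (hGb : ∀ s ∈ Ioc (0:ℝ) t, G s ≤ c)
    (heq : ∀ s ∈ Ioc (0:ℝ) t,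
      ∫⁻ u in Ioo 0 s, F u ∂ν + k s * F s = ∫⁻ u in Ioo 0 s, G u ∂ν + k s * G s) :
    ∀ s ∈ Ioc (0:ℝ) t, F s = G s := by
  by_contra hcon
  push_neg at hcon
  obtain ⟨e₀, he₀I, he₀⟩ := hcon
  set E : Set ℝ := {s | s ∈ Ioc (0:ℝ) t ∧ F s ≠ G s} with hE
  have hEne : E.Nonempty := ⟨e₀, he₀I, he₀⟩
  have hEbdd : BddBelow E := ⟨0, fun x hx => le_of_lt hx.1.1⟩
  set s₀ := sInf E with hs₀def
  have hs₀0 : 0 ≤ s₀ := le_csInf hEne (fun x hx => le_of_lt hx.1.1)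
  have hs₀t : s₀ ≤ t := le_trans (csInf_le hEbdd ⟨he₀I, he₀⟩) he₀I.2
  -- finite integrals of F and G over subsets
  have hint : ∀ (H : ℝ → ℝ≥0∞), (∀ s ∈ Ioc (0:ℝ) t, H s ≤ c) → ∀ (A : Set ℝ),
      A ⊆ Ioc (0:ℝ) t → MeasurableSet A → ∫⁻ u in A, H u ∂ν ≠ ∞ := by
    intro H hHb A hA hAm
    have : ∫⁻ u in A, H u ∂ν ≤ c * ν A := by
      rw [← setLIntegral_const A c]
      refine setLIntegral_mono' hAm (fun u hu => hHb u (hA hu))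
    exact (this.trans_lt (ENNReal.mul_lt_top hctop.lt_top (measure_lt_top ν A))).ne
  -- below the infimum, F = G
  have hbelow : ∀ s ∈ Ioc (0:ℝ) t, s ≤ s₀ → F s = G s := by
    intro s hs hss₀
    rcases lt_or_eq_of_le hss₀ with hlt | heqs
    · by_contra hne
      exact absurd (csInf_le hEbdd ⟨hs, hne⟩) (not_le_of_gt hlt)
    · -- s = s₀ : use the equation, the integrals agree
      have hcongr : ∫⁻ u in Ioo (0:ℝ) s, F u ∂ν = ∫⁻ u in Ioo (0:ℝ) s, G u ∂ν := by
        refine setLIntegral_congr_fun_ae measurableSet_Ioo (ae_of_all _ (fun u hu => ?_))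
        by_contra hne
        have huE : u ∈ E := ⟨⟨hu.1, le_trans (le_of_lt hu.2) hs.2⟩, hne⟩
        exact absurd (csInf_le hEbdd huE) (not_le_of_gt (hu.2.trans_le (le_of_eq heqs)))
      have hfin : ∫⁻ u in Ioo (0:ℝ) s, F u ∂ν ≠ ∞ :=
        hint F hFb _ (fun u hu => ⟨hu.1, le_trans (le_of_lt hu.2) hs.2⟩) measurableSet_Ioo
      have h1 := heq s hs
      rw [hcongr] at h1
      have h2 : k s * F s = k s * G s := by
        exact (ENNReal.add_right_inj (hcongr ▸ hfin)).mp h1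
      exact (ENNReal.mul_right_inj (lt_of_lt_of_le hε0 (hkε s hs)).ne'
        (hktop s hs)).mp h2
  -- every element of E is > s₀ ... handle e ≤ s₀ directly
  have hEgt : ∀ e ∈ E, s₀ < e := by
    intro e he
    rcases lt_or_ge s₀ e with h | h
    · exact h
    · exact absurd (hbelow e he.1 h) he.2
  -- s₀ < t
  have hs₀lt : s₀ < t := by
    rcases lt_or_eq_of_le hs₀t with h | h
    · exact h
    · exfalso
      obtain ⟨e, heE⟩ := hEne
      have := hEgt e heE
      have : t < e := h ▸ this
      exact absurd heE.1.2 (not_le_of_gt this)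
  -- choose δ with ν (Ioo s₀ (s₀ + δ)) < ε
  obtain ⟨δ, hδ0, hδ⟩ : ∃ δ : ℝ, 0 < δ ∧ ν (Ioo s₀ (s₀ + δ)) < ε := by
    have htend : Filter.Tendsto (fun n : ℕ => ν (Ioo s₀ (s₀ + 1 / (n + 1)))) Filter.atTop
        (nhds (ν (⋂ n : ℕ, Ioo s₀ (s₀ + 1 / (n + 1))))) := by
      refine tendsto_measure_iInter_atTop (fun n => measurableSet_Ioo.nullMeasurableSet)
        (fun m n hmn => Ioo_subset_Ioo le_rfl (by
          have : (1:ℝ) / (n + 1) ≤ 1 / (m + 1) := by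
            apply one_div_le_one_div_of_le (by positivity) (by exact_mod_cast by omega)
          linarith)) ⟨0, measure_ne_top ν _⟩
    have hempty : (⋂ n : ℕ, Ioo s₀ (s₀ + 1 / ((n:ℝ) + 1))) = ∅ := by
      ext x
      simp only [mem_iInter, mem_Ioo, mem_empty_iff_false, iff_false, not_forall]
      by_cases hx : s₀ < x
      · obtain ⟨n, hn⟩ := exists_nat_one_div_lt (sub_pos.mpr hx)
        exact ⟨n, fun h => absurd h.2 (by linarith)⟩
      · exact ⟨0, fun h => absurd h.1 hx⟩
    rw [hempty, measure_empty] at htend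
    have := (htend.eventually_lt_const hε0).exists
    obtain ⟨n, hn⟩ := this
    exact ⟨1 / (n + 1), by positivity, hn⟩
  set s₁ := min (s₀ + δ) t with hs₁def
  have hs₀s₁ : s₀ < s₁ := lt_min (by linarith) hs₀lt
  have hs₁t : s₁ ≤ t := min_le_right _ _
  have hsub : Ioc s₀ s₁ ⊆ Ioc (0:ℝ) t :=
    fun u hu => ⟨lt_of_le_of_lt hs₀0 hu.1, le_trans hu.2 hs₁t⟩
  set dd : ℝ → ℝ≥0∞ := fun s => (F s - G s) + (G s - F s) with hdd
  set M := ⨆ s ∈ Ioc s₀ s₁, dd s with hM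
  have hMle : M ≤ c + c := by
    refine iSup₂_le (fun s hs => ?_)
    exact add_le_add (le_trans tsub_le_self (hFb s (hsub hs)))
      (le_trans tsub_le_self (hGb s (hsub hs)))
  have hMtop : M ≠ ∞ := (hMle.trans_lt (by
    exact ENNReal.add_lt_top.mpr ⟨hctop.lt_top, hctop.lt_top⟩)).ne
  set ν' := ν (Ioo s₀ (s₀ + δ)) with hν'
  -- key estimate
  have key : ∀ s ∈ Ioc s₀ s₁, dd s ≤ (ε⁻¹ * ν') * M := by
    intro s hs
    have hsI : s ∈ Ioc (0:ℝ) t := hsub hs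
    have hksne : k s ≠ 0 := (lt_of_lt_of_le hε0 (hkε s hsI)).ne'
    have hkstop : k s ≠ ∞ := hktop s hsI
    -- split the integrals
    have hsplit : ∀ H : ℝ → ℝ≥0∞,
        ∫⁻ u in Ioo (0:ℝ) s, H u ∂ν
          = ∫⁻ u in Ioc (0:ℝ) s₀, H u ∂ν + ∫⁻ u in Ioo s₀ s, H u ∂ν := by
      intro H
      rw [← lintegral_union measurableSet_Ioo (by rw [Set.disjoint_left]; rintro x hx hx2; exact absurd hx.2 (not_le_of_gt hx2.1) : Disjoint (Ioc (0:ℝ) s₀) (Ioo s₀ s)),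
        Ioc_union_Ioo_eq_Ioo hs₀0 hs.1]
    have hJ : ∫⁻ u in Ioc (0:ℝ) s₀, F u ∂ν = ∫⁻ u in Ioc (0:ℝ) s₀, G u ∂ν := by
      refine setLIntegral_congr_fun_ae measurableSet_Ioc (ae_of_all _ (fun u hu => ?_))
      exact hbelow u ⟨hu.1, le_trans hu.2 hs₀t⟩ hu.2
    have hJfin : ∫⁻ u in Ioc (0:ℝ) s₀, F u ∂ν ≠ ∞ :=
      hint F hFb _ (fun u hu => ⟨hu.1, le_trans hu.2 hs₀t⟩) measurableSet_Ioc
    have h1 := heq s hsI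
    rw [hsplit F, hsplit G, hJ] at h1
    rw [add_assoc, add_assoc] at h1
    have h2 : ∫⁻ u in Ioo s₀ s, F u ∂ν + k s * F s
        = ∫⁻ u in Ioo s₀ s, G u ∂ν + k s * G s :=
      (ENNReal.add_right_inj (hJ ▸ hJfin)).mp h1
    have hXfin : ∫⁻ u in Ioo s₀ s, F u ∂ν ≠ ∞ :=
      hint F hFb _ (fun u hu => hsub ⟨hu.1, le_trans (le_of_lt hu.2) hs.2⟩) measurableSet_Ioo
    have hYfin : ∫⁻ u in Ioo s₀ s, G u ∂ν ≠ ∞ :=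
      hint G hGb _ (fun u hu => hsub ⟨hu.1, le_trans (le_of_lt hu.2) hs.2⟩) measurableSet_Ioo
    have h3 : (k s * F s - k s * G s) + (k s * G s - k s * F s)
        ≤ (∫⁻ u in Ioo s₀ s, G u ∂ν - ∫⁻ u in Ioo s₀ s, F u ∂ν)
          + (∫⁻ u in Ioo s₀ s, F u ∂ν - ∫⁻ u in Ioo s₀ s, G u ∂ν) := by
      have := four_cancel (u := k s * F s) (v := k s * G s)
        (x := ∫⁻ u in Ioo s₀ s, F u ∂ν) (y := ∫⁻ u in Ioo s₀ s, G u ∂ν)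
        (ENNReal.mul_ne_top hkstop (ne_top_of_le_ne_top hctop (hFb s hsI)))
        (ENNReal.mul_ne_top hkstop (ne_top_of_le_ne_top hctop (hGb s hsI)))
        hXfin hYfin h2
      calc (k s * F s - k s * G s) + (k s * G s - k s * F s)
          ≤ (∫⁻ u in Ioo s₀ s, F u ∂ν - ∫⁻ u in Ioo s₀ s, G u ∂ν)
            + (∫⁻ u in Ioo s₀ s, G u ∂ν - ∫⁻ u in Ioo s₀ s, F u ∂ν) := this
        _ = _ := add_comm _ _
    have h4 : k s * dd s ≤ ∫⁻ u in Ioo s₀ s, dd u ∂ν := by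
      have hmulsub : k s * dd s = (k s * F s - k s * G s) + (k s * G s - k s * F s) := by
        rw [hdd]
        rw [mul_add, ENNReal.mul_sub (fun _ _ => hkstop), ENNReal.mul_sub (fun _ _ => hkstop)]
      rw [hmulsub]
      refine le_trans h3 ?_
      have hsub1 : ∫⁻ u in Ioo s₀ s, G u ∂ν - ∫⁻ u in Ioo s₀ s, F u ∂ν
          ≤ ∫⁻ u in Ioo s₀ s, (G u - F u) ∂ν := lintegral_sub_le _ _ hFm
      have hsub2 : ∫⁻ u in Ioo s₀ s, F u ∂ν - ∫⁻ u in Ioo s₀ s, G u ∂ν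
          ≤ ∫⁻ u in Ioo s₀ s, (F u - G u) ∂ν := lintegral_sub_le _ _ hGm
      calc _ ≤ ∫⁻ u in Ioo s₀ s, (G u - F u) ∂ν + ∫⁻ u in Ioo s₀ s, (F u - G u) ∂ν :=
            add_le_add hsub1 hsub2
        _ = ∫⁻ u in Ioo s₀ s, ((G u - F u) + (F u - G u)) ∂ν :=
            (lintegral_add_left (hGm.sub hFm) _).symm
        _ = ∫⁻ u in Ioo s₀ s, dd u ∂ν := lintegral_congr (fun u => add_comm _ _)
    have h5 : ∫⁻ u in Ioo s₀ s, dd u ∂ν ≤ M * ν' := by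
      calc ∫⁻ u in Ioo s₀ s, dd u ∂ν ≤ ∫⁻ _ in Ioo s₀ s, M ∂ν := by
            refine setLIntegral_mono' measurableSet_Ioo (fun u hu => ?_)
            refine le_iSup₂_of_le u ⟨hu.1, le_trans (le_of_lt hu.2) hs.2⟩ le_rfl
        _ = M * ν (Ioo s₀ s) := setLIntegral_const _ _
        _ ≤ M * ν' := by
            refine mul_le_mul_right (measure_mono (Ioo_subset_Ioo le_rfl ?_)) M
            exact le_trans hs.2 (min_le_left _ _)
    -- conclude
    have h6 : dd s = (k s)⁻¹ * (k s * dd s) := by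
      rw [← mul_assoc, ENNReal.inv_mul_cancel hksne hkstop, one_mul]
    rw [h6]
    calc (k s)⁻¹ * (k s * dd s) ≤ (k s)⁻¹ * (M * ν') :=
          mul_le_mul_right (le_trans h4 h5) _
      _ ≤ ε⁻¹ * (M * ν') := by
          exact mul_le_mul_left (ENNReal.inv_le_inv.mpr (hkε s hsI)) _
      _ = (ε⁻¹ * ν') * M := by ring
  -- M ≤ θ M with θ < 1 gives M = 0
  have hM0 : M = 0 := by
    by_contra hMne
    have hθ : ε⁻¹ * ν' < 1 := by
      calc ε⁻¹ * ν' < ε⁻¹ * ε := by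
            refine ENNReal.mul_lt_mul_right (ENNReal.inv_ne_zero.mpr hεtop)
              (ENNReal.inv_ne_top.mpr hε0.ne') hδ
          _ = 1 := ENNReal.inv_mul_cancel hε0.ne' hεtop
    have hMθ : M ≤ (ε⁻¹ * ν') * M := iSup₂_le key
    have : (ε⁻¹ * ν') * M < 1 * M := by
      exact ENNReal.mul_lt_mul_left hMne hMtop hθ
    rw [one_mul] at this
    exact absurd (lt_of_le_of_lt hMθ this) (lt_irrefl M)
  -- contradiction
  obtain ⟨e, heE, helt⟩ := exists_lt_of_csInf_lt hEne hs₀s₁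
  have he1 : e ∈ Ioc s₀ s₁ := ⟨hEgt e heE, le_of_lt helt⟩
  have : dd e = 0 := le_antisymm (by rw [← hM0]; exact le_iSup₂_of_le e he1 le_rfl) zero_le
  have hFGe : F e = G e := by
    rw [hdd] at this
    simp only [add_eq_zero, tsub_eq_zero_iff_le] at this
    exact le_antisymm this.1 this.2
  exact absurd hFGe heE.2

lemma fubini_step (ν η : Measure ℝ) [IsFiniteMeasure ν] [IsFiniteMeasure η]
    (k : ℝ → ℝ≥0∞) (hk : ∀ s, k s = ν (Ici s)) (s : ℝ) (hs : 0 < s) (hks : k s ≠ 0) :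
    ∫⁻ u in Ioo 0 s, (∫⁻ v in Ioc 0 u, (k v)⁻¹ ∂η) ∂ν
      + k s * ∫⁻ v in Ioc 0 s, (k v)⁻¹ ∂η = η (Ioc 0 s) := by
  have hka : Antitone k := fun x y hxy => by
    rw [hk, hk]; exact measure_mono (Ici_subset_Ici.mpr hxy)
  have hkm : Measurable k := hka.measurable
  have hktop : ∀ v, k v ≠ ∞ := fun v => by rw [hk]; exact measure_ne_top ν _
  have hkv0 : ∀ v ∈ Ioo (0:ℝ) s, k v ≠ 0 := fun v hv =>
    fun h0 => hks (le_antisymm (h0 ▸ hka (le_of_lt hv.2)) zero_le)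
  -- the two-variable kernel
  set g : ℝ → ℝ → ℝ≥0∞ := fun u v => (Ioc (0:ℝ) u).indicator (fun v => (k v)⁻¹) v with hg
  have hgm : Measurable (Function.uncurry g) := by
    have hrw : Function.uncurry g
        = {p : ℝ × ℝ | 0 < p.2 ∧ p.2 ≤ p.1}.indicator (fun p => (k p.2)⁻¹) := by
      ext ⟨u, v⟩
      by_cases hvu : v ∈ Ioc 0 u
      · rw [Function.uncurry, hg]
        simp only [indicator_of_mem hvu]
        rw [indicator_of_mem (by exact hvu : ((u,v):ℝ×ℝ) ∈ {p : ℝ × ℝ | 0 < p.2 ∧ p.2 ≤ p.1})]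
      · rw [Function.uncurry, hg]
        simp only [indicator_of_notMem hvu]
        rw [indicator_of_notMem (by exact hvu : ¬((u,v):ℝ×ℝ) ∈ {p : ℝ × ℝ | 0 < p.2 ∧ p.2 ≤ p.1})]
    rw [hrw]
    refine Measurable.indicator ((hkm.comp measurable_snd).inv) ?_
    exact MeasurableSet.inter
      (measurable_snd measurableSet_Ioi)
      (measurableSet_le measurable_snd measurable_fst)
  -- rewrite inner integral,  u ∈ Ioo 0 s
  have hinner : ∀ u ∈ Ioo (0:ℝ) s,
      ∫⁻ v in Ioc 0 u, (k v)⁻¹ ∂η = ∫⁻ v, g u v ∂(η.restrict (Ioo 0 s)) := by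
    intro u hu
    rw [hg]
    rw [lintegral_indicator measurableSet_Ioc, Measure.restrict_restrict measurableSet_Ioc]
    congr 1
    rw [inter_eq_left.mpr ?_]
    intro v hv
    exact ⟨hv.1, lt_of_le_of_lt hv.2 hu.2⟩
  have hswap :
      ∫⁻ u in Ioo 0 s, (∫⁻ v in Ioc 0 u, (k v)⁻¹ ∂η) ∂ν
        = ∫⁻ v in Ioo 0 s, (∫⁻ u, g u v ∂(ν.restrict (Ioo 0 s))) ∂η := by
    rw [setLIntegral_congr_fun_ae measurableSet_Ioo (ae_of_all _ hinner)]
    exact lintegral_lintegral_swap (hgm.aemeasurable)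
  -- inner integral in u
  have hinner2 : ∀ v ∈ Ioo (0:ℝ) s,
      ∫⁻ u, g u v ∂(ν.restrict (Ioo 0 s)) = (k v)⁻¹ * ν (Ico v s) := by
    intro v hv
    have : (fun u => g u v) = (Ici v).indicator (fun _ => (k v)⁻¹) := by
      ext u
      by_cases huv : v ≤ u
      · rw [hg]
        simp only [indicator_of_mem (mem_Ici.mpr huv),
          indicator_of_mem (mem_Ioc.mpr ⟨hv.1, huv⟩)]
      · rw [hg]
        simp only [indicator_of_notMem (fun h => huv (mem_Ici.mp h)),
          indicator_of_notMem (fun h => huv (mem_Ioc.mp h).2)]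
    rw [this, lintegral_indicator measurableSet_Ici, Measure.restrict_restrict measurableSet_Ici,
      setLIntegral_const]
    congr 2
    ext u
    simp only [mem_inter_iff, mem_Ici, mem_Ioo, mem_Ico]
    constructor
    · rintro ⟨h1, _, h3⟩; exact ⟨h1, h3⟩
    · rintro ⟨h1, h2⟩; exact ⟨h1, lt_of_lt_of_le hv.1 h1, h2⟩
  -- pointwise identity on Ioo 0 s
  have hpoint : ∀ v ∈ Ioo (0:ℝ) s,
      (k v)⁻¹ * ν (Ico v s) + k s * (k v)⁻¹ = 1 := by
    intro v hv
    have hdecomp : ν (Ico v s) + k s = k v := by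
      rw [hk s, hk v, ← measure_union ?_ measurableSet_Ici, Ico_union_Ici_eq_Ici (le_of_lt hv.2)]
      rw [Set.disjoint_left]
      rintro x hx hx2
      exact absurd (mem_Ici.mp hx2) (not_le_of_gt hx.2)
    rw [mul_comm (k s) _, ← mul_add, hdecomp, ENNReal.inv_mul_cancel (hkv0 v hv) (hktop v)]
  -- integrate the pointwise identity
  have hmain : ∫⁻ v in Ioo 0 s, ((k v)⁻¹ * ν (Ico v s)) ∂η
      + k s * ∫⁻ v in Ioo 0 s, (k v)⁻¹ ∂η = η (Ioo 0 s) := by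
    rw [← lintegral_const_mul _ (show Measurable fun v => (k v)⁻¹ from hkm.inv)]
    rw [← lintegral_add_right _ (show Measurable fun v => k s * (k v)⁻¹ from hkm.inv.const_mul (k s))]
    rw [setLIntegral_congr_fun_ae measurableSet_Ioo (ae_of_all _ hpoint)]
    rw [setLIntegral_const, one_mul]
  -- singleton part
  have hsingle : k s * ∫⁻ v in Ioc 0 s, (k v)⁻¹ ∂η
      = k s * ∫⁻ v in Ioo 0 s, (k v)⁻¹ ∂η + η {s} := by
    have hdecomp : (Ioc (0:ℝ) s) = Ioo 0 s ∪ {s} := (Ioo_union_right hs).symm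
    have hdisj : Disjoint (Ioo (0:ℝ) s) {s} := by
      rw [Set.disjoint_left]
      rintro x hx rfl
      exact absurd hx.2 (lt_irrefl _)
    rw [hdecomp, lintegral_union (measurableSet_singleton s) hdisj, mul_add,
      lintegral_singleton, ← mul_assoc, ENNReal.mul_inv_cancel hks (hktop s), one_mul]
  -- assemble
  rw [hswap, setLIntegral_congr_fun_ae measurableSet_Ioo (ae_of_all _ hinner2), hsingle,
    ← add_assoc, hmain]
  rw [← measure_union ?_ (measurableSet_singleton s)]
  · congr 1
    exact Ioo_union_right hs
  · rw [Set.disjoint_left]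
    rintro x hx rfl
    exact absurd hx.2 (lt_irrefl _)

end CensorAux
/-- Proposition 5 (parts (5.1) ⟺ (5.4)): `Ȟ₀ = H₀` on `𝒥` is equivalent to the integrated
form of the censoring constant-sum property. -/
theorem censoring_identity_iff_censoring_constant_sum
    {Ω : Type*} [m0 : MeasurableSpace Ω] (P : Measure Ω) [IsProbabilityMeasure P]
    (d : ℕ) (hd : 1 ≤ d)
    (T C : Ω → ℝ) (D : Ω → ℕ)
    (hT : Measurable T) (hC : Measurable C) (hD : Measurable D)
    (hTpos : ∀ᵐ ω ∂P, 0 < T ω) (hCpos : ∀ᵐ ω ∂P, 0 < C ω)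
    (hDrange : ∀ ω, 1 ≤ D ω ∧ D ω ≤ d)
    (Tt : Ω → ℝ) (hTtdef : ∀ ω, Tt ω = min (T ω) (C ω))
    (Dt : Ω → ℕ) (hDtdef : ∀ ω, Dt ω = if T ω ≤ C ω then D ω else 0)
    (μt : ℕ → Measure ℝ)
    (hμt : ∀ j, μt j = Measure.map Tt (P.restrict {ω | Dt ω = j}))
    (νC : Measure ℝ) (hνC : νC = Measure.map C P)
    (H0 : ℝ → ℝ≥0∞) (hH0 : ∀ t, H0 t = ∫⁻ s in Ioc 0 t, (P {ω | s ≤ C ω})⁻¹ ∂νC)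
    (Hc0 : ℝ → ℝ≥0∞)
    (hHc0 : ∀ t, Hc0 t = ∫⁻ s in Ioc 0 t, (P {ω | s < T ω ∧ s ≤ C ω})⁻¹ ∂(μt 0))
    (𝒥 : Set ℝ) (h𝒥 : 𝒥 = {t | 0 ≤ t ∧ 0 < P {ω | t < Tt ω}}) :
    -- (i)
    (∀ t ∈ 𝒥, Hc0 t = H0 t) ↔
    -- (ii) μ̃₀(A) = ∫_A (1 − Σ_{j=1}^d ∫_{(0,s]} K(u−)⁻¹ μ̃_j(du)) ν_C(ds) for Borel A ⊆ 𝒥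
    (∀ A : Set ℝ, MeasurableSet A → A ⊆ 𝒥 →
      μt 0 A = ∫⁻ s in A,
        (1 - ∑ j ∈ Finset.Icc 1 d, ∫⁻ u in Ioc 0 s, (P {ω | u ≤ C ω})⁻¹ ∂(μt j)) ∂νC) := by
  -- ### basic measurability and notation
  have hTt : Measurable Tt := by
    have h : Tt = fun ω => min (T ω) (C ω) := funext hTtdef
    rw [h]; exact hT.min hC
  have hDt : Measurable Dt := by
    have h : Dt = fun ω => if T ω ≤ C ω then D ω else 0 := funext hDtdef
    rw [h]; exact Measurable.ite (measurableSet_le hT hC) hD measurable_const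
  have hTC : MeasurableSet {ω | T ω ≤ C ω} := measurableSet_le hT hC
  set k : ℝ → ℝ≥0∞ := fun s => P {ω | s ≤ C ω} with hkdef
  set a : ℝ → ℝ≥0∞ := fun s => P {ω | s < T ω ∧ s ≤ C ω} with hadef
  set R : ℝ → ℝ≥0∞ := fun s => P {ω | T ω ≤ s ∧ s ≤ C ω} with hRdef
  haveI hνCfin : IsFiniteMeasure νC := by
    rw [hνC]
    haveI := Measure.isProbabilityMeasure_map hC.aemeasurable (μ := P)
    infer_instance
  set η : Measure ℝ := Measure.map Tt (P.restrict {ω | T ω ≤ C ω}) with hηdef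
  haveI hηfin : IsFiniteMeasure η := by rw [hηdef]; infer_instance
  haveI hμt0fin : IsFiniteMeasure (μt 0) := by rw [hμt 0]; infer_instance
  set β : Measure ℝ := Measure.map C (P.restrict {ω | T ω ≤ C ω}) with hβdef
  haveI hβfin : IsFiniteMeasure β := by rw [hβdef]; infer_instance
  set F : ℝ → ℝ≥0∞ := fun s => ∫⁻ v in Ioc 0 s, (k v)⁻¹ ∂η with hFdef
  have hkν : ∀ s, k s = νC (Ici s) := by
    intro s
    rw [hkdef, hνC, Measure.map_apply hC measurableSet_Ici]
    rfl
  have hka : Antitone k := fun x y hxy => by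
    rw [hkν, hkν]; exact measure_mono (Ici_subset_Ici.mpr hxy)
  have hkm : Measurable k := hka.measurable
  have hktop : ∀ s, k s ≠ ∞ := fun s => measure_ne_top P _
  have haa : Antitone a := fun x y hxy =>
    measure_mono (fun ω hω => ⟨lt_of_le_of_lt hxy hω.1, le_trans hxy hω.2⟩)
  have ham : Measurable a := haa.measurable
  have hatop : ∀ s, a s ≠ ∞ := fun s => measure_ne_top P _
  have hkaR : ∀ s, a s + R s = k s := by
    intro s
    show P {ω | s < T ω ∧ s ≤ C ω} + P {ω | T ω ≤ s ∧ s ≤ C ω} = P {ω | s ≤ C ω}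
    rw [← measure_union ?_ (show MeasurableSet {ω | T ω ≤ s ∧ s ≤ C ω} from
      (measurableSet_le hT measurable_const).inter (measurableSet_le measurable_const hC))]
    · congr 1
      ext ω
      simp only [mem_union, mem_setOf_eq]
      constructor
      · rintro (⟨_, h2⟩ | ⟨_, h2⟩) <;> exact h2
      · intro h
        rcases lt_or_ge s (T ω) with h1 | h1
        · exact Or.inl ⟨h1, h⟩
        · exact Or.inr ⟨h1, h⟩
    · rw [Set.disjoint_left]
      rintro ω ⟨h1, _⟩ ⟨h2, _⟩
      exact absurd h2 (not_le_of_gt h1)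
  have hRm : Measurable R := by
    have h : R = fun s => k s - a s := by
      funext s
      rw [eq_comm, ← hkaR s, add_comm]
      exact ENNReal.add_sub_cancel_right (hatop s)
    rw [h]; exact hkm.sub ham
  have hRk : ∀ s, R s ≤ k s := fun s => by
    rw [← hkaR s]; exact le_add_self
  -- ### 𝒥 facts
  have h𝒥nonneg : ∀ x ∈ 𝒥, (0:ℝ) ≤ x := fun x hx => by rw [h𝒥] at hx; exact hx.1
  have h𝒥pos : ∀ x ∈ 𝒥, 0 < P {ω | x < Tt ω} := fun x hx => by rw [h𝒥] at hx; exact hx.2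
  have h𝒥init : ∀ t ∈ 𝒥, ∀ s, 0 ≤ s → s ≤ t → s ∈ 𝒥 := by
    intro t ht s hs0 hst
    rw [h𝒥]
    exact ⟨hs0, lt_of_lt_of_le (h𝒥pos t ht)
      (measure_mono (fun ω hω => lt_of_le_of_lt hst hω))⟩
  have hk𝒥 : ∀ t ∈ 𝒥, 0 < k t := by
    intro t ht
    refine lt_of_lt_of_le (h𝒥pos t ht) (measure_mono (fun ω hω => ?_))
    simp only [mem_setOf_eq] at hω ⊢
    rw [hTtdef ω] at hω
    exact le_of_lt (lt_of_lt_of_le hω (min_le_right _ _))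
  have ha𝒥 : ∀ t ∈ 𝒥, 0 < a t := by
    intro t ht
    refine lt_of_lt_of_le (h𝒥pos t ht) (measure_mono (fun ω hω => ?_))
    simp only [mem_setOf_eq] at hω ⊢
    rw [hTtdef ω] at hω
    exact ⟨lt_of_lt_of_le hω (min_le_left _ _), le_of_lt (lt_of_lt_of_le hω (min_le_right _ _))⟩
  have hk1 : ∀ s, k s ≤ 1 := fun s => prob_le_one
  have hIoo𝒥 : ∀ s ∈ 𝒥, Ioo (0:ℝ) s ⊆ 𝒥 :=
    fun s hs x hx => h𝒥init s hs x (le_of_lt hx.1) (le_of_lt hx.2)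
  have hpt1 : ∀ t ∈ 𝒥, a t * (k t)⁻¹ + R t * (k t)⁻¹ = 1 := by
    intro t ht
    rw [← add_mul, hkaR t, ENNReal.mul_inv_cancel (hk𝒥 t ht).ne' (hktop t)]
  -- ### the measure-sum identity
  have hμsum : (∑ j ∈ Finset.Icc 1 d, μt j) = η := by
    have hresum : (∑ j ∈ Finset.Icc 1 d, P.restrict {ω | Dt ω = j})
        = P.restrict {ω | T ω ≤ C ω} := by
      ext B hB
      rw [Measure.finset_sum_apply, Measure.restrict_apply hB]
      have hterm : ∀ j ∈ Finset.Icc 1 d,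
          P.restrict {ω | Dt ω = j} B = P (B ∩ {ω | Dt ω = j}) := fun j _ =>
        Measure.restrict_apply hB
      have hdisj : (↑(Finset.Icc 1 d) : Set ℕ).PairwiseDisjoint
          (fun j => B ∩ {ω | Dt ω = j}) := by
        intro i _ j _ hij
        simp only [Function.onFun, Set.disjoint_left]
        rintro ω ⟨_, hωi⟩ ⟨_, hωj⟩
        simp only [mem_setOf_eq] at hωi hωj
        exact hij (hωi ▸ hωj ▸ rfl)
      calc ∑ j ∈ Finset.Icc 1 d, P.restrict {ω | Dt ω = j} B
          = ∑ j ∈ Finset.Icc 1 d, P (B ∩ {ω | Dt ω = j}) := Finset.sum_congr rfl hterm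
        _ = P (⋃ j ∈ Finset.Icc 1 d, (B ∩ {ω | Dt ω = j})) :=
            (measure_biUnion_finset hdisj
              (fun j _ => hB.inter (hDt (measurableSet_singleton j)))).symm
        _ = P (B ∩ {ω | T ω ≤ C ω}) := by
            congr 1
            ext ω
            simp only [mem_iUnion, mem_inter_iff, mem_setOf_eq, Finset.mem_Icc, exists_prop]
            constructor
            · rintro ⟨j, ⟨hj1, _⟩, hωB, hωj⟩
              refine ⟨hωB, ?_⟩
              by_contra hTCω
              rw [hDtdef ω, if_neg hTCω] at hωj
              omega
            · rintro ⟨hωB, hTCω⟩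
              refine ⟨D ω, ⟨(hDrange ω).1, (hDrange ω).2⟩, hωB, ?_⟩
              rw [hDtdef ω, if_pos hTCω]
    have hmapsum : ∀ s : Finset ℕ,
        (∑ j ∈ s, Measure.map Tt (P.restrict {ω | Dt ω = j}))
          = Measure.map Tt (∑ j ∈ s, P.restrict {ω | Dt ω = j}) := by
      intro s
      induction s using Finset.induction_on with
      | empty => simp
      | insert _ _ hnot ih =>
          rw [Finset.sum_insert hnot, Finset.sum_insert hnot, ih, Measure.map_add _ _ hTt]
    calc (∑ j ∈ Finset.Icc 1 d, μt j)
        = ∑ j ∈ Finset.Icc 1 d, Measure.map Tt (P.restrict {ω | Dt ω = j}) :=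
          Finset.sum_congr rfl (fun j _ => hμt j)
      _ = Measure.map Tt (∑ j ∈ Finset.Icc 1 d, P.restrict {ω | Dt ω = j}) := hmapsum _
      _ = η := by rw [hresum, hηdef]
  have hsumF : ∀ s : ℝ,
      (∑ j ∈ Finset.Icc 1 d, ∫⁻ u in Ioc 0 s, (k u)⁻¹ ∂(μt j)) = F s := by
    intro s
    have hrsum : (∑ j ∈ Finset.Icc 1 d, μt j).restrict (Ioc 0 s)
        = ∑ j ∈ Finset.Icc 1 d, (μt j).restrict (Ioc 0 s) := by
      ext B hB
      rw [Measure.restrict_apply hB, Measure.finset_sum_apply, Measure.finset_sum_apply]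
      exact Finset.sum_congr rfl (fun j _ => (Measure.restrict_apply hB).symm)
    rw [hFdef]
    dsimp only
    rw [← hμsum, hrsum, lintegral_finset_sum_measure]
  -- ### μt 0 and β
  have hμ0C : μt 0 = Measure.map C (P.restrict {ω | T ω ≤ C ω}ᶜ) := by
    have hset : {ω | Dt ω = 0} = {ω | T ω ≤ C ω}ᶜ := by
      ext ω
      simp only [mem_setOf_eq, mem_compl_iff]
      rw [hDtdef ω]
      rcases le_or_gt (T ω) (C ω) with h | h
      · have h1 := (hDrange ω).1
        simp only [if_pos h]
        constructor
        · intro h0; omega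
        · intro h0; exact absurd h h0
      · simp only [if_neg (not_le_of_gt h)]
        constructor
        · intro _; exact not_le_of_gt h
        · intro _; trivial
        
    rw [hμt 0, hset]
    refine Measure.map_congr ?_
    refine (ae_restrict_mem hTC.compl).mono (fun ω hω => ?_)
    rw [hTtdef ω]
    exact min_eq_right (le_of_lt (lt_of_not_ge hω))
  have hνsplit : ∀ B : Set ℝ, MeasurableSet B → μt 0 B + β B = νC B := by
    intro B hB
    rw [hμ0C, hβdef, hνC, Measure.map_apply hC hB, Measure.map_apply hC hB,
      Measure.map_apply hC hB, Measure.restrict_apply (hC hB), Measure.restrict_apply (hC hB)]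
    rw [← measure_union ?_ ((hC hB).inter hTC)]
    · congr 1
      ext ω
      simp only [mem_union, mem_inter_iff, mem_preimage, mem_compl_iff, mem_setOf_eq]
      tauto
    · rw [Set.disjoint_left]
      rintro ω ⟨_, h1⟩ ⟨_, h2⟩
      exact h1 h2
  -- ### exact identity E1
  have hηIoc : ∀ s : ℝ, η (Ioc 0 s) = P {ω | T ω ≤ s ∧ T ω ≤ C ω} := by
    intro s
    rw [hηdef, Measure.map_apply hTt measurableSet_Ioc,
      Measure.restrict_apply (hTt measurableSet_Ioc)]
    have hseteq : Tt ⁻¹' Ioc 0 s ∩ {ω | T ω ≤ C ω}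
        = {ω | 0 < T ω ∧ T ω ≤ s ∧ T ω ≤ C ω} := by
      ext ω
      simp only [mem_inter_iff, mem_preimage, mem_Ioc, mem_setOf_eq]
      rw [hTtdef ω]
      constructor
      · rintro ⟨⟨h0, hs⟩, hTCω⟩
        rw [min_eq_left hTCω] at h0 hs
        exact ⟨h0, hs, hTCω⟩
      · rintro ⟨h0, hs, hTCω⟩
        rw [min_eq_left hTCω]
        exact ⟨⟨h0, hs⟩, hTCω⟩
    rw [hseteq]
    refine measure_congr ?_
    rw [Filter.eventuallyEq_set]
    filter_upwards [hTpos] with ω h0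
    show (0 < T ω ∧ T ω ≤ s ∧ T ω ≤ C ω) ↔ (T ω ≤ s ∧ T ω ≤ C ω)
    exact and_iff_right h0
  have hβIoo : ∀ s : ℝ, β (Ioo 0 s) = P {ω | C ω < s ∧ T ω ≤ C ω} := by
    intro s
    rw [hβdef, Measure.map_apply hC measurableSet_Ioo,
      Measure.restrict_apply (hC measurableSet_Ioo)]
    refine measure_congr ?_
    rw [Filter.eventuallyEq_set]
    filter_upwards [hCpos] with ω h0
    simp only [mem_inter_iff, mem_preimage, mem_Ioo, mem_setOf_eq]
    constructor
    · rintro ⟨⟨_, h2⟩, h3⟩; exact ⟨h2, h3⟩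
    · rintro ⟨h2, h3⟩; exact ⟨⟨h0, h2⟩, h3⟩
  have hE1 : ∀ s : ℝ, R s + β (Ioo 0 s) = η (Ioc 0 s) := by
    intro s
    rw [hβIoo s, hηIoc s, hRdef]
    rw [← measure_union ?_ (show MeasurableSet {ω | C ω < s ∧ T ω ≤ C ω} from
      (measurableSet_lt hC measurable_const).inter hTC)]
    · congr 1
      ext ω
      simp only [mem_union, mem_setOf_eq]
      constructor
      · rintro (⟨h1, h2⟩ | ⟨h1, h2⟩)
        · exact ⟨h1, le_trans h1 h2⟩
        · exact ⟨le_of_lt (lt_of_le_of_lt h2 h1), h2⟩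
      · rintro ⟨h1, h2⟩
        rcases le_or_gt s (C ω) with h | h
        · exact Or.inl ⟨h1, h⟩
        · exact Or.inr ⟨h, h2⟩
    · rw [Set.disjoint_left]
      rintro ω ⟨_, h1⟩ ⟨h2, _⟩
      exact absurd h2 (not_lt_of_ge h1)
  -- F facts
  have hFmono : Monotone F := fun x y hxy => lintegral_mono_set (Ioc_subset_Ioc_right hxy)
  have hFm : Measurable F := hFmono.measurable
  have hη1 : η univ ≤ 1 := by
    rw [hηdef, Measure.map_apply hTt MeasurableSet.univ, preimage_univ,
      Measure.restrict_apply_univ]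
    exact prob_le_one
  have hEqF : ∀ s ∈ 𝒥, 0 < s →
      ∫⁻ u in Ioo 0 s, F u ∂νC + k s * F s = η (Ioc 0 s) := by
    intro s hs𝒥 hs
    exact CensorAux.fubini_step νC η k hkν s hs (hk𝒥 s hs𝒥).ne'
  -- null sets at 0
  have hC0null : P {ω | ¬ 0 < C ω} = 0 := ae_iff.mp hCpos
  have hν0 : νC {(0:ℝ)} = 0 := by
    rw [hνC, Measure.map_apply hC (measurableSet_singleton 0)]
    refine measure_mono_null (fun ω hω => ?_) hC0null
    rw [mem_preimage, mem_singleton_iff] at hω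
    simp only [mem_setOf_eq, hω, lt_irrefl, not_false_eq_true]
  have hμt00 : μt 0 {(0:ℝ)} = 0 := by
    rw [hμ0C, Measure.map_apply hC (measurableSet_singleton 0),
      Measure.restrict_apply (hC (measurableSet_singleton 0))]
    refine measure_mono_null (fun ω hω => ?_) hC0null
    rw [mem_inter_iff, mem_preimage, mem_singleton_iff] at hω
    simp only [mem_setOf_eq, hω.1, lt_irrefl, not_false_eq_true]
  have hAe0 : ∀ A : Set ℝ, A ⊆ 𝒥 → A =ᵐ[νC] (A ∩ Ioi 0 : Set ℝ) := by
    intro A hA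
    refine (ae_eq_set.mpr ⟨?_, ?_⟩)
    · refine measure_mono_null (fun x hx => ?_) hν0
      have hx0 : ¬ (0:ℝ) < x := fun h => hx.2 ⟨hx.1, h⟩
      have : x = 0 := le_antisymm (not_lt.mp hx0) (h𝒥nonneg x (hA hx.1))
      simp [this]
    · have : (A ∩ Ioi 0 : Set ℝ) \ A = ∅ := diff_eq_empty.mpr inter_subset_left
      rw [this, measure_empty]
  -- 0 ∈ 𝒥
  have h0𝒥 : (0:ℝ) ∈ 𝒥 := by
    rw [h𝒥]
    refine ⟨le_rfl, ?_⟩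
    have hae : ∀ᵐ ω ∂P, 0 < Tt ω := by
      filter_upwards [hTpos, hCpos] with ω h1 h2
      rw [hTtdef ω]
      exact lt_min h1 h2
    have h1 : P {ω | ¬ 0 < Tt ω} = 0 := ae_iff.mp hae
    have h2 : {ω | 0 < Tt ω} = {ω | ¬ 0 < Tt ω}ᶜ := by ext ω; simp
    rw [h2, measure_compl ?_ (measure_ne_top P _), h1, measure_univ]
    · norm_num
    · exact (hTt measurableSet_Ioi).compl
  -- covering family for 𝒥
  have hcov : ∃ f : ℕ → ℝ, (∀ n, f n ∈ 𝒥) ∧ ∀ x ∈ 𝒥, ∃ n, x ≤ f n := by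
    by_cases hbdd : BddAbove 𝒥
    · by_cases hmem : sSup 𝒥 ∈ 𝒥
      · exact ⟨fun _ => sSup 𝒥, fun _ => hmem, fun x hx => ⟨0, le_csSup hbdd hx⟩⟩
      · have hne : 𝒥.Nonempty := ⟨0, h0𝒥⟩
        have hch : ∀ n : ℕ, ∃ y ∈ 𝒥, sSup 𝒥 - 1/(n+1) < y := by
          intro n
          apply exists_lt_of_lt_csSup hne
          have h1 : (0:ℝ) < 1/(n+1) := by positivity
          linarith
        choose f hf1 hf2 using hch
        refine ⟨f, hf1, fun x hx => ?_⟩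
        have hxle : x ≤ sSup 𝒥 := le_csSup hbdd hx
        have hxlt : x < sSup 𝒥 := lt_of_le_of_ne hxle (fun h => hmem (h ▸ hx))
        obtain ⟨n, hn⟩ := exists_nat_one_div_lt (sub_pos.mpr hxlt)
        refine ⟨n, le_of_lt ?_⟩
        have := hf2 n
        linarith
    · have hch : ∀ n : ℕ, ∃ y ∈ 𝒥, (n:ℝ) < y := by
        intro n
        by_contra h
        push_neg at h
        exact hbdd ⟨n, fun y hy => h y hy⟩
      choose f hf1 hf2 using hch
      refine ⟨f, hf1, fun x hx => ?_⟩
      obtain ⟨n, hn⟩ := exists_nat_ge x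
      exact ⟨n, le_of_lt (lt_of_le_of_lt hn (hf2 n))⟩
  -- gluing principle
  have hglue : ∀ (m₁ m₂ : Measure ℝ),
      (∀ t ∈ 𝒥, 0 < t → ∀ A : Set ℝ, A ⊆ Ioc 0 t → MeasurableSet A → m₁ A = m₂ A) →
      ∀ A : Set ℝ, A ⊆ 𝒥 ∩ Ioi 0 → MeasurableSet A → m₁ A = m₂ A := by
    intro m₁ m₂ hloc A hA hAm
    obtain ⟨f, hf𝒥, hfcov⟩ := hcov
    have hrne : ∀ n : ℕ, (Finset.range (n+1)).Nonempty := fun n => ⟨0, by simp⟩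
    set g : ℕ → ℝ := fun n => (Finset.range (n+1)).sup' (hrne n) f with hgdef
    have hg𝒥 : ∀ n, g n ∈ 𝒥 := by
      intro n
      obtain ⟨i, _, hieq⟩ := Finset.exists_mem_eq_sup' (hrne n) f
      rw [hgdef]
      dsimp only
      rw [hieq]
      exact hf𝒥 i
    have hgmono : Monotone g := fun m n hmn => Finset.sup'_le _ _ (fun i hi =>
      Finset.le_sup' f (Finset.mem_range.mpr (lt_of_lt_of_le (Finset.mem_range.mp hi)
        (by omega))))
    have hfg : ∀ n, f n ≤ g n := fun n => Finset.le_sup' f (by simp)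
    have hcover : A = ⋃ n, A ∩ Iic (g n) := by
      ext x
      simp only [mem_iUnion, mem_inter_iff, mem_Iic]
      constructor
      · intro hx
        obtain ⟨n, hn⟩ := hfcov x (hA hx).1
        exact ⟨n, hx, le_trans hn (hfg n)⟩
      · rintro ⟨n, hx, _⟩; exact hx
    have hmono2 : Monotone (fun n => A ∩ Iic (g n)) := fun m n h =>
      inter_subset_inter_right _ (Iic_subset_Iic.mpr (hgmono h))
    have h1 : m₁ A = ⨆ n, m₁ (A ∩ Iic (g n)) := by
      conv_lhs => rw [hcover]
      exact Directed.measure_iUnion hmono2.directed_le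
    have h2 : m₂ A = ⨆ n, m₂ (A ∩ Iic (g n)) := by
      conv_lhs => rw [hcover]
      exact Directed.measure_iUnion hmono2.directed_le
    rw [h1, h2]
    refine iSup_congr (fun n => ?_)
    rcases (h𝒥nonneg _ (hg𝒥 n)).eq_or_lt with h0 | h0
    · have hempty : A ∩ Iic (g n) = ∅ := by
        ext x
        simp only [mem_inter_iff, mem_Iic, mem_empty_iff_false, iff_false, not_and]
        intro hx hle
        exact absurd (le_trans hle h0.symm.le) (not_le_of_gt (hA hx).2)
      rw [hempty]
      simp
    · exact hloc (g n) (hg𝒥 n) h0 _ (fun x hx => ⟨(hA hx.1).2, hx.2⟩)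
        (hAm.inter measurableSet_Iic)
  -- ### the equivalence
  constructor
  · -- (i) → (ii)
    intro hi
    set ω₁ : Measure ℝ := (μt 0).withDensity (fun s => (a s)⁻¹) with hω₁def
    set ω₂ : Measure ℝ := νC.withDensity (fun s => (k s)⁻¹) with hω₂def
    have hω₁Ioc : ∀ u : ℝ, ω₁ (Ioc 0 u) = Hc0 u := by
      intro u
      rw [hω₁def, withDensity_apply _ measurableSet_Ioc, hHc0 u]
    have hω₂Ioc : ∀ u : ℝ, ω₂ (Ioc 0 u) = H0 u := by
      intro u
      rw [hω₂def, withDensity_apply _ measurableSet_Ioc, hH0 u]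
    have hω₂fin : ∀ t ∈ 𝒥, ω₂ (Ioc 0 t) ≠ ∞ := by
      intro t ht𝒥
      rw [hω₂def, withDensity_apply _ measurableSet_Ioc]
      have hb : ∫⁻ s in Ioc 0 t, (k s)⁻¹ ∂νC ≤ (k t)⁻¹ * νC (Ioc 0 t) := by
        rw [← setLIntegral_const]
        exact setLIntegral_mono' measurableSet_Ioc
          (fun s hs => ENNReal.inv_le_inv.mpr (hka hs.2))
      exact (lt_of_le_of_lt hb (ENNReal.mul_lt_top
        (ENNReal.inv_ne_top.mpr (hk𝒥 t ht𝒥).ne').lt_top (measure_lt_top _ _))).ne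
    have hloc : ∀ t ∈ 𝒥, 0 < t → ∀ A : Set ℝ, A ⊆ Ioc 0 t → MeasurableSet A →
        ω₁ A = ω₂ A := by
      intro t ht𝒥 ht0 A hA hAm
      have hIocall : ∀ u, 0 ≤ u → u ≤ t → ω₁ (Ioc 0 u) = ω₂ (Ioc 0 u) := by
        intro u h0 hut
        rw [hω₁Ioc, hω₂Ioc]
        exact hi u (h𝒥init t ht𝒥 u h0 hut)
      haveI i₁ : IsFiniteMeasure (ω₁.restrict (Ioc 0 t)) := by
        constructor
        rw [Measure.restrict_apply_univ, hIocall t (le_of_lt ht0) le_rfl]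
        exact (hω₂fin t ht𝒥).lt_top
      haveI i₂ : IsFiniteMeasure (ω₂.restrict (Ioc 0 t)) := by
        constructor
        rw [Measure.restrict_apply_univ]
        exact (hω₂fin t ht𝒥).lt_top
      have hext : ω₁.restrict (Ioc 0 t) = ω₂.restrict (Ioc 0 t) := by
        refine Measure.ext_of_Ioc _ _ (fun x y hxy => ?_)
        rw [Measure.restrict_apply measurableSet_Ioc,
          Measure.restrict_apply measurableSet_Ioc, Ioc_inter_Ioc]
        rcases le_or_gt (min y t) (max x 0) with hyx | hxy'
        · rw [Ioc_eq_empty (not_lt.mpr hyx)]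
          simp
        · have hx'0 : (0:ℝ) ≤ max x 0 := le_max_right _ _
          have hy't : min y t ≤ t := min_le_right _ _
          have h0b := hIocall (min y t) (le_trans hx'0 (le_of_lt hxy')) hy't
          have h0a := hIocall (max x 0) hx'0 (le_trans (le_of_lt hxy') hy't)
          have hdisj : Disjoint (Ioc (0:ℝ) (max x 0)) (Ioc (max x 0) (min y t)) := by
            rw [Set.disjoint_left]
            rintro z hz hz2
            exact absurd hz2.1 (not_lt.mpr hz.2)
          have hsplit1 : ω₁ (Ioc 0 (min y t))
              = ω₁ (Ioc 0 (max x 0)) + ω₁ (Ioc (max x 0) (min y t)) := by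
            rw [← measure_union hdisj measurableSet_Ioc,
              Ioc_union_Ioc_eq_Ioc hx'0 (le_of_lt hxy')]
          have hsplit2 : ω₂ (Ioc 0 (min y t))
              = ω₂ (Ioc 0 (max x 0)) + ω₂ (Ioc (max x 0) (min y t)) := by
            rw [← measure_union hdisj measurableSet_Ioc,
              Ioc_union_Ioc_eq_Ioc hx'0 (le_of_lt hxy')]
          have hfin : ω₂ (Ioc 0 (max x 0)) ≠ ∞ :=
            ne_top_of_le_ne_top (hω₂fin t ht𝒥)
              (measure_mono (Ioc_subset_Ioc_right (le_trans (le_of_lt hxy') hy't)))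
          rw [h0a] at hsplit1
          exact (ENNReal.add_right_inj hfin).mp
            (hsplit1.symm.trans (h0b.trans hsplit2))
      have e1 : ω₁ A = ω₁.restrict (Ioc 0 t) A := by
        rw [Measure.restrict_apply hAm, inter_eq_left.mpr hA]
      have e2 : ω₂ A = ω₂.restrict (Ioc 0 t) A := by
        rw [Measure.restrict_apply hAm, inter_eq_left.mpr hA]
      rw [e1, hext, ← e2]
    have hset12 : ∀ A : Set ℝ, A ⊆ 𝒥 ∩ Ioi 0 → MeasurableSet A → ω₁ A = ω₂ A :=
      hglue ω₁ ω₂ hloc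
    have hμ0A' : ∀ A : Set ℝ, A ⊆ 𝒥 ∩ Ioi 0 → MeasurableSet A →
        μt 0 A = ∫⁻ s in A, a s * (k s)⁻¹ ∂νC := by
      intro A hA hAm
      have hrestr : ω₁.restrict A = ω₂.restrict A := by
        ext B hB
        rw [Measure.restrict_apply hB, Measure.restrict_apply hB]
        exact hset12 _ (le_trans inter_subset_right hA) (hB.inter hAm)
      calc μt 0 A = ∫⁻ _ in A, (1:ℝ≥0∞) ∂(μt 0) := by rw [setLIntegral_one]
        _ = ∫⁻ s in A, (a s)⁻¹ * a s ∂(μt 0) := by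
            refine (setLIntegral_congr_fun_ae hAm (ae_of_all _ (fun s hs => ?_)))
            rw [ENNReal.inv_mul_cancel (ha𝒥 s (hA hs).1).ne' (hatop s)]
        _ = ∫⁻ s in A, a s ∂ω₁ := by
            rw [hω₁def, setLIntegral_withDensity_eq_setLIntegral_mul (μt 0) (show Measurable fun s => (a s)⁻¹ from ham.inv) ham hAm]
            rfl
        _ = ∫⁻ s in A, a s ∂ω₂ := by rw [hrestr]
        _ = ∫⁻ s in A, (k s)⁻¹ * a s ∂νC := by
            rw [hω₂def, setLIntegral_withDensity_eq_setLIntegral_mul νC (show Measurable fun s => (k s)⁻¹ from hkm.inv) ham hAm]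
            rfl
        _ = ∫⁻ s in A, a s * (k s)⁻¹ ∂νC :=
            setLIntegral_congr_fun_ae hAm (ae_of_all _ (fun s _ => mul_comm _ _))
    have hμ0A : ∀ A : Set ℝ, A ⊆ 𝒥 → MeasurableSet A →
        μt 0 A = ∫⁻ s in A, a s * (k s)⁻¹ ∂νC := by
      intro A hA hAm
      have hμside : μt 0 A = μt 0 (A ∩ Ioi 0) := by
        refine le_antisymm ?_ (measure_mono inter_subset_left)
        have hsub : A ⊆ (A ∩ Ioi 0) ∪ {0} := by
          intro x hx
          rcases (h𝒥nonneg x (hA hx)).eq_or_lt with h0 | h0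
          · exact Or.inr (by simp [← h0])
          · exact Or.inl ⟨hx, h0⟩
        calc μt 0 A ≤ μt 0 ((A ∩ Ioi 0) ∪ {0}) := measure_mono hsub
          _ ≤ μt 0 (A ∩ Ioi 0) + μt 0 {0} := measure_union_le _ _
          _ = μt 0 (A ∩ Ioi 0) := by rw [hμt00, add_zero]
      rw [hμside, setLIntegral_congr (hAe0 A hA)]
      exact hμ0A' _ (inter_subset_inter_left _ hA) (hAm.inter measurableSet_Ioi)
    set G : ℝ → ℝ≥0∞ := fun s => R s * (k s)⁻¹ with hGdef
    have hGm : Measurable G := hRm.mul hkm.inv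
    have hβG : ∀ A : Set ℝ, A ⊆ 𝒥 → MeasurableSet A →
        β A = ∫⁻ s in A, G s ∂νC := by
      intro A hA hAm
      have h1 : μt 0 A + β A = νC A := hνsplit A hAm
      have h2 : νC A = ∫⁻ s in A, (a s * (k s)⁻¹ + G s) ∂νC := by
        rw [← setLIntegral_one]
        exact setLIntegral_congr_fun_ae hAm (ae_of_all _ (fun s hs => (hpt1 s (hA hs)).symm))
      rw [lintegral_add_right _ hGm, ← hμ0A A hA hAm] at h2
      rw [h2] at h1
      exact (ENNReal.add_right_inj (measure_ne_top _ _)).mp h1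
    have hEqG : ∀ s ∈ 𝒥, 0 < s →
        ∫⁻ u in Ioo 0 s, G u ∂νC + k s * G s = η (Ioc 0 s) := by
      intro s hs𝒥 hs
      have h1 : β (Ioo 0 s) = ∫⁻ u in Ioo 0 s, G u ∂νC :=
        hβG _ (hIoo𝒥 s hs𝒥) measurableSet_Ioo
      have h2 : k s * G s = R s := by
        rw [hGdef]
        dsimp only
        rw [mul_comm (R s) _, ← mul_assoc,
          ENNReal.mul_inv_cancel (hk𝒥 s hs𝒥).ne' (hktop s), one_mul]
      rw [← h1, h2, add_comm]
      exact hE1 s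
    have hFG : ∀ s ∈ 𝒥, 0 < s → F s = G s := by
      intro s hs𝒥 hs
      refine CensorAux.volterra_unique νC k F G hFm hGm s (k s) ((k s)⁻¹)
        (hk𝒥 s hs𝒥) (hktop s) (ENNReal.inv_ne_top.mpr (hk𝒥 s hs𝒥).ne')
        (fun u hu => hka hu.2) (fun u _ => hktop u) ?_ ?_ ?_ s ⟨hs, le_rfl⟩
      · intro u hu
        have hb1 : F u ≤ (k s)⁻¹ * η (Ioc 0 u) := by
          rw [hFdef]
          dsimp only
          calc ∫⁻ v in Ioc 0 u, (k v)⁻¹ ∂η ≤ ∫⁻ _ in Ioc 0 u, (k s)⁻¹ ∂η :=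
                setLIntegral_mono' measurableSet_Ioc
                  (fun v hv => ENNReal.inv_le_inv.mpr (hka (le_trans hv.2 hu.2)))
            _ = (k s)⁻¹ * η (Ioc 0 u) := setLIntegral_const _ _
        refine le_trans hb1 ?_
        calc (k s)⁻¹ * η (Ioc 0 u) ≤ (k s)⁻¹ * 1 :=
              mul_le_mul_right (le_trans (measure_mono (subset_univ _)) hη1) _
          _ = (k s)⁻¹ := mul_one _
      · intro u hu
        have hu𝒥 : u ∈ 𝒥 := h𝒥init s hs𝒥 u (le_of_lt hu.1) hu.2
        have : G u ≤ 1 := by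
          rw [hGdef]
          dsimp only
          calc R u * (k u)⁻¹ ≤ k u * (k u)⁻¹ := mul_le_mul_left (hRk u) _
            _ = 1 := ENNReal.mul_inv_cancel (hk𝒥 u hu𝒥).ne' (hktop u)
        refine le_trans this ?_
        calc (1:ℝ≥0∞) = 1⁻¹ := (inv_one).symm
          _ ≤ (k s)⁻¹ := ENNReal.inv_le_inv.mpr (hk1 s)
      · intro u hu
        have hu𝒥 : u ∈ 𝒥 := h𝒥init s hs𝒥 u (le_of_lt hu.1) hu.2
        exact (hEqF u hu𝒥 hu.1).trans (hEqG u hu𝒥 hu.1).symm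
    -- conclude (ii)
    intro A hAm hA𝒥
    have hstep1 : μt 0 A = ∫⁻ s in A, a s * (k s)⁻¹ ∂νC := hμ0A A hA𝒥 hAm
    have hstep2 : ∫⁻ s in A, a s * (k s)⁻¹ ∂νC
        = ∫⁻ s in A ∩ Ioi 0, a s * (k s)⁻¹ ∂νC := setLIntegral_congr (hAe0 A hA𝒥)
    have hstep3 : ∫⁻ s in A ∩ Ioi 0, a s * (k s)⁻¹ ∂νC
        = ∫⁻ s in A ∩ Ioi 0, (1 - F s) ∂νC := by
      refine setLIntegral_congr_fun_ae (hAm.inter measurableSet_Ioi)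
        (ae_of_all _ (fun s hs => ?_))
      have hs𝒥 : s ∈ 𝒥 := hA𝒥 hs.1
      have h1 := hpt1 s hs𝒥
      have h2 : a s * (k s)⁻¹ + F s = 1 := by
        rw [hFG s hs𝒥 hs.2]
        exact h1
      exact ENNReal.eq_sub_of_add_eq
        (ne_top_of_le_ne_top one_ne_top (le_trans le_add_self (le_of_eq h2))) h2
    have hstep4 : ∫⁻ s in A ∩ Ioi 0, (1 - F s) ∂νC = ∫⁻ s in A, (1 - F s) ∂νC :=
      (setLIntegral_congr (hAe0 A hA𝒥)).symm
    rw [hstep1, hstep2, hstep3, hstep4]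
    exact (lintegral_congr (fun s => by rw [hsumF s])).symm
  · -- (ii) → (i)
    intro hii
    have hμ0F : ∀ A : Set ℝ, A ⊆ 𝒥 → MeasurableSet A →
        μt 0 A = ∫⁻ s in A, (1 - F s) ∂νC := by
      intro A hA hAm
      rw [hii A hAm hA]
      exact lintegral_congr (fun s => by rw [hsumF s])
    have hβmin : ∀ A : Set ℝ, A ⊆ 𝒥 → MeasurableSet A →
        β A = ∫⁻ s in A, min (F s) 1 ∂νC := by
      intro A hA hAm
      have h1 := hνsplit A hAm
      have h2 : νC A = ∫⁻ s in A, ((1 - F s) + min (F s) 1) ∂νC := by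
        rw [← setLIntegral_one]
        refine setLIntegral_congr_fun_ae hAm (ae_of_all _ (fun s _ => ?_))
        rcases le_total (F s) 1 with h | h
        · rw [min_eq_left h, tsub_add_cancel_of_le h]
        · rw [min_eq_right h, tsub_eq_zero_of_le h, zero_add]
      rw [lintegral_add_right _ (hFm.min measurable_const), ← hμ0F A hA hAm] at h2
      rw [h2] at h1
      exact (ENNReal.add_right_inj (measure_ne_top _ _)).mp h1
    have hIoofin : ∀ s ∈ 𝒥, 0 < s → ∫⁻ u in Ioo 0 s, F u ∂νC ≠ ∞ := by
      intro s hs𝒥 hs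
      exact ne_top_of_le_ne_top (measure_ne_top η _)
        (le_trans le_self_add (le_of_eq (hEqF s hs𝒥 hs)))
    have hF1 : ∀ s ∈ 𝒥, F s ≤ 1 := by
      intro s hs𝒥
      rcases (h𝒥nonneg s hs𝒥).eq_or_lt with h0 | h0
      · rw [hFdef]
        dsimp only
        rw [← h0, Ioc_self, Measure.restrict_empty, lintegral_zero_measure]
        exact zero_le_one
      · have hβIoo2 : β (Ioo 0 s) = ∫⁻ u in Ioo 0 s, min (F u) 1 ∂νC :=
          hβmin _ (hIoo𝒥 s hs𝒥) measurableSet_Ioo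
        have h1 := hE1 s
        have h2 := hEqF s hs𝒥 h0
        have h3 : k s * F s + ∫⁻ u in Ioo 0 s, F u ∂νC
            = R s + ∫⁻ u in Ioo 0 s, min (F u) 1 ∂νC := by
          rw [← hβIoo2, add_comm (k s * F s) _]
          exact h2.trans h1.symm
        have h4 : k s * F s + ∫⁻ u in Ioo 0 s, F u ∂νC
            ≤ R s + ∫⁻ u in Ioo 0 s, F u ∂νC :=
          le_trans (le_of_eq h3)
            (add_le_add_right (lintegral_mono (fun u => min_le_left _ _)) _)
        have h5 : k s * F s ≤ R s :=
          (ENNReal.add_le_add_iff_right (hIoofin s hs𝒥 h0)).mp h4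
        have h6 : k s * F s ≤ k s * 1 := by
          rw [mul_one]; exact le_trans h5 (hRk s)
        exact (ENNReal.mul_le_mul_iff_right (hk𝒥 s hs𝒥).ne' (hktop s)).mp h6
    have hβF : ∀ A : Set ℝ, A ⊆ 𝒥 → MeasurableSet A →
        β A = ∫⁻ s in A, F s ∂νC := by
      intro A hA hAm
      rw [hβmin A hA hAm]
      exact setLIntegral_congr_fun_ae hAm
        (ae_of_all _ (fun s hs => min_eq_left (hF1 s (hA hs))))
    have hRkF : ∀ s ∈ 𝒥, 0 < s → R s = k s * F s := by
      intro s hs𝒥 hs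
      have h1 := hE1 s
      rw [hβF _ (hIoo𝒥 s hs𝒥) measurableSet_Ioo] at h1
      have h2 := hEqF s hs𝒥 hs
      have h3 : ∫⁻ u in Ioo 0 s, F u ∂νC + R s
          = ∫⁻ u in Ioo 0 s, F u ∂νC + k s * F s := by
        rw [add_comm _ (R s)]
        exact h1.trans h2.symm
      exact (ENNReal.add_right_inj (hIoofin s hs𝒥 hs)).mp h3
    intro t ht𝒥
    rcases (h𝒥nonneg t ht𝒥).eq_or_lt with h0 | h0
    · rw [hHc0, hH0, ← h0]
      simp
    · set g : ℝ → ℝ≥0∞ := fun s => a s * (k s)⁻¹ with hgdef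
      have hgm : Measurable g := ham.mul hkm.inv
      have hpt2 : ∀ s ∈ 𝒥, 0 < s → 1 - F s = g s := by
        intro s hs𝒥 hs
        have h1 := hpt1 s hs𝒥
        have hR : R s * (k s)⁻¹ = F s := by
          rw [hRkF s hs𝒥 hs, mul_comm (k s) (F s), mul_assoc,
            ENNReal.mul_inv_cancel (hk𝒥 s hs𝒥).ne' (hktop s), mul_one]
        rw [hR] at h1
        exact (ENNReal.eq_sub_of_add_eq
          ((lt_of_le_of_lt (hF1 s hs𝒥) one_lt_top).ne) h1).symm
      have hrestr : (μt 0).restrict (Ioc 0 t) = (νC.withDensity g).restrict (Ioc 0 t) := by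
        ext B hB
        rw [Measure.restrict_apply hB, Measure.restrict_apply hB]
        have hsub : B ∩ Ioc 0 t ⊆ 𝒥 :=
          fun x hx => h𝒥init t ht𝒥 x (le_of_lt hx.2.1) hx.2.2
        rw [hμ0F _ hsub (hB.inter measurableSet_Ioc),
          withDensity_apply _ (hB.inter measurableSet_Ioc)]
        refine setLIntegral_congr_fun_ae (hB.inter measurableSet_Ioc)
          (ae_of_all _ (fun s hs => ?_))
        exact hpt2 s (hsub hs) hs.2.1
      rw [hHc0, hH0]
      calc ∫⁻ s in Ioc 0 t, (a s)⁻¹ ∂(μt 0)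
          = ∫⁻ s in Ioc 0 t, (a s)⁻¹ ∂(νC.withDensity g) := by rw [hrestr]
        _ = ∫⁻ s in Ioc 0 t, (g * fun s => (a s)⁻¹) s ∂νC :=
            setLIntegral_withDensity_eq_setLIntegral_mul νC hgm ham.inv measurableSet_Ioc
        _ = ∫⁻ s in Ioc 0 t, (k s)⁻¹ ∂νC := by
            refine setLIntegral_congr_fun_ae measurableSet_Ioc
              (ae_of_all _ (fun s hs => ?_))
            have hs𝒥 : s ∈ 𝒥 := h𝒥init t ht𝒥 s (le_of_lt hs.1) hs.2
            show g s * (a s)⁻¹ = (k s)⁻¹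
            rw [hgdef]
            dsimp only
            rw [mul_comm (a s) _, mul_assoc,
              ENNReal.mul_inv_cancel (ha𝒥 s hs𝒥).ne' (hatop s), mul_one]
end

section
/- If H̃_j(t) = H_j(t) for all t ∈ 𝒥 and all j = 1,…,d, and Ȟ₀(t) = H₀(t) for all t ∈ 𝒥 (pointwise independence), then P(T̃ > t) = P(T > t)·P(C > t) for all t ∈ 𝒥 and P(T > t, C ≥ t) = P(T > t)·P(C ≥ t) for all t ∈ 𝒥. -/
open MeasureTheory Set ENNReal

section PIAux
open Filter Topology

lemma PI_tri {x y t : ℝ} (hx : 0 < x) (hy : 0 < y) :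
    ((t < x ∧ t ≤ y) ∨ (x ≤ y ∧ x ∈ Ioc 0 t) ∨ (y < x ∧ y ∈ Ioo 0 t)) := by
  rcases le_or_gt x y with h | h
  · rcases le_or_gt x t with h2 | h2
    · exact Or.inr (Or.inl ⟨h, hx, h2⟩)
    · exact Or.inl ⟨h2, le_trans h2.le h⟩
  · rcases lt_or_ge y t with h2 | h2
    · exact Or.inr (Or.inr ⟨h, hy, h2⟩)
    · exact Or.inl ⟨lt_of_le_of_lt h2 h, h2⟩

lemma PI_decomp {α : Type*} [MeasurableSpace α] (Q : Measure α) [IsProbabilityMeasure Q]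
    (X Y : α → ℝ) (hX : Measurable X) (hY : Measurable Y)
    (hXpos : ∀ᵐ a ∂Q, 0 < X a) (hYpos : ∀ᵐ a ∂Q, 0 < Y a) (t : ℝ) :
    Q {a | t < X a ∧ t ≤ Y a} + (Q {a | X a ≤ Y a ∧ X a ∈ Ioc 0 t}
      + Q {a | Y a < X a ∧ Y a ∈ Ioo 0 t}) = 1 := by
  set A1 := {a | t < X a ∧ t ≤ Y a} with hA1
  set A2 := {a | X a ≤ Y a ∧ X a ∈ Ioc 0 t} with hA2
  set A3 := {a | Y a < X a ∧ Y a ∈ Ioo 0 t} with hA3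
  have m2 : MeasurableSet A2 := (measurableSet_le hX hY).inter (hX measurableSet_Ioc)
  have m3 : MeasurableSet A3 := (measurableSet_lt hY hX).inter (hY measurableSet_Ioo)
  have hd12 : Disjoint A1 A2 := by
    rw [Set.disjoint_left]; rintro a ⟨h1, -⟩ ⟨-, -, h2⟩; exact absurd h1 (not_lt.mpr h2)
  have hd13 : Disjoint A1 A3 := by
    rw [Set.disjoint_left]; rintro a ⟨-, h1⟩ ⟨-, -, h2⟩; exact absurd h2 (not_lt.mpr h1)
  have hd23 : Disjoint A2 A3 := by
    rw [Set.disjoint_left]; rintro a ⟨h1, -⟩ ⟨h2, -⟩; exact absurd h2 (not_lt.mpr h1)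
  have hunion : Q (A1 ∪ (A2 ∪ A3)) = Q A1 + (Q A2 + Q A3) := by
    rw [measure_union (by exact Disjoint.union_right hd12 hd13) (m2.union m3),
      measure_union hd23 m3]
  have hsub : ∀ a, 0 < X a → 0 < Y a → a ∈ A1 ∪ (A2 ∪ A3) := by
    intro a ha1 ha2
    rcases PI_tri (t := t) ha1 ha2 with h | h | h
    · exact Or.inl h
    · exact Or.inr (Or.inl h)
    · exact Or.inr (Or.inr h)
  have hone : Q (A1 ∪ (A2 ∪ A3)) = 1 := by
    refine le_antisymm prob_le_one ?_
    have hle : Q univ ≤ Q (A1 ∪ (A2 ∪ A3)) := by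
      refine measure_mono_ae ?_
      filter_upwards [hXpos, hYpos] with a ha1 ha2
      exact fun _ => hsub a ha1 ha2
    simpa using hle
  rw [← hunion, hone]

lemma PI_sub_le {a b x y x' y' : ℝ≥0∞} (ha : a + (x + y) = 1) (hb : b + (x' + y') = 1) :
    a - b ≤ (x' - x) + (y' - y) := by
  have hxy : x + y ≠ ∞ := by
    refine ne_top_of_le_ne_top ENNReal.one_ne_top ?_
    rw [← ha]; exact le_add_self
  rw [tsub_le_iff_right]
  have key : a + (x + y) ≤ ((x' - x) + (y' - y) + b) + (x + y) := by
    rw [ha, ← hb]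
    calc b + (x' + y') ≤ b + ((x' - x + x) + (y' - y + y)) := by
          exact add_le_add (le_refl b) (add_le_add le_tsub_add le_tsub_add)
      _ = ((x' - x) + (y' - y) + b) + (x + y) := by ring
  exact (ENNReal.add_le_add_iff_right hxy).mp key

lemma PI_lintegral_sub_le {α : Type*} [MeasurableSpace α] (μ : Measure α) {f g : α → ℝ≥0∞}
    (hg : Measurable g) :
    (∫⁻ a, f a ∂μ) - (∫⁻ a, g a ∂μ) ≤ ∫⁻ a, (f a - g a) ∂μ := by
  rw [tsub_le_iff_right, ← lintegral_add_right _ hg]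
  exact lintegral_mono fun a => le_tsub_add

lemma PI_ext {ρ σ : Measure ℝ} {t₀ : ℝ} (ht₀ : 0 ≤ t₀) (hρ : ρ (Ioc 0 t₀) ≠ ∞)
    (h : ∀ t, 0 ≤ t → t ≤ t₀ → ρ (Ioc 0 t) = σ (Ioc 0 t)) :
    ρ.restrict (Ioc 0 t₀) = σ.restrict (Ioc 0 t₀) := by
  have hσ : σ (Ioc 0 t₀) ≠ ∞ := h t₀ ht₀ le_rfl ▸ hρ
  have hfin : IsFiniteMeasure (ρ.restrict (Ioc 0 t₀)) :=
    ⟨by rwa [Measure.restrict_apply_univ, lt_top_iff_ne_top]⟩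
  refine Measure.ext_of_Ioc_finite _ _ ?_ ?_
  · rw [Measure.restrict_apply_univ, Measure.restrict_apply_univ]; exact h t₀ ht₀ le_rfl
  · intro a b hab
    rw [Measure.restrict_apply measurableSet_Ioc, Measure.restrict_apply measurableSet_Ioc,
      Ioc_inter_Ioc]
    set a' := max a 0 with ha'
    set b' := min b t₀ with hb'
    rcases le_or_gt b' a' with hba | hab'
    · rw [Ioc_eq_empty (not_lt.mpr hba)]; simp
    · have h0a : 0 ≤ a' := le_max_right _ _
      have hbt : b' ≤ t₀ := min_le_right _ _
      have hat : a' ≤ t₀ := le_trans hab'.le hbt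
      have hacc : Ioc 0 a' ∪ Ioc a' b' = Ioc 0 b' := Ioc_union_Ioc_eq_Ioc h0a hab'.le
      have hdisj : Disjoint (Ioc 0 a') (Ioc a' b') := by
        rw [Set.disjoint_left]; rintro x ⟨-, hx2⟩ ⟨hx3, -⟩; exact absurd hx3 (not_lt.mpr hx2)
      have hρ' : ρ (Ioc 0 a') + ρ (Ioc a' b') = ρ (Ioc 0 b') := by
        rw [← hacc, measure_union hdisj measurableSet_Ioc]
      have hσ' : σ (Ioc 0 a') + σ (Ioc a' b') = σ (Ioc 0 b') := by
        rw [← hacc, measure_union hdisj measurableSet_Ioc]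
      have hfa : ρ (Ioc 0 a') ≠ ∞ :=
        ne_top_of_le_ne_top hρ (measure_mono (Ioc_subset_Ioc le_rfl hat))
      have heq : ρ (Ioc 0 a') + ρ (Ioc a' b') = ρ (Ioc 0 a') + σ (Ioc a' b') := by
        rw [hρ', h b' (le_trans h0a hab'.le) hbt, ← hσ', h a' h0a hat]
      exact (ENNReal.add_right_inj hfa).mp heq

lemma PI_gronwall (ρ₁ ρ₀ : Measure ℝ) [IsFiniteMeasure ρ₁] [IsFiniteMeasure ρ₀]
    (h hm : ℝ → ℝ≥0∞)
    (hb : ∀ s, h s ≤ 1)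
    (t₀ : ℝ) (ht₀ : 0 ≤ t₀) (h0 : h 0 = 0)
    (hlim : ∀ s, 0 < s → s ≤ t₀ → ∀ c, 0 ≤ c → c < s → hm s ≤ ⨆ u ∈ Ioo c s, h u)
    (heq : ∀ t, 0 ≤ t → t ≤ t₀ →
      h t ≤ (∫⁻ s in Ioc 0 t, hm s ∂ρ₁) + ∫⁻ s in Ioo 0 t, h s ∂ρ₀) :
    ∀ t, 0 ≤ t → t ≤ t₀ → h t = 0 := by
  set E := {t : ℝ | t ∈ Icc 0 t₀ ∧ ∀ s ∈ Icc 0 t, h s = 0} with hE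
  have h0E : (0:ℝ) ∈ E := by
    refine ⟨⟨le_rfl, ht₀⟩, fun s hs => ?_⟩
    have : s = 0 := le_antisymm hs.2 hs.1
    rwa [this]
  have hne : E.Nonempty := ⟨0, h0E⟩
  have hbdd : BddAbove E := ⟨t₀, fun t ht => ht.1.2⟩
  set c := sSup E with hcdef
  have hc0 : 0 ≤ c := le_csSup hbdd h0E
  have hct : c ≤ t₀ := csSup_le hne fun t ht => ht.1.2
  have hzero : ∀ s, 0 ≤ s → s < c → h s = 0 := by
    intro s hs0 hsc
    obtain ⟨e, heE, hse⟩ := exists_lt_of_lt_csSup hne hsc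
    exact heE.2 s ⟨hs0, hse.le⟩
  have hmzero : ∀ s, 0 < s → s ≤ c → hm s = 0 := by
    intro s hs0 hsc
    refine le_antisymm (le_trans (hlim s hs0 (hsc.trans hct) 0 le_rfl hs0) ?_) zero_le
    refine iSup₂_le fun u hu => ?_
    rw [hzero u hu.1.le (lt_of_lt_of_le hu.2 hsc)]
  have hch : h c = 0 := by
    refine le_antisymm (le_trans (heq c hc0 hct) ?_) zero_le
    have e1 : (∫⁻ s in Ioc 0 c, hm s ∂ρ₁) = 0 := by
      rw [setLIntegral_congr_fun measurableSet_Ioc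
        (fun s hs => hmzero s hs.1 hs.2)]
      simp
    have e2 : (∫⁻ s in Ioo 0 c, h s ∂ρ₀) = 0 := by
      rw [setLIntegral_congr_fun measurableSet_Ioo
        (fun s hs => hzero s hs.1.le hs.2)]
      simp
    rw [e1, e2, add_zero]
  have hallc : ∀ s, 0 ≤ s → s ≤ c → h s = 0 := by
    intro s hs0 hsc
    rcases lt_or_eq_of_le hsc with h' | h'
    · exact hzero s hs0 h'
    · rw [h']; exact hch
  by_cases hlt : c < t₀
  · exfalso
    set ρ := ρ₁ + ρ₀ with hρdef
    have htend : Tendsto (fun n : ℕ => ρ (Ioc c (c + 1 / ((n:ℝ) + 1)))) atTop (𝓝 0) := by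
      have h1 := tendsto_measure_iInter_atTop (μ := ρ)
        (s := fun n : ℕ => Ioc c (c + 1 / ((n:ℝ) + 1)))
        (fun n => measurableSet_Ioc.nullMeasurableSet) ?_ ⟨0, measure_ne_top _ _⟩
      · have hempty : (⋂ n : ℕ, Ioc c (c + 1 / ((n:ℝ) + 1))) = ∅ := by
          ext x
          simp only [mem_iInter, mem_Ioc, mem_empty_iff_false, iff_false, not_forall]
          by_contra hx
          push_neg at hx
          have hcx : c < x := (hx 0).1
          have hpos : 0 < x - c := sub_pos.mpr hcx
          obtain ⟨n, hn⟩ := exists_nat_gt (1 / (x - c))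
          have h3 : 1 / (x - c) < (n:ℝ) + 1 := hn.trans (lt_add_one _)
          have h4 : 1 / ((n:ℝ) + 1) < x - c := by
            rw [div_lt_iff₀ (by positivity)]
            rw [div_lt_iff₀ hpos] at h3
            nlinarith
          have := (hx n).2
          linarith
        rw [hempty, measure_empty] at h1
        exact h1
      · intro n m hnm
        refine Ioc_subset_Ioc le_rfl (add_le_add le_rfl ?_)
        have h1 : (0:ℝ) < (n:ℝ) + 1 := by positivity
        have h2 : ((n:ℝ) + 1) ≤ (m:ℝ) + 1 := by
          have : (n:ℝ) ≤ (m:ℝ) := Nat.cast_le.mpr hnm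
          linarith
        exact one_div_le_one_div_of_le h1 h2
    obtain ⟨n, hn⟩ := (htend.eventually_lt_const (by norm_num : (0:ℝ≥0∞) < 2⁻¹)).exists
    set δ := min (1 / ((n:ℝ) + 1)) (t₀ - c) with hδdef
    have hδpos : 0 < δ := lt_min (by positivity) (sub_pos.mpr hlt)
    set t₁ := c + δ with ht₁def
    have hct₁ : c < t₁ := lt_add_of_pos_right c hδpos
    have ht₁t₀ : t₁ ≤ t₀ := by
      have := min_le_right (1 / ((n:ℝ) + 1)) (t₀ - c); rw [ht₁def]; linarith
    have hsubI : Ioc c t₁ ⊆ Ioc c (c + 1 / ((n:ℝ) + 1)) := by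
      refine Ioc_subset_Ioc le_rfl ?_
      have := min_le_left (1 / ((n:ℝ) + 1)) (t₀ - c); rw [ht₁def]; linarith
    set M := ⨆ u ∈ Ioc c t₁, h u with hMdef
    have hMle : ∀ u ∈ Ioc c t₁, h u ≤ M := fun u hu => le_iSup₂ (f := fun u _ => h u) u hu
    have hM1 : M ≤ 1 := iSup₂_le fun u _ => hb u
    have hbound : ∀ t ∈ Ioc c t₁, h t ≤ M * ρ (Ioc c t₁) := by
      intro t ht
      have ht0 : 0 ≤ t := hc0.trans ht.1.le
      refine le_trans (heq t ht0 (ht.2.trans ht₁t₀)) ?_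
      have hI1 : (∫⁻ s in Ioc 0 t, hm s ∂ρ₁) ≤ M * ρ₁ (Ioc c t₁) := by
        have hmono : ∀ s ∈ Ioc (0:ℝ) t, hm s ≤ Set.indicator (Ioc c t₁) (fun _ => M) s := by
          intro s hs
          rcases le_or_gt s c with hsc | hcs
          · rw [hmzero s hs.1 hsc]; exact zero_le
          · have hsmem : s ∈ Ioc c t₁ := ⟨hcs, hs.2.trans ht.2⟩
            rw [indicator_of_mem hsmem]
            refine le_trans (hlim s hs.1 ((hs.2.trans ht.2).trans ht₁t₀) c hc0 hcs) ?_
            exact iSup₂_le fun u hu => hMle u ⟨hu.1, hu.2.le.trans hsmem.2⟩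
        calc (∫⁻ s in Ioc 0 t, hm s ∂ρ₁)
            ≤ ∫⁻ s in Ioc 0 t, Set.indicator (Ioc c t₁) (fun _ => M) s ∂ρ₁ :=
              setLIntegral_mono (measurable_const.indicator measurableSet_Ioc) hmono
          _ ≤ ∫⁻ s, Set.indicator (Ioc c t₁) (fun _ => M) s ∂ρ₁ :=
              setLIntegral_le_lintegral _ _
          _ = M * ρ₁ (Ioc c t₁) := lintegral_indicator_const measurableSet_Ioc M
      have hI0 : (∫⁻ s in Ioo 0 t, h s ∂ρ₀) ≤ M * ρ₀ (Ioc c t₁) := by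
        have hmono : ∀ s ∈ Ioo (0:ℝ) t, h s ≤ Set.indicator (Ioc c t₁) (fun _ => M) s := by
          intro s hs
          rcases le_or_gt s c with hsc | hcs
          · rw [hallc s hs.1.le hsc]; exact zero_le
          · have hsmem : s ∈ Ioc c t₁ := ⟨hcs, hs.2.le.trans ht.2⟩
            rw [indicator_of_mem hsmem]; exact hMle s hsmem
        calc (∫⁻ s in Ioo 0 t, h s ∂ρ₀)
            ≤ ∫⁻ s in Ioo 0 t, Set.indicator (Ioc c t₁) (fun _ => M) s ∂ρ₀ :=
              setLIntegral_mono (measurable_const.indicator measurableSet_Ioc) hmono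
          _ ≤ ∫⁻ s, Set.indicator (Ioc c t₁) (fun _ => M) s ∂ρ₀ :=
              setLIntegral_le_lintegral _ _
          _ = M * ρ₀ (Ioc c t₁) := lintegral_indicator_const measurableSet_Ioc M
      calc (∫⁻ s in Ioc 0 t, hm s ∂ρ₁) + ∫⁻ s in Ioo 0 t, h s ∂ρ₀
          ≤ M * ρ₁ (Ioc c t₁) + M * ρ₀ (Ioc c t₁) := add_le_add hI1 hI0
        _ = M * ρ (Ioc c t₁) := by rw [hρdef, Measure.add_apply, mul_add]
    have hMM : M ≤ M * 2⁻¹ := by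
      have h1 : M ≤ M * ρ (Ioc c t₁) := iSup₂_le hbound
      refine h1.trans (mul_le_mul' le_rfl ?_)
      exact (measure_mono hsubI).trans hn.le
    have hM0 : M = 0 := by
      by_contra hM0
      have hMtop : M ≠ ∞ := ne_top_of_le_ne_top ENNReal.one_ne_top hM1
      have hhalf := ENNReal.half_lt_self hM0 hMtop
      rw [ENNReal.div_eq_inv_mul, mul_comm] at hhalf
      exact absurd (hMM.trans_lt hhalf) (lt_irrefl M)
    have ht₁E : t₁ ∈ E := by
      refine ⟨⟨hc0.trans hct₁.le, ht₁t₀⟩, fun s hs => ?_⟩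
      rcases le_or_gt s c with hsc | hcs
      · exact hallc s hs.1 hsc
      · have := hMle s ⟨hcs, hs.2⟩
        rw [hM0] at this
        exact le_antisymm this zero_le
    exact absurd (le_csSup hbdd ht₁E) (not_le.mpr hct₁)
  · intro t ht0 htt
    have hceq : c = t₀ := le_antisymm hct (not_lt.mp hlt)
    exact hallc t ht0 (hceq ▸ htt)

lemma PI_restrict_finset_sum {α ι : Type*} [MeasurableSpace α] (s : Finset ι)
    (μ : ι → Measure α) (A : Set α) (hA : MeasurableSet A) :
    (∑ j ∈ s, μ j).restrict A = ∑ j ∈ s, (μ j).restrict A := by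
  refine Measure.ext fun B hB => ?_
  rw [Measure.restrict_apply hB, Measure.finset_sum_apply, Measure.finset_sum_apply]
  exact Finset.sum_congr rfl fun j _ => (Measure.restrict_apply hB).symm

lemma PI_prob_eq_one {α : Type*} [MeasurableSpace α] (μ : Measure α) [IsProbabilityMeasure μ]
    {A : Set α} (hA : ∀ᵐ a ∂μ, a ∈ A) : μ A = 1 := by
  rw [← measure_univ (μ := μ)]
  refine measure_congr (ae_eq_univ.mpr ?_)
  rw [ae_iff] at hA
  simpa [compl_def] using hA

end PIAux

section PIMain
open Filter Topology

/-- Pointwise independence (in hazard form) implies the product structure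
`S̃(t) = S(t)·K(t)` and `Š(t) = S(t)·K(t−)` on `𝒥`. -/
theorem pointwise_independence_implies_product_structure
    {Ω : Type*} [m0 : MeasurableSpace Ω] (P : Measure Ω) [IsProbabilityMeasure P]
    (d : ℕ) (hd : 1 ≤ d)
    (T C : Ω → ℝ) (D : Ω → ℕ)
    (hT : Measurable T) (hC : Measurable C) (hD : Measurable D)
    (hTpos : ∀ᵐ ω ∂P, 0 < T ω) (hCpos : ∀ᵐ ω ∂P, 0 < C ω)
    (hDrange : ∀ ω, 1 ≤ D ω ∧ D ω ≤ d)
    (Tt : Ω → ℝ) (hTtdef : ∀ ω, Tt ω = min (T ω) (C ω))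
    (Dt : Ω → ℕ) (hDtdef : ∀ ω, Dt ω = if T ω ≤ C ω then D ω else 0)
    (μ μt : ℕ → Measure ℝ)
    (hμ : ∀ j, μ j = Measure.map T (P.restrict {ω | D ω = j}))
    (hμt : ∀ j, μt j = Measure.map Tt (P.restrict {ω | Dt ω = j}))
    (νC : Measure ℝ) (hνC : νC = Measure.map C P)
    (H Ht : ℕ → ℝ → ℝ≥0∞)
    (hH : ∀ j t, H j t = ∫⁻ s in Ioc 0 t, (P {ω | s ≤ T ω})⁻¹ ∂(μ j))
    (hHt : ∀ j t, Ht j t = ∫⁻ s in Ioc 0 t, (P {ω | s ≤ Tt ω})⁻¹ ∂(μt j))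
    (H0 : ℝ → ℝ≥0∞) (hH0 : ∀ t, H0 t = ∫⁻ s in Ioc 0 t, (P {ω | s ≤ C ω})⁻¹ ∂νC)
    (Hc0 : ℝ → ℝ≥0∞)
    (hHc0 : ∀ t, Hc0 t = ∫⁻ s in Ioc 0 t, (P {ω | s < T ω ∧ s ≤ C ω})⁻¹ ∂(μt 0))
    (𝒥 : Set ℝ) (h𝒥 : 𝒥 = {t | 0 ≤ t ∧ 0 < P {ω | t < Tt ω}})
    -- pointwise independence in hazard form
    (hident : ∀ j, 1 ≤ j → j ≤ d → ∀ t ∈ 𝒥, Ht j t = H j t)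
    (hcens : ∀ t ∈ 𝒥, Hc0 t = H0 t) :
    -- conclusion: P(T̃ > t) = P(T > t)·P(C > t) and P(T > t, C ≥ t) = P(T > t)·P(C ≥ t)
    ∀ t ∈ 𝒥,
      P {ω | t < Tt ω} = P {ω | t < T ω} * P {ω | t < C ω} ∧
      P {ω | t < T ω ∧ t ≤ C ω} = P {ω | t < T ω} * P {ω | t ≤ C ω} := by
  -- measurability of Tt, Dt
  have hTt : Measurable Tt := by
    have h1 : Tt = fun ω => min (T ω) (C ω) := funext hTtdef
    rw [h1]; exact hT.min hC
  have hDt : Measurable Dt := by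
    have h1 : Dt = fun ω => if T ω ≤ C ω then D ω else 0 := funext hDtdef
    rw [h1]; exact Measurable.ite (measurableSet_le hT hC) hD measurable_const
  -- basic set identities
  have hTtset : ∀ u : ℝ, {ω | u < Tt ω} = {ω | u < T ω ∧ u < C ω} := by
    intro u; ext ω; simp only [mem_setOf_eq, hTtdef ω, lt_min_iff]
  have hTtset' : ∀ u : ℝ, {ω | u ≤ Tt ω} = {ω | u ≤ T ω ∧ u ≤ C ω} := by
    intro u; ext ω; simp only [mem_setOf_eq, hTtdef ω, le_min_iff]
  -- survival functions
  set S : ℝ → ℝ≥0∞ := fun s => P {ω | s < T ω} with hS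
  set Sm : ℝ → ℝ≥0∞ := fun s => P {ω | s ≤ T ω} with hSm
  set Kk : ℝ → ℝ≥0∞ := fun s => P {ω | s < C ω} with hKk
  set Km : ℝ → ℝ≥0∞ := fun s => P {ω | s ≤ C ω} with hKm
  set f : ℝ → ℝ≥0∞ := fun s => P {ω | s < T ω ∧ s ≤ C ω} with hf
  set fm : ℝ → ℝ≥0∞ := fun s => P {ω | s ≤ T ω ∧ s ≤ C ω} with hfm
  -- antitonicity and measurability
  have hS_anti : Antitone S := fun u v huv =>
    measure_mono (fun ω hω => lt_of_le_of_lt huv hω)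
  have hSm_anti : Antitone Sm := fun u v huv =>
    measure_mono (fun ω hω => le_trans huv hω)
  have hKk_anti : Antitone Kk := fun u v huv =>
    measure_mono (fun ω hω => lt_of_le_of_lt huv hω)
  have hKm_anti : Antitone Km := fun u v huv =>
    measure_mono (fun ω hω => le_trans huv hω)
  have hf_anti : Antitone f := fun u v huv =>
    measure_mono (fun ω hω => ⟨lt_of_le_of_lt huv hω.1, le_trans huv hω.2⟩)
  have hfm_anti : Antitone fm := fun u v huv =>
    measure_mono (fun ω hω => ⟨le_trans huv hω.1, le_trans huv hω.2⟩)
  have hS_meas : Measurable S := hS_anti.measurable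
  have hSm_meas : Measurable Sm := hSm_anti.measurable
  have hKk_meas : Measurable Kk := hKk_anti.measurable
  have hKm_meas : Measurable Km := hKm_anti.measurable
  have hf_meas : Measurable f := hf_anti.measurable
  have hfm_meas : Measurable fm := hfm_anti.measurable
  -- start the main argument
  intro t₀ ht₀J
  rw [h𝒥, mem_setOf_eq] at ht₀J
  obtain ⟨ht₀0, ht₀pos⟩ := ht₀J
  have hJmem : ∀ u, 0 ≤ u → u ≤ t₀ → u ∈ 𝒥 := by
    intro u hu0 hut
    rw [h𝒥, mem_setOf_eq]
    refine ⟨hu0, lt_of_lt_of_le ht₀pos (measure_mono fun ω hω => lt_of_le_of_lt hut hω)⟩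
  -- positivity
  have hbase_pos : 0 < P {ω | t₀ < T ω ∧ t₀ < C ω} := by rwa [← hTtset]
  have posfm : ∀ u, u ≤ t₀ → 0 < fm u := fun u hu =>
    lt_of_lt_of_le hbase_pos (measure_mono fun ω hω =>
      ⟨le_trans hu hω.1.le, le_trans hu hω.2.le⟩)
  have posf : ∀ u, u ≤ t₀ → 0 < f u := fun u hu =>
    lt_of_lt_of_le hbase_pos (measure_mono fun ω hω =>
      ⟨lt_of_le_of_lt hu hω.1, le_trans hu hω.2.le⟩)
  have posSm : ∀ u, u ≤ t₀ → 0 < Sm u := fun u hu =>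
    lt_of_lt_of_le (posfm u hu) (measure_mono fun ω hω => hω.1)
  have posKm : ∀ u, u ≤ t₀ → 0 < Km u := fun u hu =>
    lt_of_lt_of_le (posfm u hu) (measure_mono fun ω hω => hω.2)
  -- the observed measures
  set μts : Measure ℝ := ∑ j ∈ Finset.Icc 1 d, μt j with hμts
  have hμts_apply : ∀ B : Set ℝ, MeasurableSet B →
      μts B = P {ω | T ω ≤ C ω ∧ T ω ∈ B} := by
    intro B hB
    rw [hμts, Measure.finset_sum_apply]
    have heach : ∀ j ∈ Finset.Icc 1 d,
        μt j B = P (Tt ⁻¹' B ∩ {ω | Dt ω = j}) := by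
      intro j _
      rw [hμt j, Measure.map_apply hTt hB, Measure.restrict_apply (hTt hB)]
    rw [Finset.sum_congr rfl heach]
    have hdis : (↑(Finset.Icc 1 d) : Set ℕ).PairwiseDisjoint
        (fun j => Tt ⁻¹' B ∩ {ω | Dt ω = j}) := by
      intro i _ j _ hij
      rw [Function.onFun, Set.disjoint_left]
      rintro ω ⟨-, hωi⟩ ⟨-, hωj⟩
      rw [mem_setOf_eq] at hωi hωj
      exact hij (hωi ▸ hωj ▸ rfl)
    rw [← measure_biUnion_finset hdis
      (fun j _ => (hTt hB).inter (hDt (measurableSet_singleton j)))]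
    congr 1
    ext ω
    simp only [mem_iUnion, mem_inter_iff, mem_preimage, mem_setOf_eq, Finset.mem_Icc,
      exists_prop]
    constructor
    · rintro ⟨j, ⟨hj1, _⟩, hmem, hDj⟩
      have hTC : T ω ≤ C ω := by
        by_contra hTC
        rw [hDtdef ω, if_neg hTC] at hDj; omega
      refine ⟨hTC, ?_⟩
      rwa [hTtdef ω, min_eq_left hTC] at hmem
    · rintro ⟨hTC, hmem⟩
      refine ⟨D ω, ⟨(hDrange ω).1, (hDrange ω).2⟩, ?_, ?_⟩
      · rwa [hTtdef ω, min_eq_left hTC]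
      · rw [hDtdef ω, if_pos hTC]
  have hμt0_apply : ∀ B : Set ℝ, MeasurableSet B →
      μt 0 B = P {ω | C ω < T ω ∧ C ω ∈ B} := by
    intro B hB
    rw [hμt 0, Measure.map_apply hTt hB, Measure.restrict_apply (hTt hB)]
    congr 1
    ext ω
    simp only [mem_inter_iff, mem_preimage, mem_setOf_eq]
    constructor
    · rintro ⟨hmem, hD0⟩
      have hCT : C ω < T ω := by
        by_contra hCT
        push_neg at hCT
        rw [hDtdef ω, if_pos hCT] at hD0
        have := (hDrange ω).1; omega
      refine ⟨hCT, ?_⟩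
      rwa [hTtdef ω, min_eq_right hCT.le] at hmem
    · rintro ⟨hCT, hmem⟩
      constructor
      · rwa [hTtdef ω, min_eq_right hCT.le]
      · rw [hDtdef ω, if_neg (not_le.mpr hCT)]
  have hμTs : (∑ j ∈ Finset.Icc 1 d, μ j) = Measure.map T P := by
    refine Measure.ext fun B hB => ?_
    rw [Measure.finset_sum_apply, Measure.map_apply hT hB]
    have heach : ∀ j ∈ Finset.Icc 1 d,
        μ j B = P (T ⁻¹' B ∩ {ω | D ω = j}) := by
      intro j _
      rw [hμ j, Measure.map_apply hT hB, Measure.restrict_apply (hT hB)]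
    rw [Finset.sum_congr rfl heach]
    have hdis : (↑(Finset.Icc 1 d) : Set ℕ).PairwiseDisjoint
        (fun j => T ⁻¹' B ∩ {ω | D ω = j}) := by
      intro i _ j _ hij
      rw [Function.onFun, Set.disjoint_left]
      rintro ω ⟨-, hωi⟩ ⟨-, hωj⟩
      rw [mem_setOf_eq] at hωi hωj
      exact hij (hωi ▸ hωj ▸ rfl)
    rw [← measure_biUnion_finset hdis
      (fun j _ => (hT hB).inter (hD (measurableSet_singleton j)))]
    congr 1
    ext ω
    simp only [mem_iUnion, mem_inter_iff, mem_preimage, mem_setOf_eq, Finset.mem_Icc,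
      exists_prop]
    constructor
    · rintro ⟨j, _, hmem, _⟩; exact hmem
    · intro hmem
      exact ⟨D ω, ⟨(hDrange ω).1, (hDrange ω).2⟩, hmem, rfl⟩
  -- hazard measures
  set Λt1 : Measure ℝ := μts.withDensity (fun s => (fm s)⁻¹) with hΛt1def
  set Λ1 : Measure ℝ := (Measure.map T P).withDensity (fun s => (Sm s)⁻¹) with hΛ1def
  set Λt0 : Measure ℝ := (μt 0).withDensity (fun s => (f s)⁻¹) with hΛt0def
  set Λ0 : Measure ℝ := νC.withDensity (fun s => (Km s)⁻¹) with hΛ0def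
  have hfm_int : ∀ s : ℝ, (P {ω | s ≤ Tt ω})⁻¹ = (fm s)⁻¹ := by
    intro s; rw [hTtset' s]
  have hΛt1_Ioc : ∀ u : ℝ, Λt1 (Ioc 0 u) = ∑ j ∈ Finset.Icc 1 d, Ht j u := by
    intro u
    rw [hΛt1def, withDensity_apply _ measurableSet_Ioc, hμts,
      PI_restrict_finset_sum _ _ _ measurableSet_Ioc, lintegral_finset_sum_measure]
    refine Finset.sum_congr rfl fun j _ => ?_
    rw [hHt j u]
    exact (lintegral_congr fun s => (hfm_int s).symm)
  have hΛ1_Ioc : ∀ u : ℝ, Λ1 (Ioc 0 u) = ∑ j ∈ Finset.Icc 1 d, H j u := by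
    intro u
    rw [hΛ1def, withDensity_apply _ measurableSet_Ioc, ← hμTs,
      PI_restrict_finset_sum _ _ _ measurableSet_Ioc, lintegral_finset_sum_measure]
    exact Finset.sum_congr rfl fun j _ => (hH j u).symm
  have hΛt0_Ioc : ∀ u : ℝ, Λt0 (Ioc 0 u) = Hc0 u := by
    intro u
    rw [hΛt0def, withDensity_apply _ measurableSet_Ioc, hHc0 u]
  have hΛ0_Ioc : ∀ u : ℝ, Λ0 (Ioc 0 u) = H0 u := by
    intro u
    rw [hΛ0def, withDensity_apply _ measurableSet_Ioc, hH0 u]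
  -- finiteness of observed hazard measures on (0, t₀]
  have hμts_fin : μts (Ioc 0 t₀) ≠ ∞ := by
    rw [hμts_apply _ measurableSet_Ioc]; exact measure_ne_top P _
  have hμt0_fin : μt 0 (Ioc 0 t₀) ≠ ∞ := by
    rw [hμt0_apply _ measurableSet_Ioc]; exact measure_ne_top P _
  have hfin1 : Λt1 (Ioc 0 t₀) ≠ ∞ := by
    rw [hΛt1def, withDensity_apply _ measurableSet_Ioc]
    have hb1 : ∀ s ∈ Ioc (0:ℝ) t₀, (fm s)⁻¹ ≤ (fm t₀)⁻¹ := fun s hs =>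
      ENNReal.inv_le_inv.mpr (hfm_anti hs.2)
    refine ne_top_of_le_ne_top ?_ ((setLIntegral_mono measurable_const hb1).trans
      (le_of_eq (setLIntegral_const _ _)))
    exact ENNReal.mul_ne_top (ENNReal.inv_ne_top.mpr (posfm t₀ le_rfl).ne') hμts_fin
  have hfin0 : Λt0 (Ioc 0 t₀) ≠ ∞ := by
    rw [hΛt0def, withDensity_apply _ measurableSet_Ioc]
    have hb1 : ∀ s ∈ Ioc (0:ℝ) t₀, (f s)⁻¹ ≤ (f t₀)⁻¹ := fun s hs =>
      ENNReal.inv_le_inv.mpr (hf_anti hs.2)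
    refine ne_top_of_le_ne_top ?_ ((setLIntegral_mono measurable_const hb1).trans
      (le_of_eq (setLIntegral_const _ _)))
    exact ENNReal.mul_ne_top (ENNReal.inv_ne_top.mpr (posf t₀ le_rfl).ne') hμt0_fin
  -- measure identification from the hazard hypotheses
  have hR1 : Λt1.restrict (Ioc 0 t₀) = Λ1.restrict (Ioc 0 t₀) := by
    refine PI_ext ht₀0 hfin1 fun u hu0 hut => ?_
    rw [hΛt1_Ioc u, hΛ1_Ioc u]
    refine Finset.sum_congr rfl fun j hj => ?_
    obtain ⟨hj1, hj2⟩ := Finset.mem_Icc.mp hj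
    exact hident j hj1 hj2 u (hJmem u hu0 hut)
  have hR0 : Λt0.restrict (Ioc 0 t₀) = Λ0.restrict (Ioc 0 t₀) := by
    refine PI_ext ht₀0 hfin0 fun u hu0 hut => ?_
    rw [hΛt0_Ioc u, hΛ0_Ioc u]
    exact hcens u (hJmem u hu0 hut)
  set ρ1 : Measure ℝ := Λt1.restrict (Ioc 0 t₀) with hρ1def
  set ρ0 : Measure ℝ := Λt0.restrict (Ioc 0 t₀) with hρ0def
  haveI : IsFiniteMeasure ρ1 :=
    ⟨by rw [hρ1def, Measure.restrict_apply_univ]; exact lt_top_iff_ne_top.mpr hfin1⟩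
  haveI : IsFiniteMeasure ρ0 :=
    ⟨by rw [hρ0def, Measure.restrict_apply_univ]; exact lt_top_iff_ne_top.mpr hfin0⟩
  -- Equation A (observed data)
  have hrest1 : ∀ u, u ≤ t₀ → ∀ (g : ℝ → ℝ≥0∞),
      (∫⁻ s in Ioc 0 u, g s ∂ρ1) = ∫⁻ s in Ioc 0 u, g s ∂Λt1 := by
    intro u hut g
    rw [hρ1def, Measure.restrict_restrict measurableSet_Ioc,
      inter_eq_left.mpr (Ioc_subset_Ioc le_rfl hut)]
  have hrest0 : ∀ u, u ≤ t₀ → ∀ (g : ℝ → ℝ≥0∞),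
      (∫⁻ s in Ioo 0 u, g s ∂ρ0) = ∫⁻ s in Ioo 0 u, g s ∂Λt0 := by
    intro u hut g
    rw [hρ0def, Measure.restrict_restrict measurableSet_Ioo,
      inter_eq_left.mpr (Ioo_subset_Ioc_self.trans (Ioc_subset_Ioc le_rfl hut))]
  have eqA : ∀ u, 0 ≤ u → u ≤ t₀ →
      f u + ((∫⁻ s in Ioc 0 u, fm s ∂ρ1) + (∫⁻ s in Ioo 0 u, f s ∂ρ0)) = 1 := by
    intro u hu0 hut
    have base := PI_decomp P T C hT hC hTpos hCpos u
    have e1 : (∫⁻ s in Ioc 0 u, fm s ∂ρ1) = P {ω | T ω ≤ C ω ∧ T ω ∈ Ioc 0 u} := by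
      rw [hrest1 u hut, hΛt1def, restrict_withDensity measurableSet_Ioc,
        @lintegral_withDensity_eq_lintegral_mul _ _ _ (fun s => (fm s)⁻¹) hfm_meas.inv fm hfm_meas]
      have hcan : ∀ s ∈ Ioc (0:ℝ) u, ((fun s => (fm s)⁻¹) * fm) s = 1 := by
        intro s hs
        simp only [Pi.mul_apply]
        exact ENNReal.inv_mul_cancel (posfm s (hs.2.trans hut)).ne' (measure_ne_top _ _)
      rw [setLIntegral_congr_fun measurableSet_Ioc hcan, setLIntegral_one,
        hμts_apply _ measurableSet_Ioc]
    have e0 : (∫⁻ s in Ioo 0 u, f s ∂ρ0) = P {ω | C ω < T ω ∧ C ω ∈ Ioo 0 u} := by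
      rw [hrest0 u hut, hΛt0def, restrict_withDensity measurableSet_Ioo,
        @lintegral_withDensity_eq_lintegral_mul _ _ _ (fun s => (f s)⁻¹) hf_meas.inv f hf_meas]
      have hcan : ∀ s ∈ Ioo (0:ℝ) u, ((fun s => (f s)⁻¹) * f) s = 1 := by
        intro s hs
        simp only [Pi.mul_apply]
        exact ENNReal.inv_mul_cancel (posf s (hs.2.le.trans hut)).ne' (measure_ne_top _ _)
      rw [setLIntegral_congr_fun measurableSet_Ioo hcan, setLIntegral_one,
        hμt0_apply _ measurableSet_Ioo]
    rw [e1, e0]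
    exact base
  -- Equation B (hypothetical independent data)
  have eqB : ∀ u, 0 ≤ u → u ≤ t₀ →
      S u * Km u + ((∫⁻ s in Ioc 0 u, Sm s * Km s ∂ρ1)
        + (∫⁻ s in Ioo 0 u, S s * Km s ∂ρ0)) = 1 := by
    intro u hu0 hut
    set Q : Measure (Ω × Ω) := P.prod P with hQdef
    have hXm : Measurable (fun p : Ω × Ω => T p.1) := hT.comp measurable_fst
    have hYm : Measurable (fun p : Ω × Ω => C p.2) := hC.comp measurable_snd
    have hXpos : ∀ᵐ p ∂Q, 0 < T p.1 := by
      rw [ae_iff]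
      have hset : {p : Ω × Ω | ¬ 0 < T p.1} = {ω | ¬ 0 < T ω} ×ˢ (univ : Set Ω) := by
        ext p; simp [Set.mem_prod]
      rw [hset, hQdef, Measure.prod_prod]
      rw [ae_iff] at hTpos
      rw [hTpos, zero_mul]
    have hYpos : ∀ᵐ p ∂Q, 0 < C p.2 := by
      rw [ae_iff]
      have hset : {p : Ω × Ω | ¬ 0 < C p.2} = (univ : Set Ω) ×ˢ {ω | ¬ 0 < C ω} := by
        ext p; simp [Set.mem_prod]
      rw [hset, hQdef, Measure.prod_prod]
      rw [ae_iff] at hCpos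
      rw [hCpos, mul_zero]
    have base := PI_decomp Q (fun p => T p.1) (fun p => C p.2) hXm hYm hXpos hYpos u
    -- term 1
    have ht1 : Q {p : Ω × Ω | u < T p.1 ∧ u ≤ C p.2} = S u * Km u := by
      have hset : {p : Ω × Ω | u < T p.1 ∧ u ≤ C p.2}
          = {ω | u < T ω} ×ˢ {ω | u ≤ C ω} := by
        ext p; simp [Set.mem_prod]
      rw [hset, hQdef, Measure.prod_prod]
    -- term 2
    have hSmeas2 : MeasurableSet {p : Ω × Ω | T p.1 ≤ C p.2 ∧ T p.1 ∈ Ioc 0 u} :=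
      (measurableSet_le hXm hYm).inter (hXm measurableSet_Ioc)
    have ht2 : Q {p : Ω × Ω | T p.1 ≤ C p.2 ∧ T p.1 ∈ Ioc 0 u}
        = ∫⁻ s in Ioc 0 u, Km s ∂(Measure.map T P) := by
      rw [hQdef, Measure.prod_apply hSmeas2, setLIntegral_map measurableSet_Ioc hKm_meas hT,
        ← lintegral_indicator (hT measurableSet_Ioc)]
      refine lintegral_congr fun ω => ?_
      by_cases hω : T ω ∈ Ioc 0 u
      · rw [Set.indicator_of_mem (show ω ∈ T ⁻¹' Ioc 0 u from hω)]
        have hpre : (Prod.mk ω ⁻¹' {p : Ω × Ω | T p.1 ≤ C p.2 ∧ T p.1 ∈ Ioc 0 u})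
            = {ω' | T ω ≤ C ω'} := by
          ext ω'; simp only [mem_preimage, mem_setOf_eq, and_iff_left_iff_imp]
          exact fun _ => hω
        rw [hpre]
      · rw [Set.indicator_of_notMem (show ω ∉ T ⁻¹' Ioc 0 u from hω)]
        have hpre : (Prod.mk ω ⁻¹' {p : Ω × Ω | T p.1 ≤ C p.2 ∧ T p.1 ∈ Ioc 0 u}) = ∅ := by
          ext ω'
          simp only [mem_preimage, mem_setOf_eq, mem_empty_iff_false, iff_false, not_and]
          exact fun _ hmem => absurd hmem hω
        rw [hpre, measure_empty]
    have ht2' : (∫⁻ s in Ioc 0 u, Sm s * Km s ∂ρ1)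
        = ∫⁻ s in Ioc 0 u, Km s ∂(Measure.map T P) := by
      have hstep : (∫⁻ s in Ioc 0 u, Sm s * Km s ∂ρ1)
          = ∫⁻ s in Ioc 0 u, Sm s * Km s ∂(Λ1.restrict (Ioc 0 t₀)) := by
        rw [hR1]
      rw [hstep, Measure.restrict_restrict measurableSet_Ioc,
        inter_eq_left.mpr (Ioc_subset_Ioc le_rfl hut), hΛ1def,
        restrict_withDensity measurableSet_Ioc,
        @lintegral_withDensity_eq_lintegral_mul _ _ _ (fun s => (Sm s)⁻¹) hSm_meas.inv
          (fun s => Sm s * Km s) (hSm_meas.mul hKm_meas)]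
      refine setLIntegral_congr_fun measurableSet_Ioc (fun s hs => ?_)
      simp only [Pi.mul_apply]
      rw [← mul_assoc, ENNReal.inv_mul_cancel (posSm s (hs.2.trans hut)).ne'
        (measure_ne_top _ _), one_mul]
    -- term 3
    have hSmeas3 : MeasurableSet {p : Ω × Ω | C p.2 < T p.1 ∧ C p.2 ∈ Ioo 0 u} :=
      (measurableSet_lt hYm hXm).inter (hYm measurableSet_Ioo)
    have ht3 : Q {p : Ω × Ω | C p.2 < T p.1 ∧ C p.2 ∈ Ioo 0 u}
        = ∫⁻ s in Ioo 0 u, S s ∂νC := by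
      rw [hνC, hQdef, Measure.prod_apply_symm hSmeas3,
        setLIntegral_map measurableSet_Ioo hS_meas hC,
        ← lintegral_indicator (hC measurableSet_Ioo)]
      refine lintegral_congr fun ω' => ?_
      by_cases hω : C ω' ∈ Ioo 0 u
      · rw [Set.indicator_of_mem (show ω' ∈ C ⁻¹' Ioo 0 u from hω)]
        have hpre : ((fun ω => (ω, ω')) ⁻¹' {p : Ω × Ω | C p.2 < T p.1 ∧ C p.2 ∈ Ioo 0 u})
            = {ω | C ω' < T ω} := by
          ext ω; simp only [mem_preimage, mem_setOf_eq, and_iff_left_iff_imp]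
          exact fun _ => hω
        rw [hpre]
      · rw [Set.indicator_of_notMem (show ω' ∉ C ⁻¹' Ioo 0 u from hω)]
        have hpre : ((fun ω => (ω, ω')) ⁻¹' {p : Ω × Ω | C p.2 < T p.1 ∧ C p.2 ∈ Ioo 0 u}) = ∅ := by
          ext ω
          simp only [mem_preimage, mem_setOf_eq, mem_empty_iff_false, iff_false, not_and]
          exact fun _ hmem => absurd hmem hω
        rw [hpre, measure_empty]
    have ht3' : (∫⁻ s in Ioo 0 u, S s * Km s ∂ρ0) = ∫⁻ s in Ioo 0 u, S s ∂νC := by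
      have hstep : (∫⁻ s in Ioo 0 u, S s * Km s ∂ρ0)
          = ∫⁻ s in Ioo 0 u, S s * Km s ∂(Λ0.restrict (Ioc 0 t₀)) := by
        rw [hR0]
      rw [hstep, Measure.restrict_restrict measurableSet_Ioo,
        inter_eq_left.mpr (Ioo_subset_Ioc_self.trans (Ioc_subset_Ioc le_rfl hut)), hΛ0def,
        restrict_withDensity measurableSet_Ioo,
        @lintegral_withDensity_eq_lintegral_mul _ _ _ (fun s => (Km s)⁻¹) hKm_meas.inv
          (fun s => S s * Km s) (hS_meas.mul hKm_meas)]
      refine setLIntegral_congr_fun measurableSet_Ioo (fun s hs => ?_)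
      simp only [Pi.mul_apply]
      rw [show (Km s)⁻¹ * (S s * Km s) = S s * ((Km s)⁻¹ * Km s) by ring,
        ENNReal.inv_mul_cancel (posKm s (hs.2.le.trans hut)).ne' (measure_ne_top _ _), mul_one]
    rw [ht1, ht2, ht3] at base
    rw [ht2', ht3']
    exact base
  -- Gronwall comparison
  set g : ℝ → ℝ≥0∞ := fun s => S s * Km s with hgdef
  set hh : ℝ → ℝ≥0∞ := fun s => max (f s - g s) (g s - f s) with hhdef
  set hhm : ℝ → ℝ≥0∞ := fun s => max (fm s - Sm s * Km s) (Sm s * Km s - fm s) with hhmdef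
  have hhb : ∀ s, hh s ≤ 1 := fun s => max_le (le_trans tsub_le_self prob_le_one)
    (le_trans tsub_le_self (le_trans (mul_le_mul' prob_le_one prob_le_one) (by norm_num)))
  have hf0 : f 0 = 1 := PI_prob_eq_one P (by
    filter_upwards [hTpos, hCpos] with ω h1 h2
    exact ⟨h1, h2.le⟩)
  have hS0 : S 0 = 1 := PI_prob_eq_one P (hTpos.mono fun ω h1 => h1)
  have hKm0 : Km 0 = 1 := PI_prob_eq_one P (hCpos.mono fun ω h1 => h1.le)
  have hg0 : g 0 = 1 := by rw [hgdef]; dsimp only; rw [hS0, hKm0, mul_one]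
  have hh0 : hh 0 = 0 := by
    rw [hhdef]; dsimp only; rw [hf0, hg0]; simp
  have hheq : ∀ u, 0 ≤ u → u ≤ t₀ →
      hh u ≤ (∫⁻ s in Ioc 0 u, hhm s ∂ρ1) + ∫⁻ s in Ioo 0 u, hh s ∂ρ0 := by
    intro u hu0 hut
    have hA := eqA u hu0 hut
    have hB := eqB u hu0 hut
    refine max_le ?_ ?_
    · refine le_trans (PI_sub_le hA hB) (add_le_add ?_ ?_)
      · refine le_trans (PI_lintegral_sub_le _ hfm_meas) (lintegral_mono fun s => ?_)
        exact le_max_right _ _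
      · refine le_trans (PI_lintegral_sub_le _ hf_meas) (lintegral_mono fun s => ?_)
        exact le_max_right _ _
    · refine le_trans (PI_sub_le hB hA) (add_le_add ?_ ?_)
      · refine le_trans (PI_lintegral_sub_le _ (hSm_meas.mul hKm_meas))
          (lintegral_mono fun s => ?_)
        exact le_max_left _ _
      · refine le_trans (PI_lintegral_sub_le _ (hS_meas.mul hKm_meas))
          (lintegral_mono fun s => ?_)
        exact le_max_left _ _
  have hhlim : ∀ s, 0 < s → s ≤ t₀ → ∀ c, 0 ≤ c → c < s → hhm s ≤ ⨆ u ∈ Ioo c s, hh u := by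
    intro s hs0 hst c hc0 hcs
    set v : ℕ → ℝ := fun n => s - (s - c) / ((n:ℝ) + 1) with hvdef
    have hsc : 0 < s - c := sub_pos.mpr hcs
    have hvlt : ∀ n, v n < s := by
      intro n
      have h1 : 0 < (s - c) / ((n:ℝ) + 1) := by positivity
      rw [hvdef]; dsimp only; linarith
    have hvmono : Monotone v := by
      intro n m hnm
      have h1 : (n:ℝ) ≤ (m:ℝ) := Nat.cast_le.mpr hnm
      have h3 : (s - c) / ((m:ℝ) + 1) ≤ (s - c) / ((n:ℝ) + 1) := by
        apply div_le_div_of_nonneg_left hsc.le (by positivity)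
        linarith
      rw [hvdef]; dsimp only; linarith
    have hvtend : Tendsto v atTop (𝓝 s) := by
      have h1 : Tendsto (fun n : ℕ => (s - c) * (1 / ((n:ℝ) + 1))) atTop (𝓝 ((s - c) * 0)) :=
        tendsto_const_nhds.mul tendsto_one_div_add_atTop_nhds_zero_nat
      rw [mul_zero] at h1
      have h2 : Tendsto (fun n : ℕ => s - (s - c) * (1 / ((n:ℝ) + 1))) atTop (𝓝 (s - 0)) :=
        tendsto_const_nhds.sub h1
      rw [sub_zero] at h2
      have h3 : v = fun n : ℕ => s - (s - c) * (1 / ((n:ℝ) + 1)) := by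
        funext n; rw [hvdef]; dsimp only; rw [mul_one_div]
      rw [h3]; exact h2
    have htend1 : Tendsto (fun n => P {ω | v n < T ω ∧ v n ≤ C ω}) atTop (𝓝 (fm s)) := by
      have hiA : (⋂ n, {ω | v n < T ω ∧ v n ≤ C ω}) = {ω | s ≤ T ω ∧ s ≤ C ω} := by
        ext ω
        simp only [mem_iInter, mem_setOf_eq]
        constructor
        · intro hn
          exact ⟨le_of_tendsto hvtend (Eventually.of_forall fun n => (hn n).1.le),
            le_of_tendsto hvtend (Eventually.of_forall fun n => (hn n).2)⟩
        · intro hs n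
          exact ⟨lt_of_lt_of_le (hvlt n) hs.1, (hvlt n).le.trans hs.2⟩
      have h1 := tendsto_measure_iInter_atTop (μ := P)
        (s := fun n => {ω | v n < T ω ∧ v n ≤ C ω})
        (fun n => ((measurableSet_lt measurable_const hT).inter
          (measurableSet_le measurable_const hC)).nullMeasurableSet)
        (fun n m hnm ω hω => ⟨lt_of_le_of_lt (hvmono hnm) hω.1, (hvmono hnm).trans hω.2⟩)
        ⟨0, measure_ne_top _ _⟩
      rw [hiA] at h1
      exact h1
    have htend2 : Tendsto (fun n => P {ω | v n < T ω}) atTop (𝓝 (Sm s)) := by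
      have hiA : (⋂ n, {ω | v n < T ω}) = {ω | s ≤ T ω} := by
        ext ω
        simp only [mem_iInter, mem_setOf_eq]
        constructor
        · intro hn
          exact le_of_tendsto hvtend (Eventually.of_forall fun n => (hn n).le)
        · intro hs n
          exact lt_of_lt_of_le (hvlt n) hs
      have h1 := tendsto_measure_iInter_atTop (μ := P)
        (s := fun n => {ω | v n < T ω})
        (fun n => (measurableSet_lt measurable_const hT).nullMeasurableSet)
        (fun n m hnm ω hω => lt_of_le_of_lt (hvmono hnm) hω)
        ⟨0, measure_ne_top _ _⟩
      rw [hiA] at h1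
      exact h1
    have htend3 : Tendsto (fun n => P {ω | v n ≤ C ω}) atTop (𝓝 (Km s)) := by
      have hiA : (⋂ n, {ω | v n ≤ C ω}) = {ω | s ≤ C ω} := by
        ext ω
        simp only [mem_iInter, mem_setOf_eq]
        constructor
        · intro hn
          exact le_of_tendsto hvtend (Eventually.of_forall fun n => hn n)
        · intro hs n
          exact (hvlt n).le.trans hs
      have h1 := tendsto_measure_iInter_atTop (μ := P)
        (s := fun n => {ω | v n ≤ C ω})
        (fun n => (measurableSet_le measurable_const hC).nullMeasurableSet)
        (fun n m hnm ω hω => (hvmono hnm).trans hω)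
        ⟨0, measure_ne_top _ _⟩
      rw [hiA] at h1
      exact h1
    have htendg : Tendsto (fun n => P {ω | v n < T ω} * P {ω | v n ≤ C ω}) atTop
        (𝓝 (Sm s * Km s)) :=
      ENNReal.Tendsto.mul htend2 (Or.inr (measure_ne_top _ _)) htend3
        (Or.inr (measure_ne_top _ _))
    have htendh : Tendsto (fun n => hh (v n)) atTop (𝓝 (hhm s)) := by
      have hsub1 := ENNReal.Tendsto.sub htend1 htendg (Or.inl (measure_ne_top _ _))
      have hsub2 := ENNReal.Tendsto.sub htendg htend1 (Or.inr (measure_ne_top _ _))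
      exact hsub1.max hsub2
    refine le_of_tendsto htendh ?_
    have hev : ∀ᶠ n : ℕ in atTop, v n ∈ Ioo c s := by
      rw [eventually_atTop]
      refine ⟨1, fun n hn => ?_⟩
      refine ⟨?_, hvlt n⟩
      have h2 : (s - c) / ((n:ℝ) + 1) < s - c := by
        rw [div_lt_iff₀ (by positivity)]
        have h3 : (1:ℝ) ≤ (n:ℝ) := Nat.one_le_cast.mpr hn
        nlinarith
      rw [hvdef]; dsimp only; linarith
    filter_upwards [hev] with n hn
    exact le_iSup₂ (f := fun u _ => hh u) (v n) hn
  have hzero := PI_gronwall ρ1 ρ0 hh hhm hhb t₀ ht₀0 hh0 hhlim hheq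
  have hfg : ∀ u, 0 ≤ u → u ≤ t₀ → f u = g u := by
    intro u hu0 hut
    have h1 := hzero u hu0 hut
    have h2 : f u - g u = 0 := le_antisymm (le_trans (le_max_left _ _) h1.le) zero_le
    have h3 : g u - f u = 0 := le_antisymm (le_trans (le_max_right _ _) h1.le) zero_le
    exact le_antisymm (tsub_eq_zero_iff_le.mp h2) (tsub_eq_zero_iff_le.mp h3)
  refine ⟨?_, hfg t₀ ht₀0 le_rfl⟩
  rcases eq_or_lt_of_le ht₀0 with ht0eq | ht0lt
  · have e1 : P {ω | t₀ < Tt ω} = 1 := by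
      refine PI_prob_eq_one P ?_
      filter_upwards [hTpos, hCpos] with ω h1 h2
      show t₀ < Tt ω
      rw [hTtdef ω, ← ht0eq]
      exact lt_min h1 h2
    have e2 : P {ω | t₀ < T ω} = 1 := PI_prob_eq_one P (by
      filter_upwards [hTpos] with ω h1
      show t₀ < T ω
      rw [← ht0eq]; exact h1)
    have e3 : P {ω | t₀ < C ω} = 1 := PI_prob_eq_one P (by
      filter_upwards [hCpos] with ω h1
      show t₀ < C ω
      rw [← ht0eq]; exact h1)
    rw [e1, e2, e3, one_mul]
  · -- singleton / atom correction step
    have hsing : Λt0 {t₀} = Λ0 {t₀} := by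
      have h1 : ρ0 {t₀} = (Λ0.restrict (Ioc 0 t₀)) {t₀} := by rw [hR0]
      rwa [hρ0def, Measure.restrict_apply (measurableSet_singleton _),
        Measure.restrict_apply (measurableSet_singleton _),
        inter_eq_left.mpr (singleton_subset_iff.mpr (mem_Ioc.mpr ⟨ht0lt, le_rfl⟩))] at h1
    rw [hΛt0def, withDensity_apply _ (measurableSet_singleton _), lintegral_singleton,
      hΛ0def, withDensity_apply _ (measurableSet_singleton _), lintegral_singleton] at hsing
    have hμt0s : μt 0 {t₀} = P {ω | t₀ < T ω ∧ C ω = t₀} := by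
      rw [hμt0_apply _ (measurableSet_singleton _)]
      congr 1
      ext ω
      simp only [mem_setOf_eq, mem_singleton_iff]
      constructor
      · rintro ⟨h1, h2⟩
        refine ⟨?_, h2⟩
        rw [← h2]; exact h1
      · rintro ⟨h1, h2⟩
        refine ⟨?_, h2⟩
        rw [h2]; exact h1
    have hνCs : νC {t₀} = P {ω | C ω = t₀} := by
      rw [hνC, Measure.map_apply hC (measurableSet_singleton _)]
      rfl
    have hft : f t₀ = S t₀ * Km t₀ := hfg t₀ ht₀0 le_rfl
    rw [hμt0s, hνCs] at hsing
    have hkey : P {ω | t₀ < T ω ∧ C ω = t₀} = S t₀ * P {ω | C ω = t₀} := by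
      have h2 : P {ω | t₀ < T ω ∧ C ω = t₀}
          = f t₀ * ((Km t₀)⁻¹ * P {ω | C ω = t₀}) := by
        rw [← hsing, ← mul_assoc,
          ENNReal.mul_inv_cancel (posf t₀ le_rfl).ne' (measure_ne_top _ _), one_mul]
      rw [h2, hft,
        show S t₀ * Km t₀ * ((Km t₀)⁻¹ * P {ω | C ω = t₀})
          = S t₀ * (Km t₀ * (Km t₀)⁻¹) * P {ω | C ω = t₀} by ring,
        ENNReal.mul_inv_cancel (posKm t₀ le_rfl).ne' (measure_ne_top _ _), mul_one]
    have hdec1 : P {ω | t₀ < T ω ∧ t₀ ≤ C ω}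
        = P {ω | t₀ < T ω ∧ t₀ < C ω} + P {ω | t₀ < T ω ∧ C ω = t₀} := by
      have hdisj : Disjoint {ω | t₀ < T ω ∧ t₀ < C ω} {ω | t₀ < T ω ∧ C ω = t₀} := by
        rw [Set.disjoint_left]
        rintro ω ⟨-, h2⟩ ⟨-, h3⟩
        rw [h3] at h2
        exact lt_irrefl t₀ h2
      rw [← measure_union hdisj
        ((measurableSet_lt measurable_const hT).inter (hC (measurableSet_singleton _)))]
      congr 1
      ext ω
      simp only [mem_union, mem_setOf_eq]
      constructor
      · rintro ⟨h1, h2⟩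
        rcases lt_or_eq_of_le h2 with h3 | h3
        · exact Or.inl ⟨h1, h3⟩
        · exact Or.inr ⟨h1, h3.symm⟩
      · rintro (⟨h1, h2⟩ | ⟨h1, h2⟩)
        · exact ⟨h1, h2.le⟩
        · exact ⟨h1, h2.ge⟩
    have hdec2 : P {ω | t₀ ≤ C ω} = P {ω | t₀ < C ω} + P {ω | C ω = t₀} := by
      have hdisj : Disjoint {ω | t₀ < C ω} {ω | C ω = t₀} := by
        rw [Set.disjoint_left]
        rintro ω h2 h3
        rw [mem_setOf_eq] at h2 h3
        rw [h3] at h2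
        exact lt_irrefl t₀ h2
      have h4 : {ω | t₀ ≤ C ω} = {ω | t₀ < C ω} ∪ {ω | C ω = t₀} := by
        ext ω
        simp only [mem_union, mem_setOf_eq]
        constructor
        · intro h1
          rcases lt_or_eq_of_le h1 with h3 | h3
          · exact Or.inl h3
          · exact Or.inr h3.symm
        · rintro (h1 | h1)
          · exact h1.le
          · exact h1.ge
      rw [h4, measure_union hdisj (hC (measurableSet_singleton _))]
    have hft' : P {ω | t₀ < T ω ∧ t₀ ≤ C ω} = P {ω | t₀ < T ω} * P {ω | t₀ ≤ C ω} := hft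
    have hkey' : P {ω | t₀ < T ω ∧ C ω = t₀}
        = P {ω | t₀ < T ω} * P {ω | C ω = t₀} := hkey
    have hcomb : P {ω | t₀ < T ω ∧ t₀ < C ω} + P {ω | t₀ < T ω} * P {ω | C ω = t₀}
        = P {ω | t₀ < T ω} * P {ω | t₀ < C ω}
          + P {ω | t₀ < T ω} * P {ω | C ω = t₀} := by
      conv_lhs => rw [← hkey', ← hdec1, hft', hdec2]
      rw [mul_add]
    have hconc : P {ω | t₀ < T ω ∧ t₀ < C ω}
        = P {ω | t₀ < T ω} * P {ω | t₀ < C ω} :=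
      (ENNReal.add_left_inj (ENNReal.mul_ne_top (measure_ne_top _ _)
        (measure_ne_top _ _))).mp hcomb
    rw [hTtset t₀]
    exact hconc

end PIMain
end

section
/- For all t ∈ 𝒥, the identity P(T̃ < t | T ≥ t) = B(t) + ∫_{[0,t)} (S̃(s−)/S(s)) ν̃(ds) − ∫_{[0,t)} (S̃(s−)/S(s)) ν(ds) holds, where B(t) = ∫_{[0,t)} S(s)^{-1} μ̃₀(ds), ν̃ is the Borel measure ν̃(A) = Σ_{j=1}^d ∫_A S̃(s−)^{-1} μ̃_j(ds) (the observed all-cause hazard measure), and ν is the Borel measure ν(A) = Σ_{j=1}^d ∫_A S(s−)^{-1} μ_j(ds) (the underlying all-cause hazard measure). (The conditional probability is well defined since P(T ≥ t) ≥ S̃(t) > 0 for t ∈ 𝒥, and all integrals are finite.) -/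
open MeasureTheory Set ENNReal


lemma meas_rho_Iio (ρ : Measure ℝ) : Measurable fun u : ℝ => ρ (Iio u) := by
  have h : Monotone fun u : ℝ => ρ (Iio u) := fun a b h => measure_mono (Iio_subset_Iio h)
  exact h.measurable

lemma meas_rho_Iic (ρ : Measure ℝ) : Measurable fun u : ℝ => ρ (Iic u) := by
  have h : Monotone fun u : ℝ => ρ (Iic u) := fun a b h => measure_mono (Iic_subset_Iic.mpr h)
  exact h.measurable

lemma meas_rho_Ici (ρ : Measure ℝ) : Measurable fun u : ℝ => ρ (Ici u) := by
  have h : Antitone fun u : ℝ => ρ (Ici u) := fun a b h => measure_mono (Ici_subset_Ici.mpr h)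
  exact h.measurable

lemma meas_rho_Ioi (ρ : Measure ℝ) : Measurable fun u : ℝ => ρ (Ioi u) := by
  have h : Antitone fun u : ℝ => ρ (Ioi u) := fun a b h => measure_mono (Ioi_subset_Ioi h)
  exact h.measurable

/-- The summand in the core lemma. -/
noncomputable def sig (ρ : Measure ℝ) (n : ℕ) (u : ℝ) : ℝ≥0∞ :=
  ∑ p ∈ Finset.HasAntidiagonal.antidiagonal n, ρ (Iio u) ^ p.1 * ρ (Iic u) ^ p.2

lemma meas_sig (ρ : Measure ℝ) (n : ℕ) : Measurable (sig ρ n) := by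
  unfold sig
  exact Finset.measurable_sum _ fun p _ =>
    ((meas_rho_Iio ρ).pow_const _).mul ((meas_rho_Iic ρ).pow_const _)

/-- Core Stieltjes-type identity, proved by induction on `n`. -/
lemma core : ∀ (n : ℕ) (ρ : Measure ℝ) [IsFiniteMeasure ρ],
    ∫⁻ u, sig ρ n u ∂ρ = ρ univ ^ (n + 1) := by
  intro n
  induction n with
  | zero =>
    intro ρ _
    simp [sig]
  | succ n ih =>
    intro ρ _
    -- sig ρ (n+1) u = ρ(Iio u)^(n+1) + ρ(Iic u) * sig ρ n u
    have hsig : ∀ u, sig ρ (n+1) u = ρ (Iio u) ^ (n+1) + ρ (Iic u) * sig ρ n u := by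
      intro u
      unfold sig
      rw [Finset.Nat.antidiagonal_succ', Finset.sum_cons, Finset.sum_map, Finset.mul_sum]
      simp [pow_succ, mul_comm, mul_assoc, mul_left_comm]
    -- key swap identity
    have hkey : ∫⁻ u, ρ (Ioi u) * sig ρ n u ∂ρ = ∫⁻ u, ρ (Iio u) ^ (n+1) ∂ρ := by
      set G : ℝ × ℝ → ℝ≥0∞ := fun p => ({p : ℝ × ℝ | p.1 < p.2}).indicator (fun p => sig ρ n p.1) p with hG
      have hGmeas : Measurable G :=
        ((meas_sig ρ n).comp measurable_fst).indicator (measurableSet_lt measurable_fst measurable_snd)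
      have h1 : ∀ u, ∫⁻ v, G (u, v) ∂ρ = ρ (Ioi u) * sig ρ n u := by
        intro u
        have : ∀ v, G (u, v) = (Ioi u).indicator (fun _ => sig ρ n u) v := by
          intro v
          by_cases h : u < v <;> simp [hG, Set.indicator, h]
        simp_rw [this]
        rw [lintegral_indicator_const measurableSet_Ioi, mul_comm]
      have h2 : ∀ v, ∫⁻ u, G (u, v) ∂ρ = ρ (Iio v) ^ (n+1) := by
        intro v
        have hv : ∀ u, G (u, v) = (Iio v).indicator (sig ρ n) u := by
          intro u
          by_cases h : u < v <;> simp [hG, Set.indicator, h]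
        simp_rw [hv]
        rw [lintegral_indicator measurableSet_Iio]
        -- now apply ih to ρ.restrict (Iio v)
        have hres : ∫⁻ u in Iio v, sig ρ n u ∂ρ = ∫⁻ u in Iio v, sig (ρ.restrict (Iio v)) n u ∂ρ := by
          refine setLIntegral_congr_fun measurableSet_Iio (fun u hu => ?_)
          unfold sig
          refine Finset.sum_congr rfl fun p _ => ?_
          rw [Measure.restrict_apply measurableSet_Iio, Measure.restrict_apply measurableSet_Iic,
            Set.inter_eq_self_of_subset_left (Iio_subset_Iio (le_of_lt hu)),
            Set.inter_eq_self_of_subset_left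
              (show Iic u ⊆ Iio v from fun x hx => mem_Iio.mpr (lt_of_le_of_lt hx (mem_Iio.mp hu)))]
        rw [hres]
        have := ih (ρ.restrict (Iio v))
        rw [show ∫⁻ u in Iio v, sig (ρ.restrict (Iio v)) n u ∂ρ
              = ∫⁻ u, sig (ρ.restrict (Iio v)) n u ∂(ρ.restrict (Iio v)) from rfl, this,
          Measure.restrict_apply_univ]
      calc ∫⁻ u, ρ (Ioi u) * sig ρ n u ∂ρ = ∫⁻ u, ∫⁻ v, G (u, v) ∂ρ ∂ρ := by simp_rw [h1]
        _ = ∫⁻ v, ∫⁻ u, G (u, v) ∂ρ ∂ρ := by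
            refine lintegral_lintegral_swap ?_
            exact (hGmeas.comp measurable_id).aemeasurable
        _ = ∫⁻ v, ρ (Iio v) ^ (n+1) ∂ρ := by simp_rw [h2]
    have hsplit : ∀ u, ρ univ * sig ρ n u = ρ (Iic u) * sig ρ n u + ρ (Ioi u) * sig ρ n u := by
      intro u
      rw [← add_mul]
      congr 1
      rw [← measure_union (by simp [disjoint_left]) measurableSet_Ioi, Iic_union_Ioi]
    calc ∫⁻ u, sig ρ (n+1) u ∂ρ
        = ∫⁻ u, ρ (Iio u) ^ (n+1) + ρ (Iic u) * sig ρ n u ∂ρ := by simp_rw [hsig]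
      _ = (∫⁻ u, ρ (Iio u) ^ (n+1) ∂ρ) + ∫⁻ u, ρ (Iic u) * sig ρ n u ∂ρ :=
          lintegral_add_left ((meas_rho_Iio ρ).pow_const _) _
      _ = (∫⁻ u, ρ (Ioi u) * sig ρ n u ∂ρ) + ∫⁻ u, ρ (Iic u) * sig ρ n u ∂ρ := by rw [hkey]
      _ = ∫⁻ u, ρ (Iic u) * sig ρ n u + ρ (Ioi u) * sig ρ n u ∂ρ := by
          rw [add_comm]
          exact (lintegral_add_left ((meas_rho_Iic ρ).mul (meas_sig ρ n)) _).symm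
      _ = ∫⁻ u, ρ univ * sig ρ n u ∂ρ := by simp_rw [← hsplit]
      _ = ρ univ * ∫⁻ u, sig ρ n u ∂ρ := lintegral_const_mul _ (meas_sig ρ n)
      _ = ρ univ * ρ univ ^ (n + 1) := by rw [ih ρ]
      _ = ρ univ ^ (n + 1 + 1) := by ring

section Helpers

variable {α : Type*} [MeasurableSpace α]

lemma meas_mono_ae' {μ : Measure α} {s t : Set α} (h : ∀ᵐ x ∂μ, x ∈ s → x ∈ t) :
    μ s ≤ μ t :=
  measure_mono_ae (ae_le_set.mpr (measure_eq_zero_iff_ae_notMem.mpr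
    (h.mono fun x hx hmem => hmem.2 (hx hmem.1))))

lemma restrict_finsum {ι : Type*} (s : Finset ι) (μ : ι → Measure α) (A : Set α) :
    (∑ i ∈ s, μ i).restrict A = ∑ i ∈ s, (μ i).restrict A := by
  classical
  refine Finset.induction_on s (by simp) (fun a s ha ih => ?_)
  simp [Finset.sum_insert ha, Measure.restrict_add, ih]

lemma map_decomp {Ω : Type*} [MeasurableSpace Ω] (P : Measure Ω) (X : Ω → ℝ)
    (hX : Measurable X) (Dd : Ω → ℕ) (hDd : Measurable Dd) (d0 d1 : ℕ)
    (hrange : ∀ ω, d0 ≤ Dd ω ∧ Dd ω ≤ d1) :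
    Measure.map X P = ∑ j ∈ Finset.Icc d0 d1, Measure.map X (P.restrict {ω | Dd ω = j}) := by
  refine Measure.ext fun A hA => ?_
  rw [Measure.map_apply hX hA, Measure.finset_sum_apply]
  have hterm : ∀ j, Measure.map X (P.restrict {ω | Dd ω = j}) A = P (X ⁻¹' A ∩ {ω | Dd ω = j}) := by
    intro j
    rw [Measure.map_apply hX hA, Measure.restrict_apply (hX hA)]
  simp_rw [hterm]
  rw [← measure_biUnion_finset ?_ ?_]
  · congr 1
    ext ω
    simp only [Set.mem_iUnion, Set.mem_inter_iff, Set.mem_setOf_eq, Finset.mem_Icc]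
    constructor
    · intro h; exact ⟨Dd ω, hrange ω, h, rfl⟩
    · rintro ⟨j, -, h, -⟩; exact h
  · intro i hi j hj hij
    simp only [Function.onFun, Set.disjoint_left]
    rintro ω ⟨-, h1⟩ ⟨-, h2⟩
    exact hij (h1 ▸ h2 ▸ rfl)
  · intro j _
    exact (hX hA).inter (hDd (measurableSet_singleton j))

lemma prob_inv_compl (μ : Measure ℝ) [IsProbabilityMeasure μ] {A : Set ℝ}
    (hA : MeasurableSet A) : (μ Aᶜ)⁻¹ = ∑' n : ℕ, μ A ^ n := by
  rw [ENNReal.tsum_geometric, prob_compl_eq_one_sub hA]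

lemma tsum_pow_mul_tsum_pow (a b : ℝ≥0∞) :
    (∑' k : ℕ, a ^ k) * ∑' l : ℕ, b ^ l
      = ∑' n : ℕ, ∑ p ∈ Finset.HasAntidiagonal.antidiagonal n, a ^ p.1 * b ^ p.2 := by
  calc (∑' k : ℕ, a ^ k) * ∑' l : ℕ, b ^ l
      = ∑' k : ℕ, a ^ k * ∑' l : ℕ, b ^ l := ENNReal.tsum_mul_right.symm
    _ = ∑' (k : ℕ) (l : ℕ), a ^ k * b ^ l := by
        refine tsum_congr fun k => ?_; exact ENNReal.tsum_mul_left.symm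
    _ = ∑' p : ℕ × ℕ, a ^ p.1 * b ^ p.2 := (ENNReal.tsum_prod (f := fun k l => a ^ k * b ^ l)).symm
    _ = ∑' x : Σ n : ℕ, {p : ℕ × ℕ // p ∈ Finset.HasAntidiagonal.antidiagonal n},
          a ^ ((Finset.HasAntidiagonal.sigmaAntidiagonalEquivProd x).1) * b ^ ((Finset.HasAntidiagonal.sigmaAntidiagonalEquivProd x).2) :=
        (Finset.HasAntidiagonal.sigmaAntidiagonalEquivProd.tsum_eq (fun p : ℕ × ℕ => a ^ p.1 * b ^ p.2)).symm
    _ = ∑' (n : ℕ) (p : {p : ℕ × ℕ // p ∈ Finset.HasAntidiagonal.antidiagonal n}), a ^ (p : ℕ × ℕ).1 * b ^ (p : ℕ × ℕ).2 :=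
        ENNReal.tsum_sigma' _
    _ = ∑' n : ℕ, ∑ p ∈ Finset.HasAntidiagonal.antidiagonal n, a ^ p.1 * b ^ p.2 := by
        refine tsum_congr fun n => ?_
        exact Finset.tsum_subtype (Finset.HasAntidiagonal.antidiagonal n) (fun p : ℕ × ℕ => a ^ p.1 * b ^ p.2)

lemma bound_fin (m : Measure ℝ) [IsFiniteMeasure m] {A : Set ℝ} (hA : MeasurableSet A)
    (f : ℝ → ℝ≥0∞) (C : ℝ≥0∞) (hC : C ≠ ∞) (h : ∀ s ∈ A, f s ≤ C) :
    ∫⁻ s in A, f s ∂m ≠ ∞ := by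
  refine ne_of_lt (lt_of_le_of_lt (lintegral_mono_ae ((ae_restrict_iff' hA).mpr (ae_of_all _ h))) ?_)
  rw [setLIntegral_const]
  exact ENNReal.mul_lt_top hC.lt_top (measure_lt_top _ _)

end Helpers

lemma pern (Q Qt : Measure ℝ) [IsFiniteMeasure Q] [IsFiniteMeasure Qt] (t : ℝ) (n : ℕ) :
    ∫⁻ y, Q (Iic y ∩ Iio t) ^ (n + 1) ∂Qt = ∫⁻ u in Iio t, sig Q n u * Qt (Ici u) ∂Q := by
  set F : ℝ × ℝ → ℝ≥0∞ :=
    fun p => ({q : ℝ × ℝ | q.2 ≤ q.1} ∩ {q : ℝ × ℝ | q.2 < t}).indicator (fun q => sig Q n q.2) p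
    with hF
  have hFmeas : Measurable F :=
    ((meas_sig Q n).comp measurable_snd).indicator
      ((measurableSet_le measurable_snd measurable_fst).inter (measurable_snd measurableSet_Iio))
  have h1 : ∀ y, Q (Iic y ∩ Iio t) ^ (n + 1) = ∫⁻ u, F (y, u) ∂Q := by
    intro y
    have hind : ∀ u, F (y, u) = (Iic y ∩ Iio t).indicator (sig Q n) u := by
      intro u
      by_cases h1 : u ≤ y <;> by_cases h2 : u < t <;>
        simp [hF, Set.indicator_apply, h1, h2, Set.mem_Iic, Set.mem_Iio]
    simp_rw [hind]
    rw [lintegral_indicator (measurableSet_Iic.inter measurableSet_Iio)]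
    have hres : ∫⁻ u in Iic y ∩ Iio t, sig Q n u ∂Q
        = ∫⁻ u, sig (Q.restrict (Iic y ∩ Iio t)) n u ∂(Q.restrict (Iic y ∩ Iio t)) := by
      refine setLIntegral_congr_fun (measurableSet_Iic.inter measurableSet_Iio)
        (fun u hu => ?_)
      unfold sig
      refine Finset.sum_congr rfl fun p _ => ?_
      rw [Measure.restrict_apply measurableSet_Iio, Measure.restrict_apply measurableSet_Iic,
        Set.inter_eq_self_of_subset_left
          (show Iio u ⊆ Iic y ∩ Iio t from fun x hx =>
            ⟨mem_Iic.mpr (le_trans (le_of_lt hx) hu.1), mem_Iio.mpr (lt_trans hx hu.2)⟩),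
        Set.inter_eq_self_of_subset_left
          (show Iic u ⊆ Iic y ∩ Iio t from fun x hx =>
            ⟨mem_Iic.mpr (le_trans hx hu.1), mem_Iio.mpr (lt_of_le_of_lt hx hu.2)⟩)]
    rw [hres, core n _, Measure.restrict_apply_univ]
  have h2 : ∀ u, ∫⁻ y, F (y, u) ∂Qt = (Iio t).indicator (sig Q n) u * Qt (Ici u) := by
    intro u
    have hind : ∀ y, F (y, u) = (Ici u).indicator (fun _ => (Iio t).indicator (sig Q n) u) y := by
      intro y
      by_cases h1 : u ≤ y <;> by_cases h2 : u < t <;>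
        simp [hF, Set.indicator_apply, h1, h2, Set.mem_Ici, Set.mem_Iio]
    simp_rw [hind]
    rw [lintegral_indicator_const measurableSet_Ici, mul_comm]
  calc ∫⁻ y, Q (Iic y ∩ Iio t) ^ (n + 1) ∂Qt
      = ∫⁻ y, ∫⁻ u, F (y, u) ∂Q ∂Qt := by simp_rw [← h1]
    _ = ∫⁻ u, ∫⁻ y, F (y, u) ∂Qt ∂Q :=
        lintegral_lintegral_swap hFmeas.aemeasurable
    _ = ∫⁻ u, (Iio t).indicator (sig Q n) u * Qt (Ici u) ∂Q := by simp_rw [h2]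
    _ = ∫⁻ u, (Iio t).indicator (fun u => sig Q n u * Qt (Ici u)) u ∂Q := by
        refine lintegral_congr fun u => ?_
        by_cases h : u < t <;> simp [Set.indicator_apply, h, Set.mem_Iio]
    _ = ∫⁻ u in Iio t, sig Q n u * Qt (Ici u) ∂Q :=
        lintegral_indicator measurableSet_Iio _

lemma star (Q Qt : Measure ℝ) [IsProbabilityMeasure Q] [IsProbabilityMeasure Qt] (t : ℝ) :
    (∫⁻ s in Iio t, (Q (Ioi s))⁻¹ ∂Qt) + Qt (Ici t) * (Q (Ici t))⁻¹
      = 1 + ∫⁻ u in Iio t, Qt (Ici u) * ((Q (Ioi u))⁻¹ * (Q (Ici u))⁻¹) ∂Q := by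
  set c : ℝ → ℝ≥0∞ := fun y => Q (Iic y ∩ Iio t) with hc
  have hcmeas : Measurable c := by
    have h : Monotone c := fun a b hab =>
      measure_mono (inter_subset_inter_left _ (Iic_subset_Iic.mpr hab))
    exact h.measurable
  -- LHS as a single integral
  have hL : (∫⁻ s in Iio t, (Q (Ioi s))⁻¹ ∂Qt) + Qt (Ici t) * (Q (Ici t))⁻¹
      = ∫⁻ y, ∑' m : ℕ, c y ^ m ∂Qt := by
    rw [← lintegral_add_compl (fun y => ∑' m : ℕ, c y ^ m) (measurableSet_Iio (a := t)) (μ := Qt),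
      compl_Iio]
    congr 1
    · refine (setLIntegral_congr_fun measurableSet_Iio (fun s hs => ?_)).symm
      have hcs : c s = Q (Iic s) := by
        rw [hc]
        exact congrArg Q (Set.inter_eq_self_of_subset_left
          (fun x hx => mem_Iio.mpr (lt_of_le_of_lt hx (mem_Iio.mp hs))))
      rw [hcs, ← prob_inv_compl Q measurableSet_Iic, compl_Iic]
    · have hconst : ∀ y ∈ Ici t, (∑' m : ℕ, c y ^ m) = (Q (Ici t))⁻¹ := by
        intro y hy
        have hcy : c y = Q (Iio t) := by
          rw [hc]
          exact congrArg Q (Set.inter_eq_self_of_subset_right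
            (fun x hx => mem_Iic.mpr (le_trans (le_of_lt hx) (mem_Ici.mp hy))))
        rw [hcy, ← prob_inv_compl Q measurableSet_Iio, compl_Iio]
      rw [setLIntegral_congr_fun measurableSet_Ici hconst, setLIntegral_const,
        mul_comm]
  -- RHS as a sum of integrals
  have hR : ∫⁻ u in Iio t, Qt (Ici u) * ((Q (Ioi u))⁻¹ * (Q (Ici u))⁻¹) ∂Q
      = ∑' n : ℕ, ∫⁻ u in Iio t, sig Q n u * Qt (Ici u) ∂Q := by
    have hpt : ∀ u, Qt (Ici u) * ((Q (Ioi u))⁻¹ * (Q (Ici u))⁻¹)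
        = ∑' n : ℕ, sig Q n u * Qt (Ici u) := by
      intro u
      have : (Q (Ioi u))⁻¹ * (Q (Ici u))⁻¹ = ∑' n : ℕ, sig Q n u := by
        rw [← compl_Iic, ← compl_Iio, prob_inv_compl Q measurableSet_Iic,
          prob_inv_compl Q measurableSet_Iio, mul_comm, tsum_pow_mul_tsum_pow]
        rfl
      rw [this, mul_comm, ← ENNReal.tsum_mul_right]
    simp_rw [hpt]
    exact lintegral_tsum fun n => ((meas_sig Q n).mul (meas_rho_Ici Qt)).aemeasurable
  rw [hL, hR]
  rw [lintegral_tsum fun m => ((hcmeas.pow_const m)).aemeasurable,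
    tsum_eq_zero_add' ENNReal.summable]
  congr 1
  · simp
  · exact tsum_congr fun n => pern Q Qt t n

/-- Appendix identity (eq. (prob_vs_B)):
`P(T̃ < t | T ≥ t) = B(t) + ∫_{[0,t)} (S̃(s−)/S(s)) ν̃(ds) − ∫_{[0,t)} (S̃(s−)/S(s)) ν(ds)`
for all `t ∈ 𝒥`. -/
theorem prob_vs_B
    {Ω : Type*} [m0 : MeasurableSpace Ω] (P : Measure Ω) [IsProbabilityMeasure P]
    (d : ℕ) (hd : 1 ≤ d)
    (T Tt : Ω → ℝ) (D Dt : Ω → ℕ)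
    (hT : Measurable T) (hTt : Measurable Tt)
    (hD : Measurable D) (hDt : Measurable Dt)
    (hpos : ∀ᵐ ω ∂P, 0 < Tt ω ∧ Tt ω ≤ T ω)
    (hDrange : ∀ ω, 1 ≤ D ω ∧ D ω ≤ d)
    (hDtrange : ∀ ω, Dt ω ≤ d)
    (hDD : ∀ᵐ ω ∂P, Dt ω = if Tt ω = T ω then D ω else 0)
    (μ μt : ℕ → Measure ℝ)
    (hμ : ∀ j, μ j = Measure.map T (P.restrict {ω | D ω = j}))
    (hμt : ∀ j, μt j = Measure.map Tt (P.restrict {ω | Dt ω = j}))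
    (𝒥 : Set ℝ) (h𝒥 : 𝒥 = {t | 0 ≤ t ∧ 0 < P {ω | t < Tt ω}})
    -- B(t) = ∫_{[0,t)} S(s)⁻¹ μ̃₀(ds)
    (B : ℝ → ℝ≥0∞)
    (hB : ∀ t, B t = ∫⁻ s in Ico 0 t, (P {ω | s < T ω})⁻¹ ∂(μt 0))
    -- the underlying and observed all-cause hazard measures ν and ν̃
    (ν νt : Measure ℝ)
    (hν : ν = ∑ j ∈ Finset.Icc 1 d, (μ j).withDensity (fun s => (P {ω | s ≤ T ω})⁻¹))
    (hνt : νt = ∑ j ∈ Finset.Icc 1 d, (μt j).withDensity (fun s => (P {ω | s ≤ Tt ω})⁻¹)) :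
    ∀ t ∈ 𝒥,
      (P {ω | Tt ω < t ∧ t ≤ T ω} / P {ω | t ≤ T ω}).toReal
        = (B t).toReal
          + (∫⁻ s in Ico 0 t, P {ω | s ≤ Tt ω} / P {ω | s < T ω} ∂νt).toReal
          - (∫⁻ s in Ico 0 t, P {ω | s ≤ Tt ω} / P {ω | s < T ω} ∂ν).toReal := by
  intro t ht
  rw [h𝒥, Set.mem_setOf_eq] at ht
  obtain ⟨ht0, htpos⟩ := ht
  set Q : Measure ℝ := Measure.map T P with hQdef
  set Qt : Measure ℝ := Measure.map Tt P with hQtdef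
  haveI hQprob : IsProbabilityMeasure Q := Measure.isProbabilityMeasure_map hT.aemeasurable
  haveI hQtprob : IsProbabilityMeasure Qt := Measure.isProbabilityMeasure_map hTt.aemeasurable
  -- translations between P-sets and the laws Q, Qt
  have hTIoi : ∀ s : ℝ, P {ω | s < T ω} = Q (Ioi s) := fun s =>
    (Measure.map_apply hT measurableSet_Ioi).symm
  have hTIci : ∀ s : ℝ, P {ω | s ≤ T ω} = Q (Ici s) := fun s =>
    (Measure.map_apply hT measurableSet_Ici).symm
  have hTtIci : ∀ s : ℝ, P {ω | s ≤ Tt ω} = Qt (Ici s) := fun s =>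
    (Measure.map_apply hTt measurableSet_Ici).symm
  have hTtIoi : ∀ s : ℝ, P {ω | s < Tt ω} = Qt (Ioi s) := fun s =>
    (Measure.map_apply hTt measurableSet_Ioi).symm
  have hTtT : ∀ᵐ ω ∂P, Tt ω ≤ T ω := hpos.mono fun ω h => h.2
  -- positivity
  have htpos' : 0 < Qt (Ioi t) := by rw [← hTtIoi]; exact htpos
  have hεinv : (Qt (Ioi t))⁻¹ ≠ ∞ := ENNReal.inv_ne_top.mpr (ne_of_gt htpos')
  have hQIoi_lb : ∀ s : ℝ, s < t → Qt (Ioi t) ≤ Q (Ioi s) := by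
    intro s hst
    rw [← hTtIoi, ← hTIoi]
    exact meas_mono_ae' (hTtT.mono fun ω h hω =>
      lt_of_lt_of_le (lt_trans hst hω) h)
  have hQIci_lb : ∀ s : ℝ, s ≤ t → Qt (Ioi t) ≤ Q (Ici s) := by
    intro s hst
    rw [← hTtIoi, ← hTIci]
    exact meas_mono_ae' (hTtT.mono fun ω h hω =>
      le_trans (le_of_lt (lt_of_le_of_lt hst hω)) h)
  have hQtQ_Ici : ∀ s : ℝ, Qt (Ici s) ≤ Q (Ici s) := by
    intro s
    rw [← hTtIci, ← hTIci]
    exact meas_mono_ae' (hTtT.mono fun ω h hs => le_trans hs h)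
  -- null sets below 0
  have hQt0 : Qt (Iio 0) = 0 := by
    have h1 : Qt (Iio 0) = P (Tt ⁻¹' Iio 0) := Measure.map_apply hTt measurableSet_Iio
    rw [h1]
    exact measure_eq_zero_iff_ae_notMem.mpr (hpos.mono fun ω h hmem =>
      absurd h.1 (not_lt.mpr (le_of_lt (mem_Iio.mp hmem))))
  have hQ0 : Q (Iio 0) = 0 := by
    have h1 : Q (Iio 0) = P (T ⁻¹' Iio 0) := Measure.map_apply hT measurableSet_Iio
    rw [h1]
    exact measure_eq_zero_iff_ae_notMem.mpr (hpos.mono fun ω h hmem =>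
      absurd (lt_of_lt_of_le h.1 h.2) (not_lt.mpr (le_of_lt (mem_Iio.mp hmem))))
  have hIcoIio : ∀ (m : Measure ℝ), m (Iio 0) = 0 →
      m.restrict (Ico 0 t) = m.restrict (Iio t) := by
    intro m hm
    refine Measure.restrict_congr_set (ae_eq_set.mpr ⟨?_, ?_⟩)
    · have h1 : Ico (0:ℝ) t \ Iio t = ∅ :=
        eq_empty_iff_forall_notMem.mpr fun x hx => hx.2 hx.1.2
      rw [h1, measure_empty]
    · refine measure_mono_null (fun x hx => ?_) hm
      exact mem_Iio.mpr (lt_of_not_ge fun h0 => hx.2 ⟨h0, mem_Iio.mp hx.1⟩)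
  -- decomposition of the laws
  have hQdecomp : Q = ∑ j ∈ Finset.Icc 1 d, μ j := by
    rw [hQdef, map_decomp P T hT D hD 1 d hDrange]
    exact Finset.sum_congr rfl fun j _ => (hμ j).symm
  have hQtdecomp : Qt = μt 0 + ∑ j ∈ Finset.Icc 1 d, μt j := by
    have hrange : ∀ ω, 0 ≤ Dt ω ∧ Dt ω ≤ d := fun ω => ⟨Nat.zero_le _, hDtrange ω⟩
    have h2 : Finset.Icc 0 d = insert 0 (Finset.Icc 1 d) := by
      ext x; simp [Finset.mem_Icc]; omega
    rw [hQtdef, map_decomp P Tt hTt Dt hDt 0 d hrange, h2, Finset.sum_insert (by simp)]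
    congr 1
    · exact (hμt 0).symm
    · exact Finset.sum_congr rfl fun j _ => (hμt j).symm
  -- Step 1 : B + the νt-integral equals ∫_{[0,t)} S⁻¹ dQt
  have key1 : B t + (∫⁻ s in Ico 0 t, Qt (Ici s) * (Q (Ioi s))⁻¹ ∂νt)
      = ∫⁻ s in Iio t, (Q (Ioi s))⁻¹ ∂Qt := by
    have hI1 : (∫⁻ s in Ico 0 t, Qt (Ici s) * (Q (Ioi s))⁻¹ ∂νt)
        = ∑ j ∈ Finset.Icc 1 d, ∫⁻ s in Ico 0 t, (Q (Ioi s))⁻¹ ∂(μt j) := by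
      rw [hνt]
      simp only [hTtIci]
      rw [restrict_finsum, lintegral_finset_sum_measure]
      refine Finset.sum_congr rfl fun j _ => ?_
      rw [restrict_withDensity measurableSet_Ico,
        lintegral_withDensity_eq_lintegral_mul _ (f := fun s => (Qt (Ici s))⁻¹) (meas_rho_Ici Qt).inv
          (g := fun s => Qt (Ici s) * (Q (Ioi s))⁻¹) ((meas_rho_Ici Qt).mul (meas_rho_Ioi Q).inv)]
      refine setLIntegral_congr_fun measurableSet_Ico (fun s hs => ?_)
      have h0 : Qt (Ici s) ≠ 0 := by
        refine ne_of_gt (lt_of_lt_of_le htpos' (measure_mono fun x hx => ?_))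
        exact mem_Ici.mpr (le_of_lt (lt_trans hs.2 (mem_Ioi.mp hx)))
      show (Qt (Ici s))⁻¹ * (Qt (Ici s) * (Q (Ioi s))⁻¹) = (Q (Ioi s))⁻¹
      rw [← mul_assoc, ENNReal.inv_mul_cancel h0 (measure_ne_top _ _), one_mul]
    have hBt : B t = ∫⁻ s in Ico 0 t, (Q (Ioi s))⁻¹ ∂(μt 0) := by
      rw [hB t]; simp only [hTIoi]
    have hcombine : ∫⁻ s in Ico 0 t, (Q (Ioi s))⁻¹ ∂Qt
        = (∫⁻ s in Ico 0 t, (Q (Ioi s))⁻¹ ∂(μt 0))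
          + ∑ j ∈ Finset.Icc 1 d, ∫⁻ s in Ico 0 t, (Q (Ioi s))⁻¹ ∂(μt j) := by
      rw [hQtdecomp, Measure.restrict_add, lintegral_add_measure, restrict_finsum,
        lintegral_finset_sum_measure]
    rw [hI1, hBt, ← hcombine, hIcoIio Qt hQt0]
  -- Step 2 : the ν-integral
  have key2 : (∫⁻ s in Ico 0 t, Qt (Ici s) * (Q (Ioi s))⁻¹ ∂ν)
      = ∫⁻ u in Iio t, Qt (Ici u) * ((Q (Ioi u))⁻¹ * (Q (Ici u))⁻¹) ∂Q := by
    have hsum : (∫⁻ s in Ico 0 t, Qt (Ici s) * (Q (Ioi s))⁻¹ ∂ν)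
        = ∑ j ∈ Finset.Icc 1 d,
            ∫⁻ s in Ico 0 t, Qt (Ici s) * ((Q (Ioi s))⁻¹ * (Q (Ici s))⁻¹) ∂(μ j) := by
      rw [hν]
      simp only [hTIci]
      rw [restrict_finsum, lintegral_finset_sum_measure]
      refine Finset.sum_congr rfl fun j _ => ?_
      rw [restrict_withDensity measurableSet_Ico,
        lintegral_withDensity_eq_lintegral_mul _ (f := fun s => (Q (Ici s))⁻¹) (meas_rho_Ici Q).inv
          (g := fun s => Qt (Ici s) * (Q (Ioi s))⁻¹) ((meas_rho_Ici Qt).mul (meas_rho_Ioi Q).inv)]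
      refine setLIntegral_congr_fun measurableSet_Ico (fun s _ => ?_)
      show (Q (Ici s))⁻¹ * (Qt (Ici s) * (Q (Ioi s))⁻¹)
          = Qt (Ici s) * ((Q (Ioi s))⁻¹ * (Q (Ici s))⁻¹)
      ring
    have hQr : ∑ j ∈ Finset.Icc 1 d, (μ j).restrict (Ico 0 t) = Q.restrict (Ico 0 t) := by
      rw [hQdecomp, restrict_finsum]
    rw [hsum, ← lintegral_finset_sum_measure, hQr, hIcoIio Q hQ0]
  -- the star identity
  have hstar := star Q Qt t
  -- finiteness
  set L := ∫⁻ s in Iio t, (Q (Ioi s))⁻¹ ∂Qt with hLdef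
  set R := ∫⁻ u in Iio t, Qt (Ici u) * ((Q (Ioi u))⁻¹ * (Q (Ici u))⁻¹) ∂Q with hRdef
  have hLfin : L ≠ ∞ := by
    refine bound_fin Qt measurableSet_Iio _ ((Qt (Ioi t))⁻¹) hεinv fun s hs => ?_
    exact ENNReal.inv_le_inv' (hQIoi_lb s (mem_Iio.mp hs))
  have hRfin : R ≠ ∞ := by
    refine bound_fin Q measurableSet_Iio _ (1 * ((Qt (Ioi t))⁻¹ * (Qt (Ioi t))⁻¹))
      (by exact ENNReal.mul_ne_top (by simp) (ENNReal.mul_ne_top hεinv hεinv)) fun u hu => ?_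
    refine mul_le_mul' prob_le_one (mul_le_mul' ?_ ?_)
    · exact ENNReal.inv_le_inv' (hQIoi_lb u (mem_Iio.mp hu))
    · exact ENNReal.inv_le_inv' (hQIci_lb u (le_of_lt (mem_Iio.mp hu)))
  have hY0 : Q (Ici t) ≠ 0 := ne_of_gt (lt_of_lt_of_le htpos' (hQIci_lb t le_rfl))
  have hAfin : Qt (Ici t) * (Q (Ici t))⁻¹ ≠ ∞ :=
    ENNReal.mul_ne_top (measure_ne_top _ _) (ENNReal.inv_ne_top.mpr hY0)
  have hBfin : B t ≠ ∞ := by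
    refine ne_top_of_le_ne_top hLfin ?_
    rw [← key1]; exact le_self_add
  have hI1fin : (∫⁻ s in Ico 0 t, Qt (Ici s) * (Q (Ioi s))⁻¹ ∂νt) ≠ ∞ := by
    refine ne_top_of_le_ne_top hLfin ?_
    rw [← key1]; exact le_add_self
  -- the event decomposition at time t
  have hXY : P {ω | Tt ω < t ∧ t ≤ T ω} + Qt (Ici t) = Q (Ici t) := by
    rw [← hTtIci, ← hTIci]
    have hdisj : Disjoint {ω | Tt ω < t ∧ t ≤ T ω} {ω | t ≤ Tt ω} := by
      rw [Set.disjoint_left]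
      intro ω h1 h2
      exact absurd h2 (not_le.mpr h1.1)
    have hmeas2 : MeasurableSet {ω | t ≤ Tt ω} := hTt measurableSet_Ici
    rw [← measure_union hdisj hmeas2]
    refine measure_congr ?_
    rw [Filter.eventuallyEq_set]
    refine hTtT.mono fun ω h => ?_
    constructor
    · rintro (h1 | h2)
      exacts [h1.2, le_trans h2 h]
    · intro h1
      rcases lt_or_ge (Tt ω) t with h2 | h2
      exacts [Or.inl ⟨h2, h1⟩, Or.inr h2]
  have hX : P {ω | Tt ω < t ∧ t ≤ T ω} = Q (Ici t) - Qt (Ici t) :=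
    ENNReal.eq_sub_of_add_eq (measure_ne_top _ _) hXY
  -- final arithmetic
  simp only [hTtIci, hTIoi, hTIci, div_eq_mul_inv]
  rw [key2]
  have hsum2 : (B t).toReal + (∫⁻ s in Ico 0 t, Qt (Ici s) * (Q (Ioi s))⁻¹ ∂νt).toReal
      = L.toReal := by
    rw [← ENNReal.toReal_add hBfin hI1fin, key1]
  rw [hsum2]
  have hLR : L.toReal + (Qt (Ici t) * (Q (Ici t))⁻¹).toReal = 1 + R.toReal := by
    rw [← ENNReal.toReal_add hLfin hAfin, hstar,
      ENNReal.toReal_add (by simp) hRfin, ENNReal.toReal_one]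
  rw [hX]
  rw [ENNReal.toReal_mul, ENNReal.toReal_sub_of_le (hQtQ_Ici t) (measure_ne_top _ _),
    ENNReal.toReal_inv]
  have hAtr : (Qt (Ici t) * (Q (Ici t))⁻¹).toReal
      = (Qt (Ici t)).toReal * ((Q (Ici t)).toReal)⁻¹ := by
    rw [ENNReal.toReal_mul, ENNReal.toReal_inv]
  have hy : (0:ℝ) < (Q (Ici t)).toReal :=
    ENNReal.toReal_pos hY0 (measure_ne_top _ _)
  rw [hAtr] at hLR
  rw [sub_mul, mul_inv_cancel₀ (ne_of_gt hy)]
  linarith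
end

section
/- Suppose for each j = 1,…,d a Borel measurable function a_j : ℝ → [0,1] is given such that μ̃_j(A) = ∫_A a_j(s) μ_j(ds) for every Borel set A (a_j is the conditional probability a_j(t) = P(T̃ = t, D̃ = j | T = t, D = j); such a density exists since μ̃_j ≤ μ_j). Then for all t ∈ 𝒥, B(t) = P(T̃ < t | T ≥ t) + S(t−)^{-1} Σ_{j=1}^d ∫_{[0,t)} (1 − a_j(s) − B(s)) μ_j(ds), where B(s) = ∫_{[0,s)} S(u)^{-1} μ̃₀(du). (The conditional probability is well defined since S(t−) = P(T ≥ t) ≥ S̃(t) > 0 for t ∈ 𝒥.) -/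
open MeasureTheory Set ENNReal

/-- Appendix identity (eq. (B_vs_prob)):
`B(t) = P(T̃ < t | T ≥ t) + S(t−)⁻¹ Σ_{j=1}^d ∫_{[0,t)} (1 − a_j(s) − B(s)) μ_j(ds)`
for all `t ∈ 𝒥`. -/
theorem B_vs_prob
    {Ω : Type*} [m0 : MeasurableSpace Ω] (P : Measure Ω) [IsProbabilityMeasure P]
    (d : ℕ) (hd : 1 ≤ d)
    (T Tt : Ω → ℝ) (D Dt : Ω → ℕ)
    (hT : Measurable T) (hTt : Measurable Tt)
    (hD : Measurable D) (hDt : Measurable Dt)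
    (hpos : ∀ᵐ ω ∂P, 0 < Tt ω ∧ Tt ω ≤ T ω)
    (hDrange : ∀ ω, 1 ≤ D ω ∧ D ω ≤ d)
    (hDtrange : ∀ ω, Dt ω ≤ d)
    (hDD : ∀ᵐ ω ∂P, Dt ω = if Tt ω = T ω then D ω else 0)
    (μ μt : ℕ → Measure ℝ)
    (hμ : ∀ j, μ j = Measure.map T (P.restrict {ω | D ω = j}))
    (hμt : ∀ j, μt j = Measure.map Tt (P.restrict {ω | Dt ω = j}))
    (𝒥 : Set ℝ) (h𝒥 : 𝒥 = {t | 0 ≤ t ∧ 0 < P {ω | t < Tt ω}})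
    -- the densities a_j of μ̃_j with respect to μ_j
    (a : ℕ → ℝ → ℝ)
    (ha_meas : ∀ j, Measurable (a j))
    (ha_range : ∀ j s, 0 ≤ a j s ∧ a j s ≤ 1)
    (ha : ∀ j, 1 ≤ j → j ≤ d → ∀ A : Set ℝ, MeasurableSet A →
      μt j A = ∫⁻ s in A, ENNReal.ofReal (a j s) ∂(μ j))
    -- B(s) = ∫_{[0,s)} S(u)⁻¹ μ̃₀(du)
    (B : ℝ → ℝ≥0∞)
    (hB : ∀ s, B s = ∫⁻ u in Ico 0 s, (P {ω | u < T ω})⁻¹ ∂(μt 0)) :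
    ∀ t ∈ 𝒥,
      (B t).toReal
        = (P {ω | Tt ω < t ∧ t ≤ T ω} / P {ω | t ≤ T ω}).toReal
          + ((P {ω | t ≤ T ω}).toReal)⁻¹
            * ∑ j ∈ Finset.Icc 1 d,
                ∫ s in Ico (0:ℝ) t, (1 - a j s - (B s).toReal) ∂(μ j) := by
  intro t ht
  rw [h𝒥, Set.mem_setOf_eq] at ht
  obtain ⟨ht0, htJ⟩ := ht
  haveI hmT_prob : IsProbabilityMeasure (Measure.map T P) :=
    Measure.isProbabilityMeasure_map hT.aemeasurable
  set mT : Measure ℝ := Measure.map T P with hmT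
  set ν : Measure ℝ := μt 0 with hν
  set St : ℝ≥0∞ := P {ω | t ≤ T ω} with hSt
  set f : ℝ → ℝ≥0∞ := fun u => (P {ω | u < T ω})⁻¹ with hf
  set c : ℝ≥0∞ := (P {ω | t < Tt ω})⁻¹ with hc
  -- measurable sets
  have hmDj : ∀ j : ℕ, MeasurableSet {ω | D ω = j} := fun j => hD (measurableSet_singleton j)
  have hmDtj : ∀ j : ℕ, MeasurableSet {ω | Dt ω = j} := fun j => hDt (measurableSet_singleton j)
  have hμA : ∀ j (A : Set ℝ), MeasurableSet A → μ j A = P (T ⁻¹' A ∩ {ω | D ω = j}) := by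
    intro j A hA
    rw [hμ, Measure.map_apply hT hA, Measure.restrict_apply (hT hA)]
  have hμtA : ∀ j (A : Set ℝ), MeasurableSet A → μt j A = P (Tt ⁻¹' A ∩ {ω | Dt ω = j}) := by
    intro j A hA
    rw [hμt, Measure.map_apply hTt hA, Measure.restrict_apply (hTt hA)]
  -- survival function facts
  have hSmono : Antitone (fun u : ℝ => P {ω | u < T ω}) := by
    intro u v huv
    exact measure_mono fun ω hω => lt_of_le_of_lt huv hω
  have hSmeas : Measurable fun u : ℝ => P {ω | u < T ω} := hSmono.measurable
  have hfmeas : Measurable f := hSmeas.inv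
  have hlow : ∀ u : ℝ, u < t → P {ω | t < Tt ω} ≤ P {ω | u < T ω} := by
    intro u hu
    refine measure_mono_ae ?_
    filter_upwards [hpos] with ω hω hmem
    exact lt_of_lt_of_le (hu.trans hmem) hω.2
  have hfpos : ∀ u : ℝ, u < t → 0 < P {ω | u < T ω} := fun u hu => lt_of_lt_of_le htJ (hlow u hu)
  have hfu_le : ∀ u : ℝ, u < t → f u ≤ c := by
    intro u hu
    exact ENNReal.inv_le_inv.mpr (hlow u hu)
  have hc_ne_top : c ≠ ⊤ := ENNReal.inv_ne_top.2 (ne_of_gt htJ)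
  have hc_lt_top : c < ⊤ := lt_top_iff_ne_top.2 hc_ne_top
  have hν_le_one : ∀ A : Set ℝ, ν A ≤ 1 := by
    intro A
    calc ν A ≤ ν univ := measure_mono (subset_univ A)
    _ = P (Tt ⁻¹' univ ∩ {ω | Dt ω = 0}) := hμtA 0 univ MeasurableSet.univ
    _ ≤ 1 := prob_le_one
  haveI : IsFiniteMeasure ν := ⟨lt_of_le_of_lt (hν_le_one univ) one_lt_top⟩
  have hBle : ∀ s : ℝ, s ≤ t → B s ≤ c := by
    intro s hs
    rw [hB]
    calc ∫⁻ u in Ico 0 s, f u ∂ν ≤ ∫⁻ _ in Ico 0 s, c ∂ν := by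
          refine setLIntegral_mono' measurableSet_Ico fun u hu => ?_
          exact hfu_le u (lt_of_lt_of_le hu.2 hs)
    _ = c * ν (Ico 0 s) := setLIntegral_const _ _
    _ ≤ c * 1 := mul_le_mul_right (hν_le_one _) c
    _ = c := mul_one c
  have hBlt : ∀ s : ℝ, s ≤ t → B s < ⊤ := fun s hs => lt_of_le_of_lt (hBle s hs) hc_lt_top
  have hBmono : Monotone B := by
    intro s s' hss
    rw [hB, hB]
    exact lintegral_mono_set (Ico_subset_Ico_right hss)
  have hBmeas : Measurable B := hBmono.measurable
  have hSt_pos : 0 < St := by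
    refine lt_of_lt_of_le htJ (measure_mono_ae ?_)
    filter_upwards [hpos] with ω hω hmem
    exact le_of_lt (lt_of_lt_of_le hmem hω.2)
  have hSt_ne_top : St ≠ ⊤ := measure_ne_top P _
  -- partition lemmas
  have hDdisj : (↑(Finset.Icc 1 d) : Set ℕ).PairwiseDisjoint fun j => {ω | D ω = j} := by
    intro i _ j _ hij
    refine Set.disjoint_left.2 fun ω h1 h2 => hij ?_
    rw [← h1, ← h2]
  have hDtdisj : (↑(Finset.Icc 1 d) : Set ℕ).PairwiseDisjoint fun j => {ω | Dt ω = j} := by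
    intro i _ j _ hij
    refine Set.disjoint_left.2 fun ω h1 h2 => hij ?_
    rw [← h1, ← h2]
  have hDcover : ∀ E : Set Ω, MeasurableSet E →
      ∑ j ∈ Finset.Icc 1 d, P (E ∩ {ω | D ω = j}) = P E := by
    intro E hE
    have hdisj : (↑(Finset.Icc 1 d) : Set ℕ).PairwiseDisjoint fun j => E ∩ {ω | D ω = j} := by
      intro i hi j hj hij
      exact (hDdisj hi hj hij).mono inter_subset_right inter_subset_right
    rw [← measure_biUnion_finset hdisj fun j _ => hE.inter (hmDj j)]
    congr 1
    ext ω
    simp only [Set.mem_iUnion, Set.mem_inter_iff, Set.mem_setOf_eq, Finset.mem_Icc]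
    constructor
    · rintro ⟨j, _, hωE, _⟩; exact hωE
    · intro hωE; exact ⟨D ω, ⟨(hDrange ω).1, (hDrange ω).2⟩, hωE, rfl⟩
  have hDtcover : ∀ E : Set Ω, MeasurableSet E →
      ∑ j ∈ Finset.Icc 1 d, P (E ∩ {ω | Dt ω = j}) = P (E ∩ {ω | 1 ≤ Dt ω}) := by
    intro E hE
    have hdisj : (↑(Finset.Icc 1 d) : Set ℕ).PairwiseDisjoint fun j => E ∩ {ω | Dt ω = j} := by
      intro i hi j hj hij
      exact (hDtdisj hi hj hij).mono inter_subset_right inter_subset_right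
    rw [← measure_biUnion_finset hdisj fun j _ => hE.inter (hmDtj j)]
    congr 1
    ext ω
    simp only [Set.mem_iUnion, Set.mem_inter_iff, Set.mem_setOf_eq, Finset.mem_Icc]
    constructor
    · rintro ⟨j, ⟨hj1, _⟩, hωE, hj⟩; exact ⟨hωE, hj ▸ hj1⟩
    · rintro ⟨hωE, h1⟩; exact ⟨Dt ω, ⟨h1, hDtrange ω⟩, hωE, rfl⟩
  have hlintsum : ∀ g : ℝ → ℝ≥0∞, Measurable g →
      ∑ j ∈ Finset.Icc 1 d, ∫⁻ s, g s ∂(μ j) = ∫⁻ s, g s ∂mT := by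
    intro g hg
    have h1 : ∀ j : ℕ, ∫⁻ s, g s ∂(μ j) = ∫⁻ ω in {ω | D ω = j}, g (T ω) ∂P := by
      intro j; rw [hμ, lintegral_map hg hT]
    simp_rw [h1]
    rw [hmT, lintegral_map hg hT,
      ← lintegral_biUnion_finset hDdisj (fun j _ => hmDj j)]
    congr 1
    have : (⋃ j ∈ Finset.Icc 1 d, {ω | D ω = j}) = univ := by
      ext ω
      simp only [Set.mem_iUnion, Set.mem_setOf_eq, Finset.mem_Icc, Set.mem_univ, iff_true]
      exact ⟨D ω, ⟨(hDrange ω).1, (hDrange ω).2⟩, rfl⟩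
    rw [this, Measure.restrict_univ]
  -- measure identities
  have hμIco : ∑ j ∈ Finset.Icc 1 d, μ j (Ico 0 t) = mT (Ico 0 t) := by
    have h1 : ∀ j : ℕ, μ j (Ico 0 t) = P (T ⁻¹' Ico 0 t ∩ {ω | D ω = j}) :=
      fun j => hμA j _ measurableSet_Ico
    simp_rw [h1]
    rw [hDcover _ (hT measurableSet_Ico), hmT, Measure.map_apply hT measurableSet_Ico]
  have hmTIco : mT (Ico 0 t) = P {ω | T ω < t} := by
    rw [hmT, Measure.map_apply hT measurableSet_Ico]
    refine measure_congr (Filter.eventuallyEq_set.2 ?_)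
    filter_upwards [hpos] with ω hω
    simp only [Set.mem_preimage, Set.mem_Ico, Set.mem_setOf_eq]
    exact ⟨fun h => h.2, fun h => ⟨le_of_lt (lt_of_lt_of_le hω.1 hω.2), h⟩⟩
  have hμtIco : ∑ j ∈ Finset.Icc 1 d, μt j (Ico 0 t) = P {ω | Tt ω = T ω ∧ T ω < t} := by
    have h1 : ∀ j : ℕ, μt j (Ico 0 t) = P (Tt ⁻¹' Ico 0 t ∩ {ω | Dt ω = j}) :=
      fun j => hμtA j _ measurableSet_Ico
    simp_rw [h1]
    rw [hDtcover _ (hTt measurableSet_Ico)]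
    refine measure_congr (Filter.eventuallyEq_set.2 ?_)
    filter_upwards [hpos, hDD] with ω hω hDω
    simp only [Set.mem_inter_iff, Set.mem_preimage, Set.mem_Ico, Set.mem_setOf_eq]
    constructor
    · rintro ⟨⟨_, hlt⟩, h1D⟩
      by_cases heq : Tt ω = T ω
      · exact ⟨heq, heq ▸ hlt⟩
      · rw [hDω, if_neg heq] at h1D; omega
    · rintro ⟨heq, hlt⟩
      refine ⟨⟨le_of_lt hω.1, heq ▸ hlt⟩, ?_⟩
      rw [hDω, if_pos heq]
      exact (hDrange ω).1
  have hνIco : ν (Ico 0 t) = P {ω | Tt ω < T ω ∧ Tt ω < t} := by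
    rw [hν, hμtA 0 _ measurableSet_Ico]
    refine measure_congr (Filter.eventuallyEq_set.2 ?_)
    filter_upwards [hpos, hDD] with ω hω hDω
    simp only [Set.mem_inter_iff, Set.mem_preimage, Set.mem_Ico, Set.mem_setOf_eq]
    constructor
    · rintro ⟨⟨_, hlt⟩, h0⟩
      by_cases heq : Tt ω = T ω
      · rw [hDω, if_pos heq] at h0
        have := (hDrange ω).1; omega
      · exact ⟨lt_of_le_of_ne hω.2 heq, hlt⟩
    · rintro ⟨hne, hlt⟩
      refine ⟨⟨le_of_lt hω.1, hlt⟩, ?_⟩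
      rw [hDω, if_neg (ne_of_lt hne)]
  have hsplit1 : P {ω | Tt ω < T ω ∧ Tt ω < t}
      = P {ω | Tt ω < T ω ∧ T ω < t} + P {ω | Tt ω < t ∧ t ≤ T ω} := by
    rw [← measure_union ?_ ?_]
    · congr 1
      ext ω
      simp only [Set.mem_union, Set.mem_setOf_eq]
      constructor
      · rintro ⟨h1, h2⟩
        rcases lt_or_ge (T ω) t with h | h
        · exact Or.inl ⟨h1, h⟩
        · exact Or.inr ⟨h2, h⟩
      · rintro (⟨h1, h2⟩ | ⟨h1, h2⟩)
        · exact ⟨h1, h1.trans h2⟩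
        · exact ⟨lt_of_lt_of_le h1 h2, h1⟩
    · refine Set.disjoint_left.2 fun ω h1 h2 => ?_
      exact absurd h2.2 (not_le.2 h1.2)
    · exact (measurableSet_lt hTt measurable_const).inter (measurableSet_le measurable_const hT)
  have hsplit2 : P {ω | T ω < t}
      = P {ω | Tt ω = T ω ∧ T ω < t} + P {ω | Tt ω < T ω ∧ T ω < t} := by
    have h1 : P {ω | T ω < t} = P ({ω | Tt ω = T ω ∧ T ω < t} ∪ {ω | Tt ω < T ω ∧ T ω < t}) := by
      refine measure_congr (Filter.eventuallyEq_set.2 ?_)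
      filter_upwards [hpos] with ω hω
      simp only [Set.mem_union, Set.mem_setOf_eq]
      constructor
      · intro h
        rcases eq_or_lt_of_le hω.2 with he | hl
        · exact Or.inl ⟨he, h⟩
        · exact Or.inr ⟨hl, h⟩
      · rintro (⟨_, h⟩ | ⟨_, h⟩) <;> exact h
    rw [h1, measure_union ?_ ?_]
    · refine Set.disjoint_left.2 fun ω h1 h2 => ?_
      exact absurd h2.1 (not_lt.2 (le_of_eq h1.1.symm))
    · exact (measurableSet_lt hTt hT).inter (measurableSet_lt hT measurable_const)
  -- the main ENNReal identity
  have hmain : B t * St + ∫⁻ s in Ico 0 t, B s ∂mT = ν (Ico 0 t) := by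
    set g : ℝ → ℝ → ℝ≥0∞ := fun s u => if 0 ≤ u ∧ u < s then f u else 0 with hg
    have hBg : ∀ s, B s = ∫⁻ u, g s u ∂ν := by
      intro s
      rw [hB, ← lintegral_indicator measurableSet_Ico]
      congr 1 with u
      simp only [hg, Set.indicator_apply, Set.mem_Ico, hf]
    have hg_meas : Measurable (Function.uncurry g) := by
      have hset : MeasurableSet {q : ℝ × ℝ | 0 ≤ q.2 ∧ q.2 < q.1} :=
        (measurableSet_le measurable_const measurable_snd).inter
          (measurableSet_lt measurable_snd measurable_fst)
      exact Measurable.ite hset (hfmeas.comp measurable_snd) measurable_const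
    have hswap : ∫⁻ s in Ico 0 t, ∫⁻ u, g s u ∂ν ∂mT
        = ∫⁻ u, ∫⁻ s in Ico 0 t, g s u ∂mT ∂ν :=
      lintegral_lintegral_swap hg_meas.aemeasurable
    have hinner : ∀ u ∈ Ico (0:ℝ) t, ∫⁻ s in Ico 0 t, g s u ∂mT = f u * mT (Ioo u t) := by
      intro u hu
      have h1 : ∀ s, g s u = (Ioi u).indicator (fun _ => f u) s := by
        intro s
        simp only [hg, Set.indicator_apply, Set.mem_Ioi]
        by_cases h : u < s
        · rw [if_pos ⟨hu.1, h⟩, if_pos h]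
        · rw [if_neg (fun hh => h hh.2), if_neg h]
      simp_rw [h1]
      rw [lintegral_indicator measurableSet_Ioi, Measure.restrict_restrict measurableSet_Ioi,
        setLIntegral_const]
      have hset : Ioi u ∩ Ico 0 t = Ioo u t := by
        ext x
        simp only [Set.mem_inter_iff, Set.mem_Ioi, Set.mem_Ico, Set.mem_Ioo]
        exact ⟨fun ⟨h1, _, h3⟩ => ⟨h1, h3⟩, fun ⟨h1, h2⟩ => ⟨h1, le_trans hu.1 (le_of_lt h1), h2⟩⟩
      rw [hset]
    have houter_zero : ∀ u : ℝ, u ∉ Ico (0:ℝ) t → ∫⁻ s in Ico 0 t, g s u ∂mT = 0 := by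
      intro u hu
      rw [setLIntegral_congr_fun_ae measurableSet_Ico (ae_of_all _ fun s hs => ?_), lintegral_zero]
      show g s u = 0
      simp only [hg]
      rw [if_neg]
      rintro ⟨h0, hus⟩
      exact hu ⟨h0, hus.trans hs.2⟩
    have hIcoOnly : ∫⁻ u, ∫⁻ s in Ico 0 t, g s u ∂mT ∂ν
        = ∫⁻ u in Ico 0 t, ∫⁻ s in Ico 0 t, g s u ∂mT ∂ν := by
      rw [← lintegral_indicator measurableSet_Ico]
      congr 1 with u
      by_cases hu : u ∈ Ico (0:ℝ) t
      · rw [Set.indicator_of_mem hu]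
      · rw [Set.indicator_of_notMem hu, houter_zero u hu]
    have hBtSt : B t * St = ∫⁻ u in Ico 0 t, f u * St ∂ν := by
      rw [hB, ← lintegral_mul_const St hfmeas]
    calc B t * St + ∫⁻ s in Ico 0 t, B s ∂mT
        = (∫⁻ u in Ico 0 t, f u * St ∂ν) + ∫⁻ u in Ico 0 t, f u * mT (Ioo u t) ∂ν := by
          rw [hBtSt]
          congr 1
          calc ∫⁻ s in Ico 0 t, B s ∂mT = ∫⁻ s in Ico 0 t, ∫⁻ u, g s u ∂ν ∂mT := by
                refine setLIntegral_congr_fun_ae measurableSet_Ico (ae_of_all _ fun s _ => hBg s)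
          _ = ∫⁻ u, ∫⁻ s in Ico 0 t, g s u ∂mT ∂ν := hswap
          _ = ∫⁻ u in Ico 0 t, ∫⁻ s in Ico 0 t, g s u ∂mT ∂ν := hIcoOnly
          _ = ∫⁻ u in Ico 0 t, f u * mT (Ioo u t) ∂ν :=
                setLIntegral_congr_fun_ae measurableSet_Ico (ae_of_all _ hinner)
      _ = ∫⁻ u in Ico 0 t, (f u * St + f u * mT (Ioo u t)) ∂ν := by
          rw [lintegral_add_left (hfmeas.mul_const St)]
      _ = ∫⁻ u in Ico 0 t, 1 ∂ν := by
          refine setLIntegral_congr_fun_ae measurableSet_Ico (ae_of_all _ fun u hu => ?_)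
          have hcup : P {ω | u < T ω} = mT (Ioo u t) + St := by
            rw [hmT, Measure.map_apply hT measurableSet_Ioo, hSt,
              ← measure_union ?_ (measurableSet_le measurable_const hT)]
            · congr 1
              ext ω
              simp only [Set.mem_union, Set.mem_preimage, Set.mem_Ioo, Set.mem_setOf_eq]
              constructor
              · intro h
                rcases lt_or_ge (T ω) t with h2 | h2
                · exact Or.inl ⟨h, h2⟩
                · exact Or.inr h2
              · rintro (⟨h1, _⟩ | h1)
                · exact h1
                · exact lt_of_lt_of_le hu.2 h1
            · refine Set.disjoint_left.2 fun ω h1 h2 => absurd h2 (not_le.2 h1.2)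
          rw [← mul_add, add_comm St (mT (Ioo u t)), ← hcup, hf]
          exact ENNReal.inv_mul_cancel (ne_of_gt (hfpos u hu.2)) (measure_ne_top P _)
      _ = ν (Ico 0 t) := setLIntegral_one _
  -- per-j real integral identity
  have hint_j : ∀ j ∈ Finset.Icc 1 d,
      ∫ s in Ico (0:ℝ) t, (1 - a j s - (B s).toReal) ∂(μ j)
        = (μ j (Ico 0 t)).toReal - (μt j (Ico 0 t)).toReal
          - (∫⁻ s in Ico 0 t, B s ∂(μ j)).toReal := by
    intro j hj
    obtain ⟨hj1, hj2⟩ := Finset.mem_Icc.1 hj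
    haveI hμfin : IsFiniteMeasure (μ j) := by
      refine ⟨?_⟩
      rw [hμ, Measure.map_apply hT MeasurableSet.univ]
      exact measure_lt_top _ _
    have hint1 : Integrable (fun _ : ℝ => (1:ℝ)) ((μ j).restrict (Ico 0 t)) :=
      integrable_const 1
    have hinta : Integrable (a j) ((μ j).restrict (Ico 0 t)) := by
      refine ⟨(ha_meas j).aestronglyMeasurable, ?_⟩
      refine HasFiniteIntegral.of_bounded (C := 1) (ae_of_all _ fun s => ?_)
      rw [Real.norm_eq_abs, abs_le]
      exact ⟨by linarith [(ha_range j s).1], (ha_range j s).2⟩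
    have hintB : Integrable (fun s => (B s).toReal) ((μ j).restrict (Ico 0 t)) := by
      refine ⟨(hBmeas.ennreal_toReal).aestronglyMeasurable, ?_⟩
      refine HasFiniteIntegral.of_bounded (C := c.toReal) ?_
      filter_upwards [ae_restrict_mem measurableSet_Ico] with s hs
      rw [Real.norm_eq_abs, abs_of_nonneg ENNReal.toReal_nonneg]
      exact ENNReal.toReal_mono hc_ne_top (hBle s (le_of_lt hs.2))
    have e1 : ∫ s in Ico (0:ℝ) t, (1 - a j s - (B s).toReal) ∂(μ j)
        = (∫ _ in Ico (0:ℝ) t, (1:ℝ) ∂(μ j)) - (∫ s in Ico (0:ℝ) t, a j s ∂(μ j))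
          - ∫ s in Ico (0:ℝ) t, (B s).toReal ∂(μ j) := by
      have h5 := integral_sub (hint1.sub hinta) hintB
      simp only [Pi.sub_apply] at h5
      rw [h5, integral_sub hint1 hinta]
    rw [e1]
    have e2 : ∫ _ in Ico (0:ℝ) t, (1:ℝ) ∂(μ j) = (μ j (Ico 0 t)).toReal := by
      simp [integral_const, Measure.restrict_apply_univ, measureReal_def]
    have e3 : ∫ s in Ico (0:ℝ) t, a j s ∂(μ j) = (μt j (Ico 0 t)).toReal := by
      rw [ha j hj1 hj2 _ measurableSet_Ico,
        integral_eq_lintegral_of_nonneg_ae (ae_of_all _ fun s => (ha_range j s).1)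
          (ha_meas j).aestronglyMeasurable]
    have e4 : ∫ s in Ico (0:ℝ) t, (B s).toReal ∂(μ j)
        = (∫⁻ s in Ico 0 t, B s ∂(μ j)).toReal := by
      refine integral_toReal hBmeas.aemeasurable ?_
      filter_upwards [ae_restrict_mem measurableSet_Ico] with s hs
      exact hBlt s (le_of_lt hs.2)
    rw [e2, e3, e4]
  -- sum of lintegrals over μ j is lintegral over mT
  have hBsum : ∑ j ∈ Finset.Icc 1 d, ∫⁻ s in Ico 0 t, B s ∂(μ j)
      = ∫⁻ s in Ico 0 t, B s ∂mT := by
    have h1 : ∀ κ : Measure ℝ, ∫⁻ s in Ico (0:ℝ) t, B s ∂κ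
        = ∫⁻ s, (Ico (0:ℝ) t).indicator B s ∂κ :=
      fun κ => (lintegral_indicator measurableSet_Ico B).symm
    simp_rw [h1]
    exact hlintsum _ (hBmeas.indicator measurableSet_Ico)
  -- finiteness facts and final assembly
  have hμ_ne_top : ∀ j ∈ Finset.Icc 1 d, μ j (Ico 0 t) ≠ ⊤ := fun j _ => by
    rw [hμA j _ measurableSet_Ico]; exact measure_ne_top _ _
  have hμt_ne_top : ∀ j ∈ Finset.Icc 1 d, μt j (Ico 0 t) ≠ ⊤ := fun j _ => by
    rw [hμtA j _ measurableSet_Ico]; exact measure_ne_top _ _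
  have hlint_ne_top : ∀ j ∈ Finset.Icc 1 d, (∫⁻ s in Ico 0 t, B s ∂(μ j)) ≠ ⊤ := by
    intro j hj
    have hle : ∫⁻ s in Ico 0 t, B s ∂(μ j) ≤ c * μ j (Ico 0 t) := by
      calc ∫⁻ s in Ico 0 t, B s ∂(μ j) ≤ ∫⁻ _ in Ico 0 t, c ∂(μ j) :=
            setLIntegral_mono' measurableSet_Ico fun s hs => hBle s (le_of_lt hs.2)
      _ = c * μ j (Ico 0 t) := setLIntegral_const _ _
    exact ne_top_of_le_ne_top (ENNReal.mul_ne_top hc_ne_top (hμ_ne_top j hj)) hle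
  have hI_ne_top : (∫⁻ s in Ico 0 t, B s ∂mT) ≠ ⊤ := by
    have hle : ∫⁻ s in Ico 0 t, B s ∂mT ≤ ν (Ico 0 t) := hmain ▸ le_add_self
    exact ne_top_of_le_ne_top (measure_ne_top ν _) hle
  have h1 : (B t).toReal * St.toReal + (∫⁻ s in Ico 0 t, B s ∂mT).toReal
      = (P {ω | Tt ω < T ω ∧ T ω < t}).toReal + (P {ω | Tt ω < t ∧ t ≤ T ω}).toReal := by
    have h2 := congrArg ENNReal.toReal hmain
    rw [ENNReal.toReal_add (ENNReal.mul_ne_top (hBlt t le_rfl).ne hSt_ne_top) hI_ne_top,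
      ENNReal.toReal_mul, hνIco, hsplit1,
      ENNReal.toReal_add (measure_ne_top _ _) (measure_ne_top _ _)] at h2
    exact h2
  have hXsum : ∑ j ∈ Finset.Icc 1 d, ∫ s in Ico (0:ℝ) t, (1 - a j s - (B s).toReal) ∂(μ j)
      = (P {ω | Tt ω < T ω ∧ T ω < t}).toReal - (∫⁻ s in Ico 0 t, B s ∂mT).toReal := by
    rw [Finset.sum_congr rfl hint_j, Finset.sum_sub_distrib, Finset.sum_sub_distrib,
      ← ENNReal.toReal_sum hμ_ne_top, ← ENNReal.toReal_sum hμt_ne_top,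
      ← ENNReal.toReal_sum hlint_ne_top,
      hμIco, hμtIco, hBsum, hmTIco, hsplit2,
      ENNReal.toReal_add (measure_ne_top _ _) (measure_ne_top _ _)]
    ring
  rw [hXsum, ENNReal.toReal_div]
  have hst_pos : 0 < St.toReal := ENNReal.toReal_pos (ne_of_gt hSt_pos) hSt_ne_top
  have h2 : (B t).toReal
      = ((P {ω | Tt ω < T ω ∧ T ω < t}).toReal + (P {ω | Tt ω < t ∧ t ≤ T ω}).toReal
          - (∫⁻ s in Ico 0 t, B s ∂mT).toReal) / St.toReal := by
    rw [eq_div_iff (ne_of_gt hst_pos)]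
    linarith
  rw [h2]
  field_simp
  ring
end

section
/- Fix t ∈ 𝒥 and j ∈ {1,…,d}. Suppose a Borel measurable function a_j : ℝ → [0,1] is given with μ̃_j(A) = ∫_A a_j(s) μ_j(ds) for every Borel set A, and a Borel measurable function g : ℝ → [0,1] is given with P(T ≤ t, D = j, T̃ ∈ A, D̃ = 0) = ∫_A g(s) μ̃₀(ds) for every Borel set A (g is the conditional probability g(s) = P(T ≤ t, D = j | T̃ = s, D̃ = 0)). Then ∫_{(0,t]} (F_j(t | s) − g(s)) μ̃₀(ds) = ∫_{(0,t]} (a_j(s) + B(s) − 1) μ_j(ds), where F_j(t | s) = μ_j((s,t]) / S(s) (well defined since S(s) ≥ S̃(t) > 0 for 0 < s ≤ t, t ∈ 𝒥) and B(s) = ∫_{[0,s)} S(u)^{-1} μ̃₀(du). -/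
open MeasureTheory Set ENNReal

/-- Appendix identity (eq. (cond_fixed_vs_constant_sum)):
`∫_{(0,t]} (F_j(t|s) − g(s)) μ̃₀(ds) = ∫_{(0,t]} (a_j(s) + B(s) − 1) μ_j(ds)`
for fixed `t ∈ 𝒥` and `j ∈ {1,…,d}`. -/
theorem cond_fixed_vs_constant_sum
    {Ω : Type*} [m0 : MeasurableSpace Ω] (P : Measure Ω) [IsProbabilityMeasure P]
    (d : ℕ) (hd : 1 ≤ d)
    (T Tt : Ω → ℝ) (D Dt : Ω → ℕ)
    (hT : Measurable T) (hTt : Measurable Tt)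
    (hD : Measurable D) (hDt : Measurable Dt)
    (hpos : ∀ᵐ ω ∂P, 0 < Tt ω ∧ Tt ω ≤ T ω)
    (hDrange : ∀ ω, 1 ≤ D ω ∧ D ω ≤ d)
    (hDtrange : ∀ ω, Dt ω ≤ d)
    (hDD : ∀ᵐ ω ∂P, Dt ω = if Tt ω = T ω then D ω else 0)
    (μ μt : ℕ → Measure ℝ)
    (hμ : ∀ j, μ j = Measure.map T (P.restrict {ω | D ω = j}))
    (hμt : ∀ j, μt j = Measure.map Tt (P.restrict {ω | Dt ω = j}))
    (𝒥 : Set ℝ) (h𝒥 : 𝒥 = {t | 0 ≤ t ∧ 0 < P {ω | t < Tt ω}})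
    -- fixed t ∈ 𝒥 and j ∈ {1,…,d}
    (t : ℝ) (ht : t ∈ 𝒥) (j : ℕ) (hj1 : 1 ≤ j) (hjd : j ≤ d)
    -- the density a_j of μ̃_j with respect to μ_j
    (a : ℝ → ℝ) (ha_meas : Measurable a) (ha_range : ∀ s, 0 ≤ a s ∧ a s ≤ 1)
    (ha : ∀ A : Set ℝ, MeasurableSet A →
      μt j A = ∫⁻ s in A, ENNReal.ofReal (a s) ∂(μ j))
    -- g(s) = P(T ≤ t, D = j | T̃ = s, D̃ = 0), the density w.r.t. μ̃₀
    (g : ℝ → ℝ) (hg_meas : Measurable g) (hg_range : ∀ s, 0 ≤ g s ∧ g s ≤ 1)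
    (hg : ∀ A : Set ℝ, MeasurableSet A →
      P {ω | T ω ≤ t ∧ D ω = j ∧ Tt ω ∈ A ∧ Dt ω = 0}
        = ∫⁻ s in A, ENNReal.ofReal (g s) ∂(μt 0))
    -- B(s) = ∫_{[0,s)} S(u)⁻¹ μ̃₀(du)
    (B : ℝ → ℝ≥0∞)
    (hB : ∀ s, B s = ∫⁻ u in Ico 0 s, (P {ω | u < T ω})⁻¹ ∂(μt 0)) :
    ∫ s in Ioc (0:ℝ) t, ((μ j (Ioc s t)).toReal / (P {ω | s < T ω}).toReal - g s) ∂(μt 0)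
      = ∫ s in Ioc (0:ℝ) t, (a s + (B s).toReal - 1) ∂(μ j) := by
  classical
  have hI : MeasurableSet (Ioc (0:ℝ) t) := measurableSet_Ioc
  rw [h𝒥] at ht
  obtain ⟨ht0, hc⟩ := ht
  -- finiteness instances
  haveI hκfin : IsFiniteMeasure (μ j) := by
    rw [hμ j]; exact Measure.isFiniteMeasure_map _ _
  haveI hνfin : IsFiniteMeasure (μt 0) := by
    rw [hμt 0]; exact Measure.isFiniteMeasure_map _ _
  haveI hνjfin : IsFiniteMeasure (μt j) := by
    rw [hμt j]; exact Measure.isFiniteMeasure_map _ _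
  -- the survival function S s = P {s < T} ; basic facts
  have hSanti : Antitone (fun s : ℝ => P {ω | s < T ω}) := fun s s' h =>
    measure_mono fun ω hω => lt_of_le_of_lt h hω
  have hSmeas : Measurable (fun s : ℝ => P {ω | s < T ω}) := hSanti.measurable
  have hcS : ∀ s : ℝ, s ≤ t → P {ω | t < Tt ω} ≤ P {ω | s < T ω} := by
    intro s hs
    refine measure_mono_ae ?_
    filter_upwards [hpos] with ω hω
    intro h
    exact lt_of_le_of_lt hs (lt_of_lt_of_le h hω.2)
  have hSne0 : ∀ s : ℝ, s ≤ t → P {ω | s < T ω} ≠ 0 :=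
    fun s hs => (lt_of_lt_of_le hc (hcS s hs)).ne'
  -- μ̃₀ has no mass at 0
  have hTt0 : P {ω | Tt ω = 0} = 0 := by
    have h := hpos
    rw [ae_iff] at h
    refine measure_mono_null ?_ h
    intro ω hω hcon
    rw [Set.mem_setOf_eq] at hω
    exact absurd hcon.1 (by rw [hω]; exact lt_irrefl 0)
  have hν0 : μt 0 {(0:ℝ)} = 0 := by
    rw [hμt 0, Measure.map_apply hTt (measurableSet_singleton 0),
      Measure.restrict_apply (hTt (measurableSet_singleton 0))]
    exact measure_mono_null (fun ω hω => hω.1) hTt0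
  ------------------------------------------------------------------
  -- Step A : P A1 + μ̃_j (0,t] = μ_j (0,t]
  ------------------------------------------------------------------
  have hj0 : j ≠ 0 := Nat.one_le_iff_ne_zero.mp hj1
  set A1 : Set Ω := {ω | T ω ≤ t ∧ D ω = j ∧ Tt ω ∈ Ioc (0:ℝ) t ∧ Dt ω = 0} with hA1def
  set E1 : Set Ω := T ⁻¹' Ioc (0:ℝ) t ∩ {ω | D ω = j} with hE1def
  set E2 : Set Ω := Tt ⁻¹' Ioc (0:ℝ) t ∩ {ω | Dt ω = j} with hE2def
  have hA1meas : MeasurableSet A1 :=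
    (hT measurableSet_Iic).inter ((hD (measurableSet_singleton j)).inter
      ((hTt hI).inter (hDt (measurableSet_singleton 0))))
  have hE2meas : MeasurableSet E2 := (hTt hI).inter (hDt (measurableSet_singleton j))
  have hdisj : Disjoint A1 E2 := by
    rw [Set.disjoint_left]
    intro ω h1 h2
    have h10 : Dt ω = 0 := h1.2.2.2
    have h2j : Dt ω = j := h2.2
    exact hj0 (h2j.symm.trans h10)
  have hunion : (A1 ∪ E2 : Set Ω) =ᵐ[P] E1 := by
    rw [Filter.eventuallyEq_set]
    filter_upwards [hpos, hDD] with ω hω hDDω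
    constructor
    · rintro (⟨h1, h2, h3, _⟩ | ⟨h3, h5⟩)
      · exact ⟨⟨lt_of_lt_of_le hω.1 hω.2, h1⟩, h2⟩
      · -- Dt ω = j ≠ 0 forces Tt ω = T ω and D ω = j
        by_cases hTeq : Tt ω = T ω
        · rw [if_pos hTeq] at hDDω
          have hDj : D ω = j := hDDω.symm.trans h5
          refine ⟨?_, hDj⟩
          show T ω ∈ Ioc (0:ℝ) t
          rw [← hTeq]
          exact h3
        · rw [if_neg hTeq] at hDDω
          exact absurd (hDDω.symm.trans h5).symm hj0
    · rintro ⟨hTI, hDj⟩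
      by_cases hTeq : Tt ω = T ω
      · right
        rw [if_pos hTeq] at hDDω
        exact ⟨by rw [Set.mem_preimage, hTeq]; exact hTI, hDDω.trans hDj⟩
      · left
        rw [if_neg hTeq] at hDDω
        exact ⟨hTI.2, hDj, ⟨hω.1, le_trans hω.2 hTI.2⟩, hDDω⟩
  have hκIoc : ∀ s : ℝ, μ j (Ioc s t) = P (T ⁻¹' Ioc s t ∩ {ω | D ω = j}) := by
    intro s
    rw [hμ j, Measure.map_apply hT measurableSet_Ioc,
      Measure.restrict_apply (hT measurableSet_Ioc)]
  have hνtI : μt j (Ioc (0:ℝ) t) = P E2 := by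
    rw [hμt j, Measure.map_apply hTt hI, Measure.restrict_apply (hTt hI)]
  have hsum : P A1 + μt j (Ioc (0:ℝ) t) = μ j (Ioc (0:ℝ) t) := by
    rw [hνtI, hκIoc 0, ← measure_union hdisj hE2meas]
    exact measure_congr hunion
  ------------------------------------------------------------------
  -- Step B : Fubini
  ------------------------------------------------------------------
  set f : ℝ → ℝ → ℝ≥0∞ := fun s u =>
    Set.indicator {p : ℝ × ℝ | 0 < p.1 ∧ p.1 < p.2 ∧ p.2 ≤ t}
      (fun p => (P {ω | p.1 < T ω})⁻¹) (s, u) with hfdef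
  have hAset : MeasurableSet {p : ℝ × ℝ | 0 < p.1 ∧ p.1 < p.2 ∧ p.2 ≤ t} :=
    (measurableSet_lt measurable_const measurable_fst).inter
      ((measurableSet_lt measurable_fst measurable_snd).inter
        (measurableSet_le measurable_snd measurable_const))
  have hfmeas : Measurable (Function.uncurry f) :=
    Measurable.indicator ((hSmeas.comp measurable_fst).inv) hAset
  have hinner1 : ∀ s, (∫⁻ u, f s u ∂(μ j))
      = (Ioc (0:ℝ) t).indicator
          (fun s => (P {ω | s < T ω})⁻¹ * μ j (Ioc s t)) s := by
    intro s
    by_cases hs : s ∈ Ioc (0:ℝ) t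
    · rw [Set.indicator_of_mem hs]
      have hfe : ∀ u, f s u
          = (Ioc s t).indicator (fun _ => (P {ω | s < T ω})⁻¹) u := by
        intro u
        simp only [hfdef]
        by_cases hu : u ∈ Ioc s t
        · have hmem : ((s,u) : ℝ × ℝ) ∈ {p : ℝ × ℝ | 0 < p.1 ∧ p.1 < p.2 ∧ p.2 ≤ t} :=
            ⟨hs.1, hu.1, hu.2⟩
          rw [Set.indicator_of_mem hu, Set.indicator_of_mem hmem]
        · rw [Set.indicator_of_notMem hu, Set.indicator_of_notMem]
          rintro ⟨_, h2, h3⟩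
          exact hu ⟨h2, h3⟩
      simp only [hfe]
      rw [lintegral_indicator_const measurableSet_Ioc]
    · rw [Set.indicator_of_notMem hs]
      have hfe : ∀ u, f s u = 0 := by
        intro u
        simp only [hfdef]
        apply Set.indicator_of_notMem
        rintro ⟨h1, h2, h3⟩
        exact hs ⟨h1, le_trans (le_of_lt h2) h3⟩
      simp only [hfe, lintegral_const, zero_mul]
  have hinner2 : ∀ u, (∫⁻ s, f s u ∂(μt 0)) = (Ioc (0:ℝ) t).indicator B u := by
    intro u
    by_cases hu : u ∈ Ioc (0:ℝ) t
    · rw [Set.indicator_of_mem hu]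
      have hfe : ∀ s, f s u
          = (Ioo (0:ℝ) u).indicator (fun s => (P {ω | s < T ω})⁻¹) s := by
        intro s
        simp only [hfdef]
        by_cases hsu : s ∈ Ioo (0:ℝ) u
        · have hmem : ((s,u) : ℝ × ℝ) ∈ {p : ℝ × ℝ | 0 < p.1 ∧ p.1 < p.2 ∧ p.2 ≤ t} :=
            ⟨hsu.1, hsu.2, hu.2⟩
          rw [Set.indicator_of_mem hsu, Set.indicator_of_mem hmem]
        · rw [Set.indicator_of_notMem hsu, Set.indicator_of_notMem]
          rintro ⟨h1, h2, _⟩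
          exact hsu ⟨h1, h2⟩
      simp only [hfe]
      rw [lintegral_indicator measurableSet_Ioo, hB u]
      refine setLIntegral_congr ?_
      rw [MeasureTheory.ae_eq_set]
      constructor
      · have : (Ioo (0:ℝ) u) \ Ico 0 u = ∅ :=
          Set.diff_eq_empty.mpr Set.Ioo_subset_Ico_self
        rw [this]; exact measure_empty
      · refine measure_mono_null (fun x hx => ?_) hν0
        have hx0 : x = 0 :=
          le_antisymm (not_lt.mp fun h => hx.2 ⟨h, hx.1.2⟩) hx.1.1
        exact hx0
    · rw [Set.indicator_of_notMem hu]
      have hfe : ∀ s, f s u = 0 := by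
        intro s
        simp only [hfdef]
        apply Set.indicator_of_notMem
        rintro ⟨h1, h2, h3⟩
        exact hu ⟨lt_trans h1 h2, h3⟩
      simp only [hfe, lintegral_const, zero_mul]
  have hFB : ∫⁻ s in Ioc (0:ℝ) t, (P {ω | s < T ω})⁻¹ * μ j (Ioc s t) ∂(μt 0)
      = ∫⁻ u in Ioc (0:ℝ) t, B u ∂(μ j) := by
    rw [← lintegral_indicator hI
        (fun s => (P {ω | s < T ω})⁻¹ * μ j (Ioc s t)),
      ← lintegral_indicator hI B]
    calc ∫⁻ s, (Ioc (0:ℝ) t).indicator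
            (fun s => (P {ω | s < T ω})⁻¹ * μ j (Ioc s t)) s ∂(μt 0)
        = ∫⁻ s, ∫⁻ u, f s u ∂(μ j) ∂(μt 0) := by
          refine lintegral_congr fun s => ?_
          rw [hinner1 s]
      _ = ∫⁻ u, ∫⁻ s, f s u ∂(μt 0) ∂(μ j) :=
          lintegral_lintegral_swap hfmeas.aemeasurable
      _ = ∫⁻ u, (Ioc (0:ℝ) t).indicator B u ∂(μ j) := by
          refine lintegral_congr fun u => ?_
          rw [hinner2 u]
  ------------------------------------------------------------------
  -- bounds and measurability for the real-valued integrands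
  ------------------------------------------------------------------
  have hκanti : Antitone (fun s : ℝ => μ j (Ioc s t)) := fun s s' h =>
    measure_mono (Set.Ioc_subset_Ioc_left h)
  have hκmeas : Measurable (fun s : ℝ => μ j (Ioc s t)) := hκanti.measurable
  have hFmeas : Measurable
      (fun s : ℝ => (μ j (Ioc s t)).toReal / (P {ω | s < T ω}).toReal) :=
    hκmeas.ennreal_toReal.div hSmeas.ennreal_toReal
  have hctR : 0 < (P {ω | t < Tt ω}).toReal :=
    ENNReal.toReal_pos hc.ne' (measure_ne_top _ _)
  have hκle1 : ∀ s : ℝ, μ j (Ioc s t) ≤ 1 := by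
    intro s
    rw [hκIoc s]
    exact prob_le_one
  have hFbound : ∀ s ∈ Ioc (0:ℝ) t,
      (μ j (Ioc s t)).toReal / (P {ω | s < T ω}).toReal
        ≤ 1 / (P {ω | t < Tt ω}).toReal := by
    intro s hs
    refine div_le_div₀ zero_le_one ?_ hctR ?_
    · calc (μ j (Ioc s t)).toReal ≤ (1 : ℝ≥0∞).toReal :=
          ENNReal.toReal_mono ENNReal.one_ne_top (hκle1 s)
        _ = 1 := ENNReal.toReal_one
    · exact ENNReal.toReal_mono (measure_ne_top _ _) (hcS s hs.2)
  have hFnonneg : ∀ s : ℝ,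
      0 ≤ (μ j (Ioc s t)).toReal / (P {ω | s < T ω}).toReal :=
    fun s => div_nonneg ENNReal.toReal_nonneg ENNReal.toReal_nonneg
  -- bound on B
  have hBbound : ∀ u ∈ Ioc (0:ℝ) t, B u ≤ (P {ω | t < Tt ω})⁻¹ := by
    intro u hu
    rw [hB u]
    calc ∫⁻ x in Ico (0:ℝ) u, (P {ω | x < T ω})⁻¹ ∂(μt 0)
        ≤ ∫⁻ _ in Ico (0:ℝ) u, (P {ω | t < Tt ω})⁻¹ ∂(μt 0) := by
          refine setLIntegral_mono measurable_const fun x hx => ?_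
          exact ENNReal.inv_le_inv.mpr (hcS x (le_trans (le_of_lt hx.2) hu.2))
      _ = (P {ω | t < Tt ω})⁻¹ * μt 0 (Ico 0 u) := by
          rw [setLIntegral_const]
      _ ≤ (P {ω | t < Tt ω})⁻¹ * 1 := by
          refine mul_le_mul_right ?_ _
          rw [hμt 0, Measure.map_apply hTt measurableSet_Ico,
            Measure.restrict_apply (hTt measurableSet_Ico)]
          exact prob_le_one
      _ = (P {ω | t < Tt ω})⁻¹ := mul_one _
  have hcinv_ne_top : (P {ω | t < Tt ω})⁻¹ ≠ ∞ :=
    (ENNReal.inv_lt_top.mpr hc).ne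
  have hBmono : Monotone B := by
    intro s s' h
    rw [hB s, hB s']
    exact lintegral_mono_set (Set.Ico_subset_Ico_right h)
  have hBmeas : Measurable B := hBmono.measurable
  ------------------------------------------------------------------
  -- integrability of the pieces
  ------------------------------------------------------------------
  have hg_int : Integrable g ((μt 0).restrict (Ioc (0:ℝ) t)) := by
    refine Integrable.mono' (integrable_const 1) hg_meas.aestronglyMeasurable ?_
    refine ae_of_all _ fun s => ?_
    rw [Real.norm_eq_abs, abs_of_nonneg (hg_range s).1]
    exact (hg_range s).2
  have ha_int : Integrable a ((μ j).restrict (Ioc (0:ℝ) t)) := by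
    refine Integrable.mono' (integrable_const 1) ha_meas.aestronglyMeasurable ?_
    refine ae_of_all _ fun s => ?_
    rw [Real.norm_eq_abs, abs_of_nonneg (ha_range s).1]
    exact (ha_range s).2
  have hF_int : Integrable
      (fun s : ℝ => (μ j (Ioc s t)).toReal / (P {ω | s < T ω}).toReal)
      ((μt 0).restrict (Ioc (0:ℝ) t)) := by
    refine Integrable.mono' (integrable_const (1 / (P {ω | t < Tt ω}).toReal))
      hFmeas.aestronglyMeasurable ?_
    rw [ae_restrict_iff' hI]
    refine ae_of_all _ fun s hs => ?_
    rw [Real.norm_eq_abs, abs_of_nonneg (hFnonneg s)]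
    exact hFbound s hs
  have hBtR_int : Integrable (fun u => (B u).toReal)
      ((μ j).restrict (Ioc (0:ℝ) t)) := by
    refine Integrable.mono'
      (integrable_const ((P {ω | t < Tt ω})⁻¹).toReal)
      hBmeas.ennreal_toReal.aestronglyMeasurable ?_
    rw [ae_restrict_iff' hI]
    refine ae_of_all _ fun u hu => ?_
    rw [Real.norm_eq_abs, abs_of_nonneg ENNReal.toReal_nonneg]
    exact ENNReal.toReal_mono hcinv_ne_top (hBbound u hu)
  ------------------------------------------------------------------
  -- real-integral identities
  ------------------------------------------------------------------
  -- ∫ g over (0,t] = (P A1).toReal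
  have hgint_eq : ∫ s in Ioc (0:ℝ) t, g s ∂(μt 0) = (P A1).toReal := by
    rw [integral_eq_lintegral_of_nonneg_ae
        (ae_of_all _ fun s => (hg_range s).1) hg_meas.aestronglyMeasurable,
      ← hg _ hI]
  -- ∫ a over (0,t] = (μt j (0,t]).toReal
  have haint_eq : ∫ s in Ioc (0:ℝ) t, a s ∂(μ j) = (μt j (Ioc (0:ℝ) t)).toReal := by
    rw [integral_eq_lintegral_of_nonneg_ae
        (ae_of_all _ fun s => (ha_range s).1) ha_meas.aestronglyMeasurable,
      ← ha _ hI]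
  -- ∫ F over (0,t] = ∫ B.toReal over (0,t]
  have hFint_eq : ∫ s in Ioc (0:ℝ) t,
      (μ j (Ioc s t)).toReal / (P {ω | s < T ω}).toReal ∂(μt 0)
      = ∫ u in Ioc (0:ℝ) t, (B u).toReal ∂(μ j) := by
    rw [integral_eq_lintegral_of_nonneg_ae
        (ae_of_all _ fun s => hFnonneg s) hFmeas.aestronglyMeasurable]
    have h1 : ∫⁻ s in Ioc (0:ℝ) t,
        ENNReal.ofReal ((μ j (Ioc s t)).toReal / (P {ω | s < T ω}).toReal) ∂(μt 0)
        = ∫⁻ s in Ioc (0:ℝ) t, (P {ω | s < T ω})⁻¹ * μ j (Ioc s t) ∂(μt 0) := by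
      refine setLIntegral_congr_fun hI (fun s hs => ?_)
      have hy0 : P {ω | s < T ω} ≠ 0 := hSne0 s hs.2
      have hx : μ j (Ioc s t) ≠ ∞ := measure_ne_top _ _
      rw [← ENNReal.toReal_div, ENNReal.ofReal_toReal (ENNReal.div_lt_top hx hy0).ne,
        ENNReal.div_eq_inv_mul]
    rw [h1, hFB]
    rw [integral_toReal hBmeas.aemeasurable]
    rw [ae_restrict_iff' hI]
    refine ae_of_all _ fun u hu => ?_
    exact lt_of_le_of_lt (hBbound u hu) (ENNReal.inv_lt_top.mpr hc)
  ------------------------------------------------------------------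
  -- put everything together
  ------------------------------------------------------------------
  have hsplitL : ∫ s in Ioc (0:ℝ) t,
      ((μ j (Ioc s t)).toReal / (P {ω | s < T ω}).toReal - g s) ∂(μt 0)
      = (∫ s in Ioc (0:ℝ) t,
          (μ j (Ioc s t)).toReal / (P {ω | s < T ω}).toReal ∂(μt 0))
        - ∫ s in Ioc (0:ℝ) t, g s ∂(μt 0) :=
    integral_sub hF_int hg_int
  have hsplitR : ∫ s in Ioc (0:ℝ) t, (a s + (B s).toReal - 1) ∂(μ j)
      = (∫ s in Ioc (0:ℝ) t, a s ∂(μ j))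
        + (∫ s in Ioc (0:ℝ) t, (B s).toReal ∂(μ j))
        - ∫ s in Ioc (0:ℝ) t, (1:ℝ) ∂(μ j) := by
    have h1 := integral_sub (ha_int.add hBtR_int) (integrable_const (1:ℝ))
    have h2 := integral_add ha_int hBtR_int
    simp only [Pi.add_apply] at h1 h2
    rw [h1, h2]
  have hone : ∫ s in Ioc (0:ℝ) t, (1:ℝ) ∂(μ j) = (μ j (Ioc (0:ℝ) t)).toReal := by
    rw [setIntegral_const, smul_eq_mul, mul_one]
    rfl
  -- toReal of the Step A identity
  have hsum' : (P A1).toReal + (μt j (Ioc (0:ℝ) t)).toReal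
      = (μ j (Ioc (0:ℝ) t)).toReal := by
    rw [← ENNReal.toReal_add (measure_ne_top _ _) (measure_ne_top _ _), hsum]
  rw [hsplitL, hsplitR, hgint_eq, haint_eq, hFint_eq, hone]
  linarith
end
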